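/- arXiv:1010.5171 — 12 statements merged into one kernel-verified Lean document; each statement's English description precedes it below -/
import Mathlib

section
/- Let R₁, R₂ be nonnegative real random variables and let V be a real random variable that is independent of R₁ and independent of R₂, defined on the same probability space, such that V < K almost surely for some constant K > 0. If R₁ ≼apl R₂, then R₁V ≼apl R₂V. -/
open MeasureTheory ProbabilityTheory Filter

/-- Asymptotic portfolio loss order for real random variables:
`limsup_{t→∞} P(U > t)/P(V ≥ t) ≤ 1` (convention 0/0 = 1), i.e.
for every `c > 1` there is `T` such that `P(U > t) ≤ c · P(V ≥ t)` for all `t ≥ T`. -/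
def AplReal {Ω : Type*} [MeasurableSpace Ω] (μ : Measure Ω) (U V : Ω → ℝ) : Prop :=
  ∀ c : ℝ, 1 < c → ∃ T : ℝ, ∀ t : ℝ, T ≤ t →
    μ {ω | t < U ω} ≤ ENNReal.ofReal c * μ {ω | t ≤ V ω}

theorem apl_mul_of_bounded
    {Ω : Type*} [MeasurableSpace Ω] (μ : Measure Ω) [IsProbabilityMeasure μ]
    (R₁ R₂ V : Ω → ℝ)
    (hR₁m : Measurable R₁) (hR₂m : Measurable R₂) (hVm : Measurable V)
    (hR₁0 : ∀ ω, 0 ≤ R₁ ω) (hR₂0 : ∀ ω, 0 ≤ R₂ ω)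
    (hInd₁ : IndepFun R₁ V μ) (hInd₂ : IndepFun R₂ V μ)
    (K : ℝ) (hK : 0 < K) (hVK : ∀ᵐ ω ∂μ, V ω < K)
    (hapl : AplReal μ R₁ R₂) :
    AplReal μ (fun ω => R₁ ω * V ω) (fun ω => R₂ ω * V ω) := by
  intro c hc
  obtain ⟨T₀, hT₀⟩ := hapl c hc
  set M := max T₀ 1 with hMdef
  have hM1 : (1:ℝ) ≤ M := le_max_right _ _
  have hT₀M : T₀ ≤ M := le_max_left _ _
  refine ⟨M * K, fun t ht => ?_⟩
  have htpos : 0 < t := lt_of_lt_of_le (by nlinarith) ht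
  -- laws
  haveI : IsProbabilityMeasure (μ.map R₁) := Measure.isProbabilityMeasure_map hR₁m.aemeasurable
  haveI : IsProbabilityMeasure (μ.map R₂) := Measure.isProbabilityMeasure_map hR₂m.aemeasurable
  haveI : IsProbabilityMeasure (μ.map V) := Measure.isProbabilityMeasure_map hVm.aemeasurable
  have h1 : μ.map (fun ω => (V ω, R₁ ω)) = (μ.map V).prod (μ.map R₁) :=
    (ProbabilityTheory.indepFun_iff_map_prod_eq_prod_map_map hVm.aemeasurable
      hR₁m.aemeasurable).mp hInd₁.symm
  have h2 : μ.map (fun ω => (V ω, R₂ ω)) = (μ.map V).prod (μ.map R₂) :=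
    (ProbabilityTheory.indepFun_iff_map_prod_eq_prod_map_map hVm.aemeasurable
      hR₂m.aemeasurable).mp hInd₂.symm
  have hs1 : MeasurableSet {p : ℝ × ℝ | t < p.2 * p.1} :=
    measurableSet_lt measurable_const (measurable_snd.mul measurable_fst)
  have hs2 : MeasurableSet {p : ℝ × ℝ | t ≤ p.2 * p.1} :=
    measurableSet_le measurable_const (measurable_snd.mul measurable_fst)
  have e1 : μ {ω | t < R₁ ω * V ω}
      = ∫⁻ v, (μ.map R₁) {x | t < x * v} ∂(μ.map V) := by
    have : μ {ω | t < R₁ ω * V ω}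
        = (μ.map (fun ω => (V ω, R₁ ω))) {p : ℝ × ℝ | t < p.2 * p.1} := by
      rw [Measure.map_apply (hVm.prodMk hR₁m) hs1]
      rfl
    rw [this, h1, Measure.prod_apply hs1]
    rfl
  have e2 : μ {ω | t ≤ R₂ ω * V ω}
      = ∫⁻ v, (μ.map R₂) {x | t ≤ x * v} ∂(μ.map V) := by
    have : μ {ω | t ≤ R₂ ω * V ω}
        = (μ.map (fun ω => (V ω, R₂ ω))) {p : ℝ × ℝ | t ≤ p.2 * p.1} := by
      rw [Measure.map_apply (hVm.prodMk hR₂m) hs2]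
      rfl
    rw [this, h2, Measure.prod_apply hs2]
    rfl
  have hae : ∀ᵐ v ∂(μ.map V), v < K := by
    rw [ae_map_iff hVm.aemeasurable measurableSet_Iio]
    exact hVK
  have hneg : (μ.map R₁) {x : ℝ | x < 0} = 0 := by
    show (μ.map R₁) (Set.Iio 0) = 0
    rw [Measure.map_apply hR₁m measurableSet_Iio]
    have : (R₁ ⁻¹' Set.Iio 0) = ∅ := by
      ext ω; simp [not_lt.2 (hR₁0 ω)]
    simp [this]
  have key : ∀ᵐ v ∂(μ.map V),
      (μ.map R₁) {x | t < x * v} ≤ ENNReal.ofReal c * (μ.map R₂) {x | t ≤ x * v} := by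
    filter_upwards [hae] with v hv
    by_cases hv0 : 0 < v
    · have hset1 : {x : ℝ | t < x * v} = Set.Ioi (t / v) := by
        ext x; simp [Set.mem_Ioi, div_lt_iff₀ hv0]
      have hset2 : {x : ℝ | t ≤ x * v} = Set.Ici (t / v) := by
        ext x; simp [Set.mem_Ici, div_le_iff₀ hv0]
      have hTle : T₀ ≤ t / v := by
        rw [le_div_iff₀ hv0]
        nlinarith
      calc (μ.map R₁) {x | t < x * v}
          = μ {ω | t / v < R₁ ω} := by
            rw [hset1, Measure.map_apply hR₁m measurableSet_Ioi]; rfl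
        _ ≤ ENNReal.ofReal c * μ {ω | t / v ≤ R₂ ω} := hT₀ _ hTle
        _ = ENNReal.ofReal c * (μ.map R₂) {x | t ≤ x * v} := by
            rw [hset2, Measure.map_apply hR₂m measurableSet_Ici]; rfl
    · have hsub : {x : ℝ | t < x * v} ⊆ {x : ℝ | x < 0} := by
        intro x hx
        by_contra hx0
        simp only [Set.mem_setOf_eq, not_lt] at hx0
        have : x * v ≤ 0 := mul_nonpos_of_nonneg_of_nonpos hx0 (not_lt.1 hv0)
        exact absurd hx (not_lt.2 (this.trans htpos.le))
      rw [measure_mono_null hsub hneg]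
      exact zero_le
  calc μ {ω | t < R₁ ω * V ω}
      = ∫⁻ v, (μ.map R₁) {x | t < x * v} ∂(μ.map V) := e1
    _ ≤ ∫⁻ v, ENNReal.ofReal c * (μ.map R₂) {x | t ≤ x * v} ∂(μ.map V) :=
        lintegral_mono_ae key
    _ = ENNReal.ofReal c * ∫⁻ v, (μ.map R₂) {x | t ≤ x * v} ∂(μ.map V) :=
        lintegral_const_mul' _ _ ENNReal.ofReal_ne_top
    _ = ENNReal.ofReal c * μ {ω | t ≤ R₂ ω * V ω} := by rw [e2]
end

section
/- Let R₁, R₂ be nonnegative integrable real random variables with R₁ ≼st R₂, and let V be an integrable real random variable independent of R₁ and independent of R₂ with E[V] ≥ 0. Then R₁V ≼icx R₂V, i.e., E[f(R₁V)] ≤ E[f(R₂V)] for every nondecreasing convex function f : ℝ → ℝ such that both f(R₁V) and f(R₂V) are integrable. -/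
open MeasureTheory ProbabilityTheory Filter

/-- A monotone convex function on `ℝ` has a nonnegative affine minorant touching at `0`. -/
lemma aff_minorant {f : ℝ → ℝ} (hmono : Monotone f) (hconv : ConvexOn ℝ Set.univ f) :
    ∃ s : ℝ, 0 ≤ s ∧ ∀ x, f 0 + s * x ≤ f x := by
  set T : Set ℝ := (fun x => (f 0 - f x) / (0 - x)) '' Set.Iio 0 with hT
  have hmem : ∀ x : ℝ, x < 0 → (f 0 - f x) / (0 - x) ∈ T := by
    intro x hx; exact ⟨x, hx, rfl⟩
  have hne : T.Nonempty := ⟨_, hmem (-1) (by norm_num)⟩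
  have hbdd : BddAbove T := by
    refine ⟨(f 1 - f 0) / (1 - 0), ?_⟩
    rintro y ⟨x, hx, rfl⟩
    exact hconv.slope_mono_adjacent (Set.mem_univ x) (Set.mem_univ 1) hx one_pos
  refine ⟨sSup T, ?_, ?_⟩
  · have h1 : (f 0 - f (-1)) / (0 - (-1)) ≤ sSup T := le_csSup hbdd (hmem (-1) (by norm_num))
    have h2 : (0:ℝ) ≤ (f 0 - f (-1)) / (0 - (-1)) := by
      have := hmono (show (-1:ℝ) ≤ 0 by norm_num)
      norm_num; linarith
    linarith
  · intro x
    rcases lt_trichotomy x 0 with hx | hx | hx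
    · have h1 : (f 0 - f x) / (0 - x) ≤ sSup T := le_csSup hbdd (hmem x hx)
      rw [div_le_iff₀ (by linarith : (0:ℝ) < 0 - x)] at h1
      nlinarith
    · simp [hx]
    · have h1 : sSup T ≤ (f x - f 0) / (x - 0) := by
        refine csSup_le hne ?_
        rintro y ⟨z, hz, rfl⟩
        exact hconv.slope_mono_adjacent (Set.mem_univ z) (Set.mem_univ x) hz hx
      rw [le_div_iff₀ (by linarith : (0:ℝ) < x - 0)] at h1
      nlinarith

lemma step_mono {ν : Measure ℝ} [IsProbabilityMeasure ν]
    {f : ℝ → ℝ} (hmono : Monotone f) (hconv : ConvexOn ℝ Set.univ f)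
    (hid : Integrable (fun v : ℝ => v) ν) (hEV : 0 ≤ ∫ v, v ∂ν)
    {r₁ r₂ : ℝ} (h0 : 0 ≤ r₁) (h12 : r₁ ≤ r₂)
    (hint2 : Integrable (fun v => f (r₂ * v)) ν) :
    Integrable (fun v => f (r₁ * v)) ν ∧ ∫ v, f (r₁ * v) ∂ν ≤ ∫ v, f (r₂ * v) ∂ν := by
  obtain ⟨s, hs0, hs⟩ := aff_minorant hmono hconv
  have hfm : Measurable f := hmono.measurable
  have hlowint : ∀ r : ℝ, Integrable (fun v => f 0 + s * r * v) ν := fun r =>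
    (integrable_const _).add (hid.const_mul (s * r))
  have hlow_le : ∀ (r : ℝ) (v : ℝ), f 0 + s * r * v ≤ f (r * v) := by
    intro r v
    have := hs (r * v)
    nlinarith [mul_assoc s r v]
  have hlow_int_eq : ∀ r : ℝ, ∫ v, (f 0 + s * r * v) ∂ν = f 0 + s * r * ∫ v, v ∂ν := by
    intro r
    rw [integral_add (integrable_const _) (hid.const_mul (s * r)), integral_const,
      integral_const_mul]
    simp
  have hr20 : 0 ≤ r₂ := h0.trans h12
  have hf0le : f 0 ≤ ∫ v, f (r₂ * v) ∂ν := by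
    have h1 : ∫ v, (f 0 + s * r₂ * v) ∂ν ≤ ∫ v, f (r₂ * v) ∂ν :=
      integral_mono (hlowint r₂) hint2 (hlow_le r₂)
    rw [hlow_int_eq r₂] at h1
    nlinarith [mul_nonneg (mul_nonneg hs0 hr20) hEV]
  by_cases hr2 : r₂ = 0
  · have hr1 : r₁ = 0 := le_antisymm (hr2 ▸ h12) h0
    subst hr1; subst hr2
    exact ⟨hint2, le_refl _⟩
  · have hr2' : 0 < r₂ := lt_of_le_of_ne hr20 (Ne.symm hr2)
    set l := r₁ / r₂ with hl
    have hl0 : 0 ≤ l := div_nonneg h0 hr2'.le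
    have hl1 : l ≤ 1 := (div_le_one hr2').mpr h12
    have hcomb : ∀ v, f (r₁ * v) ≤ l * f (r₂ * v) + (1 - l) * f 0 := by
      intro v
      have h := hconv.2 (Set.mem_univ (r₂ * v)) (Set.mem_univ (0:ℝ)) hl0
        (by linarith : (0:ℝ) ≤ 1 - l) (by ring)
      have hx : l • (r₂ * v) + (1 - l) • (0:ℝ) = r₁ * v := by
        have hlr : l * r₂ = r₁ := by rw [hl]; exact div_mul_cancel₀ r₁ hr2'.ne'
        simp only [smul_eq_mul]; linear_combination v * hlr
      rw [hx] at h
      simpa [smul_eq_mul] using h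
    have hupint : Integrable (fun v => l * f (r₂ * v) + (1 - l) * f 0) ν :=
      (hint2.const_mul l).add (integrable_const _)
    have hmeas : AEStronglyMeasurable (fun v => f (r₁ * v)) ν :=
      (hfm.comp (measurable_id.const_mul r₁)).aestronglyMeasurable
    have hint1 : Integrable (fun v => f (r₁ * v)) ν :=
      integrable_of_le_of_le hmeas (ae_of_all _ (hlow_le r₁)) (ae_of_all _ hcomb)
        (hlowint r₁) hupint
    refine ⟨hint1, ?_⟩
    have h1 : ∫ v, f (r₁ * v) ∂ν ≤ ∫ v, (l * f (r₂ * v) + (1 - l) * f 0) ∂ν :=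
      integral_mono hint1 hupint hcomb
    have h2 : ∫ v, (l * f (r₂ * v) + (1 - l) * f 0) ∂ν
        = l * ∫ v, f (r₂ * v) ∂ν + (1 - l) * f 0 := by
      rw [integral_add (hint2.const_mul l) (integrable_const _), integral_const,
        integral_const_mul]
      simp
    nlinarith [mul_le_mul_of_nonneg_left hf0le (by linarith : (0:ℝ) ≤ 1 - l)]

lemma st_transfer {ρ₁ ρ₂ : Measure ℝ} [IsProbabilityMeasure ρ₁] [IsProbabilityMeasure ρ₂]
    (hst : ∀ t : ℝ, ρ₁ (Set.Ioi t) ≤ ρ₂ (Set.Ioi t))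
    {g : ℝ → ℝ} (hg : Measurable g) {S : Set ℝ} (hSsub : S ⊆ Set.Ici 0)
    (hS1 : ∀ᵐ x ∂ρ₁, x ∈ S) (hS2 : ∀ᵐ x ∂ρ₂, x ∈ S)
    (hmono : ∀ x ∈ S, ∀ y ∈ S, x ≤ y → g x ≤ g y)
    (hint1 : Integrable g ρ₁) (hint2 : Integrable g ρ₂) :
    ∫ x, g x ∂ρ₁ ≤ ∫ x, g x ∂ρ₂ := by
  have hN1 : ρ₁ Sᶜ = 0 := ae_iff.mp hS1
  have hN2 : ρ₂ Sᶜ = 0 := ae_iff.mp hS2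
  -- Ici version of the stochastic order
  have hIci : ∀ c : ℝ, ρ₁ (Set.Ici c) ≤ ρ₂ (Set.Ici c) := by
    intro c
    have hiInt : (⋂ n : ℕ, Set.Ioi (c - 1 / (n + 1))) = Set.Ici c := by
      ext x
      simp only [Set.mem_iInter, Set.mem_Ioi, Set.mem_Ici]
      constructor
      · intro h
        by_contra hxc
        push_neg at hxc
        obtain ⟨n, hn⟩ := exists_nat_one_div_lt (by linarith : (0:ℝ) < c - x)
        have := h n
        linarith
      · intro h n
        have : (0:ℝ) < 1 / (n + 1) := by positivity
        linarith
    have hanti : Antitone fun n : ℕ => Set.Ioi (c - 1 / (n + 1)) := by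
      intro n m hnm
      apply Set.Ioi_subset_Ioi
      have h1 : (0:ℝ) < (n:ℝ) + 1 := by positivity
      have h2 : (n:ℝ) + 1 ≤ (m:ℝ) + 1 := by exact_mod_cast by omega
      have := one_div_le_one_div_of_le h1 h2
      linarith
    have tends : ∀ (ρ : Measure ℝ) [IsProbabilityMeasure ρ],
        Tendsto (fun n : ℕ => ρ (Set.Ioi (c - 1 / (n + 1)))) atTop (nhds (ρ (Set.Ici c))) := by
      intro ρ _
      have := tendsto_measure_iInter_atTop (μ := ρ)
        (s := fun n : ℕ => Set.Ioi (c - 1 / (n + 1)))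
        (fun n => (measurableSet_Ioi).nullMeasurableSet) hanti
        ⟨0, measure_ne_top _ _⟩
      rwa [hiInt] at this
    exact le_of_tendsto_of_tendsto' (tends ρ₁) (tends ρ₂) fun n => hst _
  -- key comparison for up-sets relative to S
  have key : ∀ P : ℝ → Prop, (∀ x ∈ S, ∀ y ∈ S, x ≤ y → P x → P y) →
      ρ₁ {x | x ∈ S ∧ P x} ≤ ρ₂ {x | x ∈ S ∧ P x} := by
    intro P hup
    set B : Set ℝ := {x | x ∈ S ∧ P x} with hB
    rcases Set.eq_empty_or_nonempty B with hBe | hBne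
    · simp [hBe]
    have hbdd : BddBelow B := ⟨0, fun x hx => hSsub hx.1⟩
    set c := sInf B with hc
    by_cases hcB : c ∈ B
    · -- B = S ∩ Ici c
      have hBsub : B ⊆ Set.Ici c := fun x hx => csInf_le hbdd hx
      have hBsup : S ∩ Set.Ici c ⊆ B := by
        rintro x ⟨hxS, hxc⟩
        exact ⟨hxS, hup c hcB.1 x hxS hxc hcB.2⟩
      calc ρ₁ B ≤ ρ₁ (Set.Ici c) := measure_mono hBsub
        _ ≤ ρ₂ (Set.Ici c) := hIci c
        _ ≤ ρ₂ (Sᶜ ∪ B) := by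
            apply measure_mono
            intro x hx
            by_cases hxS : x ∈ S
            · exact Or.inr (hBsup ⟨hxS, hx⟩)
            · exact Or.inl hxS
        _ ≤ ρ₂ Sᶜ + ρ₂ B := measure_union_le _ _
        _ = ρ₂ B := by rw [hN2, zero_add]
    · -- B = S ∩ Ioi c
      have hBsub : B ⊆ Set.Ioi c := by
        intro x hx
        rcases lt_or_eq_of_le (csInf_le hbdd hx) with h | h
        · exact h
        · exact absurd (show c ∈ B by rw [hc, h]; exact hx) hcB
      have hBsup : S ∩ Set.Ioi c ⊆ B := by
        rintro x ⟨hxS, hxc⟩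
        obtain ⟨b, hbB, hbx⟩ := exists_lt_of_csInf_lt hBne hxc
        exact ⟨hxS, hup b hbB.1 x hxS hbx.le hbB.2⟩
      calc ρ₁ B ≤ ρ₁ (Set.Ioi c) := measure_mono hBsub
        _ ≤ ρ₂ (Set.Ioi c) := hst c
        _ ≤ ρ₂ (Sᶜ ∪ B) := by
            apply measure_mono
            intro x hx
            by_cases hxS : x ∈ S
            · exact Or.inr (hBsup ⟨hxS, hx⟩)
            · exact Or.inl hxS
        _ ≤ ρ₂ Sᶜ + ρ₂ B := measure_union_le _ _
        _ = ρ₂ B := by rw [hN2, zero_add]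
  -- comparison of upper level sets
  have hpos : ∀ t : ℝ, ρ₁ {x | t < g x} ≤ ρ₂ {x | t < g x} := by
    intro t
    have h1 : ρ₁ {x | t < g x} ≤ ρ₁ {x | x ∈ S ∧ t < g x} := by
      calc ρ₁ {x | t < g x} ≤ ρ₁ (Sᶜ ∪ {x | x ∈ S ∧ t < g x}) := by
            apply measure_mono
            intro x hx
            by_cases hxS : x ∈ S
            · exact Or.inr ⟨hxS, hx⟩
            · exact Or.inl hxS
        _ ≤ ρ₁ Sᶜ + ρ₁ {x | x ∈ S ∧ t < g x} := measure_union_le _ _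
        _ = ρ₁ {x | x ∈ S ∧ t < g x} := by rw [hN1, zero_add]
    have h2 := key (fun x => t < g x) fun x hx y hy hxy hP =>
      lt_of_lt_of_le hP (hmono x hx y hy hxy)
    have h3 : ρ₂ {x | x ∈ S ∧ t < g x} ≤ ρ₂ {x | t < g x} :=
      measure_mono fun x hx => hx.2
    exact (h1.trans h2).trans h3
  -- comparison of lower level sets (reversed)
  have hneg : ∀ t : ℝ, ρ₂ {x | g x < t} ≤ ρ₁ {x | g x < t} := by
    intro t
    have hup : ρ₁ {x | t ≤ g x} ≤ ρ₂ {x | t ≤ g x} := by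
      have h1 : ρ₁ {x | t ≤ g x} ≤ ρ₁ {x | x ∈ S ∧ t ≤ g x} := by
        calc ρ₁ {x | t ≤ g x} ≤ ρ₁ (Sᶜ ∪ {x | x ∈ S ∧ t ≤ g x}) := by
              apply measure_mono
              intro x hx
              by_cases hxS : x ∈ S
              · exact Or.inr ⟨hxS, hx⟩
              · exact Or.inl hxS
          _ ≤ ρ₁ Sᶜ + ρ₁ {x | x ∈ S ∧ t ≤ g x} := measure_union_le _ _
          _ = ρ₁ {x | x ∈ S ∧ t ≤ g x} := by rw [hN1, zero_add]
      have h2 := key (fun x => t ≤ g x) fun x hx y hy hxy hP =>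
        le_trans hP (hmono x hx y hy hxy)
      have h3 : ρ₂ {x | x ∈ S ∧ t ≤ g x} ≤ ρ₂ {x | t ≤ g x} :=
        measure_mono fun x hx => hx.2
      exact (h1.trans h2).trans h3
    have hms : MeasurableSet {x : ℝ | t ≤ g x} := measurableSet_le measurable_const hg
    have hcompl : {x : ℝ | g x < t} = {x : ℝ | t ≤ g x}ᶜ := by ext x; simp [not_le]
    have hc1 : ρ₁ {x | g x < t} = 1 - ρ₁ {x | t ≤ g x} := by
      rw [hcompl, measure_compl hms (measure_ne_top _ _), measure_univ]
    have hc2 : ρ₂ {x | g x < t} = 1 - ρ₂ {x | t ≤ g x} := by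
      rw [hcompl, measure_compl hms (measure_ne_top _ _), measure_univ]
    rw [hc1, hc2]
    exact tsub_le_tsub_left hup 1
  -- layer cake representations
  have hofReal : ∀ x : ℝ, ENNReal.ofReal x = ENNReal.ofReal (max x 0) := by
    intro x
    rcases le_total x 0 with h | h
    · simp [ENNReal.ofReal_of_nonpos h, max_eq_right h]
    · simp [max_eq_left h]
  have layerpos : ∀ (ρ : Measure ℝ) [IsProbabilityMeasure ρ],
      ∫⁻ x, ENNReal.ofReal (g x) ∂ρ = ∫⁻ t in Set.Ioi (0:ℝ), ρ {x | t < g x} := by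
    intro ρ _
    have h := lintegral_eq_lintegral_meas_lt ρ (f := fun x => max (g x) 0)
      (ae_of_all _ fun x => le_max_right _ _) ((hg.max measurable_const).aemeasurable)
    calc ∫⁻ x, ENNReal.ofReal (g x) ∂ρ = ∫⁻ x, ENNReal.ofReal (max (g x) 0) ∂ρ :=
          lintegral_congr fun x => by rw [← hofReal]
      _ = ∫⁻ t in Set.Ioi (0:ℝ), ρ {x | t < max (g x) 0} := h
      _ = ∫⁻ t in Set.Ioi (0:ℝ), ρ {x | t < g x} := by
          refine setLIntegral_congr_fun_ae measurableSet_Ioi (ae_of_all _ fun t ht => ?_)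
          congr 1
          ext x
          simp only [Set.mem_setOf_eq, lt_max_iff]
          exact ⟨fun hh => hh.resolve_right (lt_asymm ht), Or.inl⟩
  have layerneg : ∀ (ρ : Measure ℝ) [IsProbabilityMeasure ρ],
      ∫⁻ x, ENNReal.ofReal (-g x) ∂ρ = ∫⁻ t in Set.Ioi (0:ℝ), ρ {x | g x < -t} := by
    intro ρ _
    have h := lintegral_eq_lintegral_meas_lt ρ (f := fun x => max (-g x) 0)
      (ae_of_all _ fun x => le_max_right _ _) ((hg.neg.max measurable_const).aemeasurable)
    calc ∫⁻ x, ENNReal.ofReal (-g x) ∂ρ = ∫⁻ x, ENNReal.ofReal (max (-g x) 0) ∂ρ :=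
          lintegral_congr fun x => by rw [← hofReal]
      _ = ∫⁻ t in Set.Ioi (0:ℝ), ρ {x | t < max (-g x) 0} := h
      _ = ∫⁻ t in Set.Ioi (0:ℝ), ρ {x | g x < -t} := by
          refine setLIntegral_congr_fun_ae measurableSet_Ioi (ae_of_all _ fun t ht => ?_)
          congr 1
          ext x
          simp only [Set.mem_setOf_eq, lt_max_iff]
          constructor
          · rintro (hh | hh)
            · linarith
            · exact absurd hh (lt_asymm ht)
          · intro hh
            exact Or.inl (by linarith)
  have hA : ∫⁻ x, ENNReal.ofReal (g x) ∂ρ₁ ≤ ∫⁻ x, ENNReal.ofReal (g x) ∂ρ₂ := by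
    rw [layerpos ρ₁, layerpos ρ₂]
    exact lintegral_mono fun t => hpos t
  have hB : ∫⁻ x, ENNReal.ofReal (-g x) ∂ρ₂ ≤ ∫⁻ x, ENNReal.ofReal (-g x) ∂ρ₁ := by
    rw [layerneg ρ₁, layerneg ρ₂]
    exact lintegral_mono fun t => hneg (-t)
  have hfin : ∀ (ρ : Measure ℝ), Integrable g ρ →
      ∫⁻ x, ENNReal.ofReal (g x) ∂ρ ≠ ⊤ ∧ ∫⁻ x, ENNReal.ofReal (-g x) ∂ρ ≠ ⊤ := by
    intro ρ hint
    have hb : ∫⁻ x, (‖g x‖₊ : ENNReal) ∂ρ ≠ ⊤ := hint.2.ne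
    constructor
    · refine ne_top_of_le_ne_top hb (lintegral_mono fun x => ?_)
      rw [← enorm_eq_nnnorm, ← ofReal_norm]
      exact ENNReal.ofReal_le_ofReal (le_abs_self _)
    · refine ne_top_of_le_ne_top hb (lintegral_mono fun x => ?_)
      rw [← enorm_eq_nnnorm, ← ofReal_norm]
      refine ENNReal.ofReal_le_ofReal ?_
      rw [Real.norm_eq_abs]
      exact neg_le_abs _
  rw [integral_eq_lintegral_pos_part_sub_lintegral_neg_part hint1,
    integral_eq_lintegral_pos_part_sub_lintegral_neg_part hint2]
  have h1 := ENNReal.toReal_mono (hfin ρ₂ hint2).1 hA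
  have h2 := ENNReal.toReal_mono (hfin ρ₁ hint1).2 hB
  linarith

/-- Usual stochastic order for real random variables:
`P(U > t) ≤ P(V > t)` for all `t ∈ ℝ`. -/
def StOrder {Ω : Type*} [MeasurableSpace Ω] (μ : Measure Ω) (U V : Ω → ℝ) : Prop :=
  ∀ t : ℝ, μ {ω | t < U ω} ≤ μ {ω | t < V ω}

theorem icx_of_mul_st
    {Ω : Type*} [MeasurableSpace Ω] (μ : Measure Ω) [IsProbabilityMeasure μ]
    (R₁ R₂ V : Ω → ℝ)
    (hR₁m : Measurable R₁) (hR₂m : Measurable R₂) (hVm : Measurable V)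
    (hR₁0 : ∀ ω, 0 ≤ R₁ ω) (hR₂0 : ∀ ω, 0 ≤ R₂ ω)
    (hR₁i : Integrable R₁ μ) (hR₂i : Integrable R₂ μ) (hVi : Integrable V μ)
    (hInd₁ : IndepFun R₁ V μ) (hInd₂ : IndepFun R₂ V μ)
    (hEV : 0 ≤ ∫ ω, V ω ∂μ)
    (hst : StOrder μ R₁ R₂) :
    ∀ f : ℝ → ℝ, Monotone f → ConvexOn ℝ Set.univ f →
      Integrable (fun ω => f (R₁ ω * V ω)) μ →
      Integrable (fun ω => f (R₂ ω * V ω)) μ →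
      ∫ ω, f (R₁ ω * V ω) ∂μ ≤ ∫ ω, f (R₂ ω * V ω) ∂μ := by
  intro f hfmono hfconv hfi₁ hfi₂
  set ν : Measure ℝ := μ.map V with hν
  set ρ₁ : Measure ℝ := μ.map R₁ with hρ₁
  set ρ₂ : Measure ℝ := μ.map R₂ with hρ₂
  haveI : IsProbabilityMeasure ν := Measure.isProbabilityMeasure_map hVm.aemeasurable
  haveI : IsProbabilityMeasure ρ₁ := Measure.isProbabilityMeasure_map hR₁m.aemeasurable
  haveI : IsProbabilityMeasure ρ₂ := Measure.isProbabilityMeasure_map hR₂m.aemeasurable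
  have hfm : Measurable f := hfmono.measurable
  have hfc : Measurable (fun p : ℝ × ℝ => f (p.1 * p.2)) :=
    hfm.comp (measurable_fst.mul measurable_snd)
  have hmap₁ : μ.map (fun ω => (R₁ ω, V ω)) = ρ₁.prod ν :=
    (indepFun_iff_map_prod_eq_prod_map_map hR₁m.aemeasurable hVm.aemeasurable).mp hInd₁
  have hmap₂ : μ.map (fun ω => (R₂ ω, V ω)) = ρ₂.prod ν :=
    (indepFun_iff_map_prod_eq_prod_map_map hR₂m.aemeasurable hVm.aemeasurable).mp hInd₂
  -- integrability on the product
  have hi₁ : Integrable (fun p : ℝ × ℝ => f (p.1 * p.2)) (ρ₁.prod ν) := by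
    rw [← hmap₁]
    exact (integrable_map_measure hfc.aestronglyMeasurable
      (hR₁m.prodMk hVm).aemeasurable).mpr hfi₁
  have hi₂ : Integrable (fun p : ℝ × ℝ => f (p.1 * p.2)) (ρ₂.prod ν) := by
    rw [← hmap₂]
    exact (integrable_map_measure hfc.aestronglyMeasurable
      (hR₂m.prodMk hVm).aemeasurable).mpr hfi₂
  -- integral identities
  have hint₁ : ∫ ω, f (R₁ ω * V ω) ∂μ = ∫ x, (∫ y, f (x * y) ∂ν) ∂ρ₁ := by
    rw [← integral_prod _ hi₁, ← hmap₁,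
      integral_map (hR₁m.prodMk hVm).aemeasurable hfc.aestronglyMeasurable]
  have hint₂ : ∫ ω, f (R₂ ω * V ω) ∂μ = ∫ x, (∫ y, f (x * y) ∂ν) ∂ρ₂ := by
    rw [← integral_prod _ hi₂, ← hmap₂,
      integral_map (hR₂m.prodMk hVm).aemeasurable hfc.aestronglyMeasurable]
  rw [hint₁, hint₂]
  -- ingredients for st_transfer
  have hid : Integrable (fun v : ℝ => v) ν :=
    (integrable_map_measure aestronglyMeasurable_id hVm.aemeasurable).mpr hVi
  have hEV' : 0 ≤ ∫ v, v ∂ν := by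
    have : ∫ v, v ∂ν = ∫ ω, V ω ∂μ := by
      rw [hν]
      exact integral_map hVm.aemeasurable aestronglyMeasurable_id
    rw [this]
    exact hEV
  set g : ℝ → ℝ := fun x => ∫ y, f (x * y) ∂ν with hg
  have hgm : Measurable g := by
    have := (hfc.stronglyMeasurable).integral_prod_right' (ν := ν)
    exact this.measurable
  set S : Set ℝ := {x : ℝ | 0 ≤ x ∧ Integrable (fun y => f (x * y)) ν} with hS
  have hSsub : S ⊆ Set.Ici 0 := fun x hx => hx.1
  have hS₁ : ∀ᵐ x ∂ρ₁, x ∈ S := by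
    have h1 : ∀ᵐ x ∂ρ₁, 0 ≤ x :=
      (ae_map_iff hR₁m.aemeasurable measurableSet_Ici).mpr (ae_of_all _ hR₁0)
    have h2 : ∀ᵐ x ∂ρ₁, Integrable (fun y => f (x * y)) ν := hi₁.prod_right_ae
    filter_upwards [h1, h2] with x hx1 hx2
    exact ⟨hx1, hx2⟩
  have hS₂ : ∀ᵐ x ∂ρ₂, x ∈ S := by
    have h1 : ∀ᵐ x ∂ρ₂, 0 ≤ x :=
      (ae_map_iff hR₂m.aemeasurable measurableSet_Ici).mpr (ae_of_all _ hR₂0)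
    have h2 : ∀ᵐ x ∂ρ₂, Integrable (fun y => f (x * y)) ν := hi₂.prod_right_ae
    filter_upwards [h1, h2] with x hx1 hx2
    exact ⟨hx1, hx2⟩
  have hmonoS : ∀ x ∈ S, ∀ y ∈ S, x ≤ y → g x ≤ g y := by
    intro x hx y hy hxy
    exact (step_mono hfmono hfconv hid hEV' hx.1 hxy hy.2).2
  have hgint₁ : Integrable g ρ₁ := hi₁.integral_prod_left
  have hgint₂ : Integrable g ρ₂ := hi₂.integral_prod_left
  have hst' : ∀ t : ℝ, ρ₁ (Set.Ioi t) ≤ ρ₂ (Set.Ioi t) := by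
    intro t
    rw [hρ₁, hρ₂, Measure.map_apply hR₁m measurableSet_Ioi,
      Measure.map_apply hR₂m measurableSet_Ioi]
    exact hst t
  exact st_transfer hst' hgm hSsub hS₁ hS₂ hmonoS hgint₁ hgint₂
end

section
/- Let R₁, R₂ be nonnegative integrable real random variables with R₁ ≼st R₂, and let V be an integrable real random variable independent of R₁ and independent of R₂ with E[V] = 0. Then R₁V ≼cx R₂V, i.e., E[f(R₁V)] ≤ E[f(R₂V)] for every convex function f : ℝ → ℝ such that both f(R₁V) and f(R₂V) are integrable. -/
open MeasureTheory ProbabilityTheory Filter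

lemma st_measure_le {Ω : Type*} [MeasurableSpace Ω] (μ : Measure Ω) [IsProbabilityMeasure μ]
    {R₁ R₂ : Ω → ℝ} (hR₁m : Measurable R₁) (hR₂m : Measurable R₂)
    (hst : StOrder μ R₁ R₂) {U : Set ℝ} (hU : IsUpperSet U) :
    μ (R₁ ⁻¹' U) ≤ μ (R₂ ⁻¹' U) := by
  rcases Set.eq_empty_or_nonempty U with h | hne
  · simp [h]
  by_cases hbd : BddBelow U
  · set c := sInf U with hc
    by_cases hcU : c ∈ U
    · have hUeq : U = Set.Ici c := by
        apply Set.Subset.antisymm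
        · exact fun x hx => csInf_le hbd hx
        · exact fun x hx => hU hx hcU
      have hIci : ∀ R : Ω → ℝ, R ⁻¹' Set.Ici c = ⋂ n : ℕ, {ω | c - 1 / (n + 1) < R ω} := by
        intro R
        ext ω
        simp only [Set.mem_preimage, Set.mem_Ici, Set.mem_iInter, Set.mem_setOf_eq]
        constructor
        · intro h n
          have : (0:ℝ) < 1 / (n + 1) := by positivity
          linarith
        · intro h
          by_contra hlt
          push_neg at hlt
          obtain ⟨n, hn⟩ := exists_nat_one_div_lt (show (0:ℝ) < c - R ω by linarith)
          have := h n
          linarith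
      have hanti : ∀ R : Ω → ℝ, Antitone (fun n : ℕ => {ω | c - 1 / (n + 1) < R ω}) := by
        intro R n m hnm ω hω
        simp only [Set.mem_setOf_eq] at hω ⊢
        have h1 : (1:ℝ) / (m + 1) ≤ 1 / (n + 1) := by
          apply one_div_le_one_div_of_le (by positivity)
          have : (n:ℝ) ≤ m := Nat.cast_le.mpr hnm
          linarith
        linarith
      have hmeas : ∀ (R : Ω → ℝ), Measurable R →
          ∀ n : ℕ, NullMeasurableSet {ω | c - 1 / (n + 1) < R ω} μ := fun R hR n =>
        (hR measurableSet_Ioi).nullMeasurableSet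
      have key : ∀ (R : Ω → ℝ), Measurable R →
          μ (R ⁻¹' U) = ⨅ n : ℕ, μ {ω | c - 1 / (n + 1) < R ω} := by
        intro R hR
        rw [hUeq, hIci R]
        exact Directed.measure_iInter (hmeas R hR) ((hanti R).directed_ge)
          ⟨0, measure_ne_top μ _⟩
      rw [key R₁ hR₁m, key R₂ hR₂m]
      exact iInf_mono fun n => hst _
    · have hUeq : U = Set.Ioi c := by
        apply Set.Subset.antisymm
        · intro x hx
          exact lt_of_le_of_ne (csInf_le hbd hx) (fun h => hcU (by rw [hc, h]; exact hx))
        · intro x hx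
          obtain ⟨u, huU, hu⟩ := exists_lt_of_csInf_lt hne hx
          exact hU hu.le huU
      rw [hUeq]
      exact hst c
  · have hUeq : U = Set.univ := by
      rw [Set.eq_univ_iff_forall]
      intro x
      rw [not_bddBelow_iff] at hbd
      obtain ⟨u, huU, hu⟩ := hbd x
      exact hU hu.le huU
    simp [hUeq]

lemma st_integral_mono {Ω : Type*} [MeasurableSpace Ω] (μ : Measure Ω) [IsProbabilityMeasure μ]
    {R₁ R₂ : Ω → ℝ} (hR₁m : Measurable R₁) (hR₂m : Measurable R₂)
    (hst : StOrder μ R₁ R₂) {G : ℝ → ℝ} (hG : StronglyMeasurable G) {D : Set ℝ}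
    (hmono : MonotoneOn G D) {c : ℝ} (hc : ∀ r ∈ D, c ≤ G r)
    (h₁D : ∀ᵐ ω ∂μ, R₁ ω ∈ D) (h₂D : ∀ᵐ ω ∂μ, R₂ ω ∈ D)
    (hi₁ : Integrable (fun ω => G (R₁ ω)) μ) (hi₂ : Integrable (fun ω => G (R₂ ω)) μ) :
    ∫ ω, G (R₁ ω) ∂μ ≤ ∫ ω, G (R₂ ω) ∂μ := by
  -- pointwise tail comparison
  have key : ∀ t : ℝ, μ {ω | t < G (R₁ ω) - c} ≤ μ {ω | t < G (R₂ ω) - c} := by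
    intro t
    set A : Set ℝ := {x | t + c < G x} with hA
    set U : Set ℝ := {x | ∃ y, y ∈ A ∩ D ∧ y ≤ x} with hUdef
    have hUup : IsUpperSet U := by
      intro a b hab ⟨y, hy, hya⟩
      exact ⟨y, hy, hya.trans hab⟩
    have hAD : A ∩ D = U ∩ D := by
      apply Set.Subset.antisymm
      · exact fun x hx => ⟨⟨x, hx, le_rfl⟩, hx.2⟩
      · rintro x ⟨⟨y, hy, hyx⟩, hxD⟩
        refine ⟨?_, hxD⟩
        have := hmono hy.2 hxD hyx
        exact lt_of_lt_of_le hy.1 this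
    have hset : ∀ (R : Ω → ℝ), (∀ᵐ ω ∂μ, R ω ∈ D) →
        μ {ω | t < G (R ω) - c} = μ (R ⁻¹' U) := by
      intro R hRD
      have h1 : {ω | t < G (R ω) - c} = R ⁻¹' A := by
        ext ω; simp only [Set.mem_setOf_eq, Set.mem_preimage, hA, lt_sub_iff_add_lt]
      rw [h1]
      apply measure_congr
      rw [eventuallyEq_set]
      filter_upwards [hRD] with ω hω
      constructor
      · intro hωA
        have : R ω ∈ A ∩ D := ⟨hωA, hω⟩
        rw [hAD] at this
        exact this.1
      · intro hωU
        have : R ω ∈ U ∩ D := ⟨hωU, hω⟩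
        rw [← hAD] at this
        exact this.1
    rw [hset R₁ h₁D, hset R₂ h₂D]
    exact st_measure_le μ hR₁m hR₂m hst hUup
  -- layer cake
  have hnn : ∀ (R : Ω → ℝ), (∀ᵐ ω ∂μ, R ω ∈ D) → 0 ≤ᵐ[μ] fun ω => G (R ω) - c := by
    intro R hRD
    filter_upwards [hRD] with ω hω
    simpa using sub_nonneg.mpr (hc _ hω)
  have hmeas : ∀ (R : Ω → ℝ), Measurable R → Measurable fun ω => G (R ω) - c := fun R hR =>
    (hG.measurable.comp hR).sub measurable_const
  have lc : ∀ (R : Ω → ℝ), Measurable R → (∀ᵐ ω ∂μ, R ω ∈ D) →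
      ∫⁻ ω, ENNReal.ofReal (G (R ω) - c) ∂μ = ∫⁻ s in Set.Ioi 0, μ {ω | s < G (R ω) - c} :=
    fun R hR hRD => lintegral_eq_lintegral_meas_lt μ (hnn R hRD) (hmeas R hR).aemeasurable
  have hle : ∫⁻ ω, ENNReal.ofReal (G (R₁ ω) - c) ∂μ ≤ ∫⁻ ω, ENNReal.ofReal (G (R₂ ω) - c) ∂μ := by
    rw [lc R₁ hR₁m h₁D, lc R₂ hR₂m h₂D]
    exact lintegral_mono fun s => key s
  have hint : ∀ (R : Ω → ℝ), Integrable (fun ω => G (R ω)) μ →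
      Integrable (fun ω => G (R ω) - c) μ := fun R hR => hR.sub (integrable_const c)
  have hfin : ∀ (R : Ω → ℝ), Integrable (fun ω => G (R ω)) μ →
      ∫⁻ ω, ENNReal.ofReal (G (R ω) - c) ∂μ ≠ ⊤ := by
    intro R hR
    refine ne_top_of_le_ne_top (hint R hR).2.ne ?_
    exact lintegral_mono fun ω => by
      rw [← ofReal_norm_eq_enorm]
      exact ENNReal.ofReal_le_ofReal (le_abs_self _)
  have hieq : ∀ (R : Ω → ℝ), Measurable R → (∀ᵐ ω ∂μ, R ω ∈ D) →
      Integrable (fun ω => G (R ω)) μ →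
      ∫ ω, G (R ω) ∂μ = (∫⁻ ω, ENNReal.ofReal (G (R ω) - c) ∂μ).toReal + c := by
    intro R hR hRD hRi
    have h1 : ∫ ω, (G (R ω) - c) ∂μ =
        (∫⁻ ω, ENNReal.ofReal (G (R ω) - c) ∂μ).toReal :=
      integral_eq_lintegral_of_nonneg_ae (hnn R hRD) (hmeas R hR).aestronglyMeasurable
    have h2 : ∫ ω, (G (R ω) - c) ∂μ = ∫ ω, G (R ω) ∂μ - c := by
      rw [integral_sub hRi (integrable_const c)]; simp
    linarith
  rw [hieq R₁ hR₁m h₁D hi₁, hieq R₂ hR₂m h₂D hi₂]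
  have := ENNReal.toReal_mono (hfin R₂ hi₂) hle
  linarith

lemma convexOn_exists_affine_le {f : ℝ → ℝ} (hf : ConvexOn ℝ Set.univ f) :
    ∃ a : ℝ, ∀ x : ℝ, f 0 + a * x ≤ f x := by
  set S := {z : ℝ | ∃ y : ℝ, 0 < y ∧ z = (f y - f 0) / (y - 0)} with hS
  have hne : S.Nonempty := ⟨(f 1 - f 0) / (1 - 0), 1, one_pos, rfl⟩
  have hlb : ∀ x : ℝ, x < 0 → (f 0 - f x) / (0 - x) ∈ lowerBounds S := by
    rintro x hx z ⟨y, hy, rfl⟩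
    exact hf.slope_mono_adjacent (Set.mem_univ x) (Set.mem_univ y) hx hy
  have hbdd : BddBelow S := ⟨_, hlb (-1) (by norm_num)⟩
  refine ⟨sInf S, fun x => ?_⟩
  rcases lt_trichotomy x 0 with hx | hx | hx
  · have h1 : (f 0 - f x) / (0 - x) ≤ sInf S := le_csInf hne (hlb x hx)
    rw [div_le_iff₀ (by linarith)] at h1
    nlinarith [h1]
  · simp [hx]
  · have h1 : sInf S ≤ (f x - f 0) / (x - 0) := csInf_le hbdd ⟨x, hx, rfl⟩
    rw [le_div_iff₀ (by linarith)] at h1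
    nlinarith [h1]

lemma convex_scale_props (κ : Measure ℝ) [IsProbabilityMeasure κ] {f : ℝ → ℝ}
    (hf : ConvexOn ℝ Set.univ f) (hfc : Continuous f)
    (hVκ : Integrable (fun v => v) κ) (hEκ : ∫ v, v ∂κ = 0) :
    IsLowerSet {r : ℝ | Integrable (fun v => f (max r 0 * v)) κ} ∧
    MonotoneOn (fun r => ∫ v, f (max r 0 * v) ∂κ)
      {r : ℝ | Integrable (fun v => f (max r 0 * v)) κ} ∧
    ∀ r ∈ {r : ℝ | Integrable (fun v => f (max r 0 * v)) κ},
      f 0 ≤ ∫ v, f (max r 0 * v) ∂κ := by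
  -- Jensen
  have jensen : ∀ r : ℝ, Integrable (fun v => f (max r 0 * v)) κ →
      f 0 ≤ ∫ v, f (max r 0 * v) ∂κ := by
    intro r hr
    have hint : Integrable (fun v => max r 0 * v) κ := hVκ.const_mul _
    have h0 : ∫ v, max r 0 * v ∂κ = 0 := by
      rw [integral_const_mul, hEκ, mul_zero]
    have hgi : Integrable (f ∘ fun v => max r 0 * v) κ := hr
    have := hf.map_integral_le hfc.continuousOn isClosed_univ
      (Eventually.of_forall fun v => Set.mem_univ _) hint hgi
    rwa [h0] at this
  -- pointwise convexity inequality
  have pw : ∀ s t v : ℝ, 0 ≤ s → s ≤ t → 0 < t →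
      f (s * v) ≤ s / t * f (t * v) + (1 - s / t) * f 0 := by
    intro s t v hs hst ht
    have h1 : 0 ≤ s / t := div_nonneg hs ht.le
    have h2 : 0 ≤ 1 - s / t := by
      have : s / t ≤ 1 := div_le_one_of_le₀ hst ht.le
      linarith
    have h3 : s / t + (1 - s / t) = 1 := by ring
    have := hf.2 (Set.mem_univ (t * v)) (Set.mem_univ (0:ℝ)) h1 h2 h3
    have hsv : s / t * (t * v) = s * v := by
      field_simp
    simpa [smul_eq_mul, hsv] using this
  obtain ⟨A, hA⟩ := convexOn_exists_affine_le hf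
  -- lower set
  have lower : IsLowerSet {r : ℝ | Integrable (fun v => f (max r 0 * v)) κ} := by
    intro a b hba ha
    simp only [Set.mem_setOf_eq] at ha ⊢
    set T := max a 0 with hT
    set Sb := max b 0 with hSb
    have hST : Sb ≤ T := max_le_max hba le_rfl
    have hS0 : 0 ≤ Sb := le_max_right _ _
    rcases eq_or_lt_of_le (le_max_right a (0:ℝ)) with hT0 | hT0
    · have hSz : Sb = 0 := le_antisymm (hST.trans hT0.symm.le) hS0
      simp only [hSz, zero_mul]
      exact integrable_const _
    · -- 0 < T
      have hmeasf : AEStronglyMeasurable (fun v => f (Sb * v)) κ :=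
        (hfc.comp (continuous_const.mul continuous_id)).aestronglyMeasurable
      have hUint : Integrable (fun v => Sb / T * f (T * v) + (1 - Sb / T) * f 0) κ :=
        (ha.const_mul _).add (integrable_const _)
      have hLint : Integrable (fun v => f 0 + A * (Sb * v)) κ := by
        have : (fun v => f 0 + A * (Sb * v)) = fun v => f 0 + (A * Sb) * v := by
          funext v; ring
        rw [this]
        exact (integrable_const _).add (hVκ.const_mul _)
      have hBint : Integrable (fun v => |Sb / T * f (T * v) + (1 - Sb / T) * f 0|
          + |f 0 + A * (Sb * v)|) κ := hUint.abs.add hLint.abs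
      refine Integrable.mono' hBint hmeasf ?_
      filter_upwards with v
      have hU := pw Sb T v hS0 hST hT0
      have hL := hA (Sb * v)
      rw [Real.norm_eq_abs, abs_le]
      constructor
      · have := neg_abs_le (f 0 + A * (Sb * v))
        have := abs_nonneg (Sb / T * f (T * v) + (1 - Sb / T) * f 0)
        linarith
      · have := le_abs_self (Sb / T * f (T * v) + (1 - Sb / T) * f 0)
        have := abs_nonneg (f 0 + A * (Sb * v))
        linarith
  refine ⟨lower, ?_, jensen⟩
  -- monotone
  intro a ha b hb hab
  simp only [Set.mem_setOf_eq] at ha hb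
  simp only
  set Sa := max a 0 with hSa
  set T := max b 0 with hT
  have hST : Sa ≤ T := max_le_max hab le_rfl
  have hS0 : 0 ≤ Sa := le_max_right _ _
  rcases eq_or_lt_of_le (le_max_right b (0:ℝ)) with hT0 | hT0
  · have hSz : Sa = 0 := le_antisymm (hST.trans hT0.symm.le) hS0
    rw [hSz, show T = 0 from hT0.symm]
  · have hUint : Integrable (fun v => Sa / T * f (T * v) + (1 - Sa / T) * f 0) κ :=
      (hb.const_mul _).add (integrable_const _)
    have step1 : ∫ v, f (Sa * v) ∂κ ≤ ∫ v, (Sa / T * f (T * v) + (1 - Sa / T) * f 0) ∂κ :=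
      integral_mono ha hUint (fun v => pw Sa T v hS0 hST hT0)
    have step2 : ∫ v, (Sa / T * f (T * v) + (1 - Sa / T) * f 0) ∂κ
        = Sa / T * ∫ v, f (T * v) ∂κ + (1 - Sa / T) * f 0 := by
      rw [integral_add (hb.const_mul _) (integrable_const _), integral_const_mul,
        integral_const]
      simp
    have hjb : f 0 ≤ ∫ v, f (T * v) ∂κ := jensen b hb
    have h1 : 0 ≤ Sa / T := div_nonneg hS0 hT0.le
    have h2 : 0 ≤ 1 - Sa / T := by
      have : Sa / T ≤ 1 := div_le_one_of_le₀ hST hT0.le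
      linarith
    have step3 : Sa / T * ∫ v, f (T * v) ∂κ + (1 - Sa / T) * f 0 ≤ ∫ v, f (T * v) ∂κ := by
      nlinarith [hjb]
    linarith [step1, step2.symm ▸ step1, step3]

lemma key_repr {Ω : Type*} [MeasurableSpace Ω] (μ : Measure Ω) [IsProbabilityMeasure μ]
    {R V : Ω → ℝ} (hRm : Measurable R) (hVm : Measurable V) (hR0 : ∀ ω, 0 ≤ R ω)
    (hInd : IndepFun R V μ) {f : ℝ → ℝ} (hfc : Continuous f)
    (hfi : Integrable (fun ω => f (R ω * V ω)) μ) :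
    (∫ ω, f (R ω * V ω) ∂μ = ∫ ω, (∫ v, f (max (R ω) 0 * v) ∂(μ.map V)) ∂μ)
    ∧ Integrable (fun ω => ∫ v, f (max (R ω) 0 * v) ∂(μ.map V)) μ
    ∧ (∀ᵐ ω ∂μ, Integrable (fun v => f (max (R ω) 0 * v)) (μ.map V)) := by
  set κ := μ.map V with hκ
  set ν := μ.map R with hν
  haveI : IsProbabilityMeasure κ := Measure.isProbabilityMeasure_map hVm.aemeasurable
  haveI : IsProbabilityMeasure ν := Measure.isProbabilityMeasure_map hRm.aemeasurable
  have hpm : AEMeasurable (fun ω => (R ω, V ω)) μ := (hRm.prodMk hVm).aemeasurable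
  have hpair : μ.map (fun ω => (R ω, V ω)) = ν.prod κ :=
    (indepFun_iff_map_prod_eq_prod_map_map hRm.aemeasurable hVm.aemeasurable).mp hInd
  have hfmul : Continuous fun p : ℝ × ℝ => f (p.1 * p.2) :=
    hfc.comp (continuous_fst.mul continuous_snd)
  have hint : Integrable (fun p : ℝ × ℝ => f (p.1 * p.2)) (ν.prod κ) := by
    rw [← hpair]
    exact (integrable_map_measure hfmul.aestronglyMeasurable hpm).mpr hfi
  -- the function G
  set G : ℝ → ℝ := fun r => ∫ v, f (max r 0 * v) ∂κ with hG
  have hGc : Continuous fun p : ℝ × ℝ => f (max p.1 0 * p.2) :=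
    hfc.comp (((continuous_fst.max continuous_const)).mul continuous_snd)
  have hGsm : StronglyMeasurable G :=
    hGc.stronglyMeasurable.integral_prod_right'
  -- a.e. nonneg under ν
  have hν0 : ∀ᵐ r ∂ν, 0 ≤ r := by
    rw [hν]
    exact (ae_map_iff hRm.aemeasurable measurableSet_Ici).mpr
      (Eventually.of_forall hR0)
  -- equality of integrals
  have eq1 : ∫ ω, f (R ω * V ω) ∂μ = ∫ p : ℝ × ℝ, f (p.1 * p.2) ∂(ν.prod κ) := by
    rw [← hpair, integral_map hpm hfmul.aestronglyMeasurable]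
  have eq2 : ∫ p : ℝ × ℝ, f (p.1 * p.2) ∂(ν.prod κ) = ∫ r, ∫ v, f (r * v) ∂κ ∂ν :=
    integral_prod _ hint
  have eq3 : ∫ r, ∫ v, f (r * v) ∂κ ∂ν = ∫ r, G r ∂ν := by
    apply integral_congr_ae
    filter_upwards [hν0] with r hr
    rw [hG]
    simp only [max_eq_left hr]
  have eq4 : ∫ r, G r ∂ν = ∫ ω, G (R ω) ∂μ := by
    rw [hν, integral_map hRm.aemeasurable hGsm.aestronglyMeasurable]
  have hGint : Integrable G ν := by
    have h1 : Integrable (fun r => ∫ v, f (r * v) ∂κ) ν := hint.integral_prod_left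
    apply h1.congr
    filter_upwards [hν0] with r hr
    rw [hG]
    simp only [max_eq_left hr]
  have hGRint : Integrable (fun ω => G (R ω)) μ := by
    rw [hν] at hGint
    exact (integrable_map_measure hGsm.aestronglyMeasurable hRm.aemeasurable).mp hGint
  have haeD : ∀ᵐ ω ∂μ, Integrable (fun v => f (max (R ω) 0 * v)) κ := by
    have h1 : ∀ᵐ r ∂ν, Integrable (fun v => f (r * v)) κ := hint.prod_right_ae
    have h2 : ∀ᵐ r ∂ν, Integrable (fun v => f (max r 0 * v)) κ := by
      filter_upwards [h1, hν0] with r hr hr0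
      simpa only [max_eq_left hr0] using hr
    rw [hν] at h2
    exact ae_of_ae_map hRm.aemeasurable h2
  exact ⟨by rw [eq1, eq2, eq3, eq4], hGRint, haeD⟩

theorem cx_of_mul_st
    {Ω : Type*} [MeasurableSpace Ω] (μ : Measure Ω) [IsProbabilityMeasure μ]
    (R₁ R₂ V : Ω → ℝ)
    (hR₁m : Measurable R₁) (hR₂m : Measurable R₂) (hVm : Measurable V)
    (hR₁0 : ∀ ω, 0 ≤ R₁ ω) (hR₂0 : ∀ ω, 0 ≤ R₂ ω)
    (hR₁i : Integrable R₁ μ) (hR₂i : Integrable R₂ μ) (hVi : Integrable V μ)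
    (hInd₁ : IndepFun R₁ V μ) (hInd₂ : IndepFun R₂ V μ)
    (hEV : ∫ ω, V ω ∂μ = 0)
    (hst : StOrder μ R₁ R₂) :
    ∀ f : ℝ → ℝ, ConvexOn ℝ Set.univ f →
      Integrable (fun ω => f (R₁ ω * V ω)) μ →
      Integrable (fun ω => f (R₂ ω * V ω)) μ →
      ∫ ω, f (R₁ ω * V ω) ∂μ ≤ ∫ ω, f (R₂ ω * V ω) ∂μ := by
  intro f hf hfi₁ hfi₂
  have hfc : Continuous f :=
    continuousOn_univ.mp (hf.continuousOn isOpen_univ)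
  haveI : IsProbabilityMeasure (μ.map V) := Measure.isProbabilityMeasure_map hVm.aemeasurable
  have hVκ : Integrable (fun v => v) (μ.map V) :=
    (integrable_map_measure aestronglyMeasurable_id hVm.aemeasurable).mpr hVi
  have hEκ : ∫ v, v ∂(μ.map V) = 0 := by
    rw [integral_map hVm.aemeasurable (f := fun v => v) aestronglyMeasurable_id]
    exact hEV
  obtain ⟨hD, hmono, hjen⟩ := convex_scale_props (μ.map V) hf hfc hVκ hEκ
  obtain ⟨e1, i1, d1⟩ := key_repr μ hR₁m hVm hR₁0 hInd₁ hfc hfi₁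
  obtain ⟨e2, i2, d2⟩ := key_repr μ hR₂m hVm hR₂0 hInd₂ hfc hfi₂
  rw [e1, e2]
  have hGsm : StronglyMeasurable (fun r => ∫ v, f (max r 0 * v) ∂(μ.map V)) :=
    (hfc.comp ((continuous_fst.max continuous_const).mul
      continuous_snd)).stronglyMeasurable.integral_prod_right'
  exact st_integral_mono μ hR₁m hR₂m hst hGsm hmono hjen
    (by filter_upwards [d1] with ω h using h)
    (by filter_upwards [d2] with ω h using h) i1 i2
end

section
/- Let U be an ℝ^d-valued random vector with ‖U‖₂ = 1 almost surely whose distribution is invariant under every orthogonal linear transformation of ℝ^d (i.e., QU has the same distribution as U for every orthogonal d×d matrix Q). Let R₁, R₂ be nonnegative real random variables, each independent of U, let μ₁, μ₂ ∈ ℝ^d with μ₁ ≤ μ₂ componentwise, let A₁, A₂ be d×d real matrices, and set Cᵢ := AᵢAᵢᵀ. Define the elliptically distributed vectors X := μ₁ + R₁·(A₁U) and Y := μ₂ + R₂·(A₂U). If R₁ ≼apl R₂ and ξᵀC₁ξ ≤ ξᵀC₂ξ for all ξ in the unit simplex Σ^d, then X ≼apl Y. -/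
open MeasureTheory ProbabilityTheory Filter Matrix

/-- Asymptotic portfolio loss order for `ℝ^d`-valued random vectors:
for every portfolio `ξ` in the unit simplex and every `c > 1` there is `T` such that
`P(ξᵀX > t) ≤ c · P(ξᵀY ≥ t)` for all `t ≥ T`. -/
def AplVec {Ω : Type*} [MeasurableSpace Ω] (μ : Measure Ω) {d : ℕ}
    (X Y : Ω → Fin d → ℝ) : Prop :=
  ∀ ξ ∈ stdSimplex ℝ (Fin d), ∀ c : ℝ, 1 < c → ∃ T : ℝ, ∀ t : ℝ, T ≤ t →
    μ {ω | t < ∑ i, ξ i * X ω i} ≤ ENNReal.ofReal c * μ {ω | t ≤ ∑ i, ξ i * Y ω i}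

lemma vecMulVec_mulVec' {d : ℕ} (u x : Fin d → ℝ) :
    (vecMulVec u u).mulVec x = (u ⬝ᵥ x) • u := by
  ext i
  simp only [Matrix.mulVec, Matrix.vecMulVec_apply, dotProduct, Pi.smul_apply,
    smul_eq_mul, Finset.sum_mul]
  exact Finset.sum_congr rfl fun j _ => by ring

lemma exists_orthogonal {d : ℕ} (v₁ v₂ : Fin d → ℝ) (h1 : v₁ ⬝ᵥ v₁ = 1) (h2 : v₂ ⬝ᵥ v₂ = 1) :
    ∃ Q : Matrix (Fin d) (Fin d) ℝ, Q * Qᵀ = 1 ∧ Q.mulVec v₁ = v₂ := by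
  by_cases hv : v₁ = v₂
  · exact ⟨1, by simp, by simp [hv]⟩
  set u : Fin d → ℝ := v₁ - v₂ with hu
  have hu0 : u ≠ 0 := sub_ne_zero.2 hv
  set S : ℝ := u ⬝ᵥ u with hS
  have hSnn : 0 ≤ S := Finset.sum_nonneg fun i _ => mul_self_nonneg _
  have hS0 : S ≠ 0 := fun h => hu0 (dotProduct_self_eq_zero.mp h)
  set M : Matrix (Fin d) (Fin d) ℝ := vecMulVec u u with hM
  have hMT : Mᵀ = M := by ext i j; simp [hM, Matrix.vecMulVec_apply, mul_comm]
  have hMM : M * M = S • M := by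
    ext i j
    simp only [hM, Matrix.mul_apply, Matrix.vecMulVec_apply, Matrix.smul_apply, smul_eq_mul,
      hS, dotProduct]
    rw [Finset.sum_mul]
    exact Finset.sum_congr rfl fun k _ => by ring
  set c : ℝ := 2 / S with hc
  refine ⟨1 - c • M, ?_, ?_⟩
  · have hTQ : (1 - c • M)ᵀ = 1 - c • M := by
      rw [Matrix.transpose_sub, Matrix.transpose_one, Matrix.transpose_smul, hMT]
    rw [hTQ]
    have expand : (1 - c • M) * (1 - c • M)
        = 1 - c • M - c • M + (c * c) • (M * M) := by
      have hNN : (c • M) * (c • M) = (c * c) • (M * M) := by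
        rw [smul_mul_assoc, mul_smul_comm, smul_smul]
      rw [sub_mul, mul_sub, mul_sub, hNN]
      simp only [one_mul, mul_one]
      abel
    rw [expand, hMM, smul_smul]
    have : c * c * S = c + c := by rw [mul_assoc, hc, div_mul_cancel₀ (2:ℝ) hS0]; ring
    rw [this, add_smul]
    module
  · have huv : u ⬝ᵥ v₁ = S / 2 := by
      have h12 : v₁ ⬝ᵥ v₂ = v₂ ⬝ᵥ v₁ := dotProduct_comm _ _
      have hSval : S = 2 - 2 * (v₁ ⬝ᵥ v₂) := by
        rw [hS, hu, sub_dotProduct, dotProduct_sub, dotProduct_sub,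
          h1, h2, h12]
        ring
      rw [hu, sub_dotProduct, h1, ← h12, hSval]; ring
    rw [Matrix.sub_mulVec, Matrix.one_mulVec, Matrix.smul_mulVec, vecMulVec_mulVec',
      huv, smul_smul]
    have : c * (S / 2) = 1 := by field_simp [hc]; rw [hc, div_mul_cancel₀ (2:ℝ) hS0]
    rw [this, one_smul, hu]
    abel

theorem apl_elliptical
    {Ω : Type*} [MeasurableSpace Ω] (μ : Measure Ω) [IsProbabilityMeasure μ]
    {d : ℕ} (U : Ω → Fin d → ℝ) (hUm : Measurable U)
    (hUnorm : ∀ᵐ ω ∂μ, ∑ i, (U ω i) ^ 2 = 1)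
    (hUrot : ∀ Q : Matrix (Fin d) (Fin d) ℝ, Q * Qᵀ = 1 →
      Measure.map (fun ω => Q.mulVec (U ω)) μ = Measure.map U μ)
    (R₁ R₂ : Ω → ℝ) (hR₁m : Measurable R₁) (hR₂m : Measurable R₂)
    (hR₁0 : ∀ ω, 0 ≤ R₁ ω) (hR₂0 : ∀ ω, 0 ≤ R₂ ω)
    (hInd₁ : IndepFun R₁ U μ) (hInd₂ : IndepFun R₂ U μ)
    (μ₁ μ₂ : Fin d → ℝ) (hμ : ∀ i, μ₁ i ≤ μ₂ i)
    (A₁ A₂ : Matrix (Fin d) (Fin d) ℝ)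
    (hR : AplReal μ R₁ R₂)
    (hC : ∀ ξ ∈ stdSimplex ℝ (Fin d),
      ξ ⬝ᵥ (A₁ * A₁ᵀ).mulVec ξ ≤ ξ ⬝ᵥ (A₂ * A₂ᵀ).mulVec ξ) :
    AplVec μ (fun ω i => μ₁ i + R₁ ω * A₁.mulVec (U ω) i)
      (fun ω i => μ₂ i + R₂ ω * A₂.mulVec (U ω) i) := by
  intro ξ hξ c hc
  obtain ⟨hξ0, hξsum⟩ := hξ
  have hdot : ∀ v : Fin d → ℝ, Measurable fun x : Fin d → ℝ => v ⬝ᵥ x := by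
    intro v
    simp only [dotProduct]
    exact Finset.measurable_sum _ fun i _ => by fun_prop
  -- rotational invariance for dot products with unit vectors
  have law_dot : ∀ v₁ v₂ : Fin d → ℝ, v₁ ⬝ᵥ v₁ = 1 → v₂ ⬝ᵥ v₂ = 1 →
      Measure.map (fun ω => v₁ ⬝ᵥ U ω) μ = Measure.map (fun ω => v₂ ⬝ᵥ U ω) μ := by
    intro v₁ v₂ h1 h2
    obtain ⟨Q, hQ, hQv⟩ := exists_orthogonal v₁ v₂ h1 h2
    have hQ2 : Qᵀ * Qᵀᵀ = 1 := by
      rw [Matrix.transpose_transpose]; exact mul_eq_one_comm.mp hQ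
    have hmv : Measurable fun x : Fin d → ℝ => Qᵀ.mulVec x :=
      measurable_pi_lambda _ fun i => hdot _
    calc Measure.map (fun ω => v₁ ⬝ᵥ U ω) μ
        = Measure.map (fun x => v₁ ⬝ᵥ x) (Measure.map U μ) :=
          (Measure.map_map (hdot v₁) hUm).symm
      _ = Measure.map (fun x => v₁ ⬝ᵥ x)
            (Measure.map (fun ω => Qᵀ.mulVec (U ω)) μ) := by rw [hUrot Qᵀ hQ2]
      _ = Measure.map (fun ω => v₁ ⬝ᵥ Qᵀ.mulVec (U ω)) μ :=
          Measure.map_map (hdot v₁) (hmv.comp hUm)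
      _ = Measure.map (fun ω => v₂ ⬝ᵥ U ω) μ := by
          congr 1
          funext ω
          rw [Matrix.dotProduct_mulVec, Matrix.vecMul_transpose, hQv]
  set m₁ : ℝ := ∑ i, ξ i * μ₁ i with hm₁def
  set m₂ : ℝ := ∑ i, ξ i * μ₂ i with hm₂def
  have hm : m₁ ≤ m₂ :=
    Finset.sum_le_sum fun i _ => mul_le_mul_of_nonneg_left (hμ i) (hξ0 i)
  have hsum : ∀ (A : Matrix (Fin d) (Fin d) ℝ) (ν : Fin d → ℝ) (r : ℝ) (x : Fin d → ℝ),
      ∑ i, ξ i * (ν i + r * A.mulVec x i)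
        = (∑ i, ξ i * ν i) + r * (Aᵀ.mulVec ξ ⬝ᵥ x) := by
    intro A ν r x
    have h1 : Aᵀ.mulVec ξ ⬝ᵥ x = ∑ i, ξ i * A.mulVec x i := by
      rw [Matrix.mulVec_transpose, ← Matrix.dotProduct_mulVec]
      rfl
    rw [h1, Finset.mul_sum, ← Finset.sum_add_distrib]
    exact Finset.sum_congr rfl fun i _ => by ring
  have hquad : ∀ A : Matrix (Fin d) (Fin d) ℝ,
      ξ ⬝ᵥ (A * Aᵀ).mulVec ξ = (Aᵀ.mulVec ξ) ⬝ᵥ (Aᵀ.mulVec ξ) := by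
    intro A
    rw [← Matrix.mulVec_mulVec, Matrix.dotProduct_mulVec, ← Matrix.mulVec_transpose]
  have hdnn : ∀ v : Fin d → ℝ, 0 ≤ v ⬝ᵥ v :=
    fun v => Finset.sum_nonneg fun i _ => mul_self_nonneg _
  have hCle : (A₁ᵀ.mulVec ξ) ⬝ᵥ (A₁ᵀ.mulVec ξ) ≤ (A₂ᵀ.mulVec ξ) ⬝ᵥ (A₂ᵀ.mulVec ξ) := by
    rw [← hquad A₁, ← hquad A₂]; exact hC ξ ⟨hξ0, hξsum⟩
  by_cases hw₁0 : A₁ᵀ.mulVec ξ = 0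
  · -- degenerate case: portfolio variance zero for X
    refine ⟨m₁, fun t ht => ?_⟩
    have he : {ω | t < ∑ i, ξ i * (μ₁ i + R₁ ω * A₁.mulVec (U ω) i)} = (∅ : Set Ω) := by
      ext ω
      simp only [Set.mem_setOf_eq, Set.mem_empty_iff_false, iff_false, not_lt]
      rw [hsum A₁ μ₁ (R₁ ω) (U ω), hw₁0, zero_dotProduct, mul_zero, add_zero]
      exact ht
    rw [he]
    simp
  · -- main case
    have h1pos : 0 < (A₁ᵀ.mulVec ξ) ⬝ᵥ (A₁ᵀ.mulVec ξ) :=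
      (hdnn _).lt_of_ne fun h => hw₁0 (dotProduct_self_eq_zero.mp h.symm)
    have h2pos : 0 < (A₂ᵀ.mulVec ξ) ⬝ᵥ (A₂ᵀ.mulVec ξ) := lt_of_lt_of_le h1pos hCle
    set σ₁ : ℝ := Real.sqrt ((A₁ᵀ.mulVec ξ) ⬝ᵥ (A₁ᵀ.mulVec ξ)) with hσ₁def
    set σ₂ : ℝ := Real.sqrt ((A₂ᵀ.mulVec ξ) ⬝ᵥ (A₂ᵀ.mulVec ξ)) with hσ₂def
    have hσ₁pos : 0 < σ₁ := Real.sqrt_pos.2 h1pos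
    have hσ₂pos : 0 < σ₂ := Real.sqrt_pos.2 h2pos
    have hσle : σ₁ ≤ σ₂ := Real.sqrt_le_sqrt hCle
    have hσ₁sq : σ₁ ^ 2 = (A₁ᵀ.mulVec ξ) ⬝ᵥ (A₁ᵀ.mulVec ξ) := Real.sq_sqrt (hdnn _)
    have hσ₂sq : σ₂ ^ 2 = (A₂ᵀ.mulVec ξ) ⬝ᵥ (A₂ᵀ.mulVec ξ) := Real.sq_sqrt (hdnn _)
    set v₁ : Fin d → ℝ := σ₁⁻¹ • A₁ᵀ.mulVec ξ with hv₁def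
    set v₂ : Fin d → ℝ := σ₂⁻¹ • A₂ᵀ.mulVec ξ with hv₂def
    have hv₁1 : v₁ ⬝ᵥ v₁ = 1 := by
      rw [hv₁def, smul_dotProduct, dotProduct_smul, smul_eq_mul, smul_eq_mul,
        ← hσ₁sq]
      field_simp
    have hv₂1 : v₂ ⬝ᵥ v₂ = 1 := by
      rw [hv₂def, smul_dotProduct, dotProduct_smul, smul_eq_mul, smul_eq_mul,
        ← hσ₂sq]
      field_simp
    have hw₁v : ∀ x : Fin d → ℝ, (A₁ᵀ.mulVec ξ) ⬝ᵥ x = σ₁ * (v₁ ⬝ᵥ x) := by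
      intro x
      rw [hv₁def, smul_dotProduct, smul_eq_mul, ← mul_assoc,
        mul_inv_cancel₀ hσ₁pos.ne', one_mul]
    have hw₂v : ∀ x : Fin d → ℝ, (A₂ᵀ.mulVec ξ) ⬝ᵥ x = σ₂ * (v₂ ⬝ᵥ x) := by
      intro x
      rw [hv₂def, smul_dotProduct, smul_eq_mul, ← mul_assoc,
        mul_inv_cancel₀ hσ₂pos.ne', one_mul]
    set W₁ : Ω → ℝ := fun ω => v₁ ⬝ᵥ U ω with hW₁def
    set W₂ : Ω → ℝ := fun ω => v₂ ⬝ᵥ U ω with hW₂def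
    have hW₁m : Measurable W₁ := (hdot v₁).comp hUm
    have hW₂m : Measurable W₂ := (hdot v₂).comp hUm
    have hL : Measure.map W₂ μ = Measure.map W₁ μ := law_dot v₂ v₁ hv₂1 hv₁1
    have hprod₁ : Measure.map (fun ω => (W₁ ω, R₁ ω)) μ
        = (Measure.map W₁ μ).prod (Measure.map R₁ μ) :=
      (indepFun_iff_map_prod_eq_prod_map_map hW₁m.aemeasurable hR₁m.aemeasurable).mp
        ((hInd₁.comp measurable_id (hdot v₁)).symm)
    have hprod₂ : Measure.map (fun ω => (W₂ ω, R₂ ω)) μ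
        = (Measure.map W₁ μ).prod (Measure.map R₂ μ) := by
      rw [← hL]
      exact (indepFun_iff_map_prod_eq_prod_map_map hW₂m.aemeasurable hR₂m.aemeasurable).mp
        ((hInd₂.comp measurable_id (hdot v₂)).symm)
    haveI : IsProbabilityMeasure (Measure.map R₁ μ) :=
      Measure.isProbabilityMeasure_map hR₁m.aemeasurable
    haveI : IsProbabilityMeasure (Measure.map R₂ μ) :=
      Measure.isProbabilityMeasure_map hR₂m.aemeasurable
    haveI : IsProbabilityMeasure (Measure.map W₁ μ) :=
      Measure.isProbabilityMeasure_map hW₁m.aemeasurable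
    obtain ⟨T, hT⟩ := hR c hc
    refine ⟨max m₁ (m₂ + σ₂ * max T 0 + 1), fun t ht => ?_⟩
    have htm₁ : m₁ ≤ t := le_trans (le_max_left _ _) ht
    have htm₂ : m₂ + σ₂ * max T 0 + 1 ≤ t := le_trans (le_max_right _ _) ht
    have hσ₂max : 0 ≤ σ₂ * max T 0 := mul_nonneg hσ₂pos.le (le_max_right T 0)
    -- rewrite the two events
    have hset₁ : {ω | t < ∑ i, ξ i * (μ₁ i + R₁ ω * A₁.mulVec (U ω) i)}
        = {ω | t < m₁ + R₁ ω * (σ₁ * W₁ ω)} := by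
      ext ω
      simp only [Set.mem_setOf_eq]
      rw [hsum A₁ μ₁ (R₁ ω) (U ω), hw₁v (U ω)]
    have hset₂ : {ω | t ≤ ∑ i, ξ i * (μ₂ i + R₂ ω * A₂.mulVec (U ω) i)}
        = {ω | t ≤ m₂ + R₂ ω * (σ₂ * W₂ ω)} := by
      ext ω
      simp only [Set.mem_setOf_eq]
      rw [hsum A₂ μ₂ (R₂ ω) (U ω), hw₂v (U ω)]
    rw [hset₁, hset₂]
    -- step A: increase mean and scale
    have stepA : {ω | t < m₁ + R₁ ω * (σ₁ * W₁ ω)} ⊆ {ω | t < m₂ + R₁ ω * (σ₂ * W₁ ω)} := by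
      intro ω hω
      simp only [Set.mem_setOf_eq] at hω ⊢
      have hW : 0 < W₁ ω := by
        by_contra hW
        push_neg at hW
        have : R₁ ω * (σ₁ * W₁ ω) ≤ 0 :=
          mul_nonpos_of_nonneg_of_nonpos (hR₁0 ω)
            (mul_nonpos_of_nonneg_of_nonpos hσ₁pos.le hW)
        linarith
      have : R₁ ω * (σ₁ * W₁ ω) ≤ R₁ ω * (σ₂ * W₁ ω) :=
        mul_le_mul_of_nonneg_left (mul_le_mul_of_nonneg_right hσle hW.le) (hR₁0 ω)
      linarith
    -- step B: product representation
    set s : Set (ℝ × ℝ) := {p | t < m₂ + p.2 * (σ₂ * p.1)} with hsdef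
    set s' : Set (ℝ × ℝ) := {p | t ≤ m₂ + p.2 * (σ₂ * p.1)} with hs'def
    have hsm : MeasurableSet s :=
      measurableSet_lt measurable_const
        (measurable_const.add (measurable_snd.mul (measurable_fst.const_mul σ₂)))
    have hs'm : MeasurableSet s' :=
      measurableSet_le measurable_const
        (measurable_const.add (measurable_snd.mul (measurable_fst.const_mul σ₂)))
    have hB₁ : μ {ω | t < m₂ + R₁ ω * (σ₂ * W₁ ω)}
        = ∫⁻ w, (Measure.map R₁ μ) (Prod.mk w ⁻¹' s) ∂(Measure.map W₁ μ) := by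
      have h0 : {ω | t < m₂ + R₁ ω * (σ₂ * W₁ ω)} = (fun ω => (W₁ ω, R₁ ω)) ⁻¹' s := rfl
      rw [h0, ← Measure.map_apply (hW₁m.prodMk hR₁m) hsm, hprod₁, Measure.prod_apply hsm]
    have hB₂ : μ {ω | t ≤ m₂ + R₂ ω * (σ₂ * W₂ ω)}
        = ∫⁻ w, (Measure.map R₂ μ) (Prod.mk w ⁻¹' s') ∂(Measure.map W₁ μ) := by
      have h0 : {ω | t ≤ m₂ + R₂ ω * (σ₂ * W₂ ω)} = (fun ω => (W₂ ω, R₂ ω)) ⁻¹' s' := rfl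
      rw [h0, ← Measure.map_apply (hW₂m.prodMk hR₂m) hs'm, hprod₂, Measure.prod_apply hs'm]
    -- step C: a.e. bound |W| ≤ 1
    have hae : ∀ᵐ w ∂(Measure.map W₁ μ), w ≤ 1 := by
      rw [ae_map_iff hW₁m.aemeasurable (measurableSet_Iic : MeasurableSet {w : ℝ | w ≤ 1})]
      filter_upwards [hUnorm] with ω hωn
      have hCS := Finset.sum_mul_sq_le_sq_mul_sq Finset.univ v₁ (U ω)
      have hv : ∑ i, v₁ i ^ 2 = (1 : ℝ) := by
        have : ∑ i, v₁ i ^ 2 = v₁ ⬝ᵥ v₁ := by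
          simp [dotProduct, sq]
        rw [this, hv₁1]
      rw [hv, hωn, one_mul] at hCS
      have : W₁ ω = ∑ i, v₁ i * U ω i := rfl
      rw [this]
      nlinarith [hCS]
    -- step D: slice-wise comparison
    have hslice : ∀ w : ℝ, w ≤ 1 →
        (Measure.map R₁ μ) (Prod.mk w ⁻¹' s)
          ≤ ENNReal.ofReal c * (Measure.map R₂ μ) (Prod.mk w ⁻¹' s') := by
      intro w hw1
      have hpre₁ : Prod.mk w ⁻¹' s = {r : ℝ | t < m₂ + r * (σ₂ * w)} := rfl
      have hpre₂ : Prod.mk w ⁻¹' s' = {r : ℝ | t ≤ m₂ + r * (σ₂ * w)} := rfl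
      have hm₁s : MeasurableSet {r : ℝ | t < m₂ + r * (σ₂ * w)} :=
        measurableSet_lt measurable_const
          (measurable_const.add (measurable_id.mul_const _))
      have hm₂s : MeasurableSet {r : ℝ | t ≤ m₂ + r * (σ₂ * w)} :=
        measurableSet_le measurable_const
          (measurable_const.add (measurable_id.mul_const _))
      have e₁ : (Measure.map R₁ μ) {r : ℝ | t < m₂ + r * (σ₂ * w)}
          = μ {ω | t < m₂ + R₁ ω * (σ₂ * w)} := by
        rw [Measure.map_apply hR₁m hm₁s]; rfl
      have e₂ : (Measure.map R₂ μ) {r : ℝ | t ≤ m₂ + r * (σ₂ * w)}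
          = μ {ω | t ≤ m₂ + R₂ ω * (σ₂ * w)} := by
        rw [Measure.map_apply hR₂m hm₂s]; rfl
      rw [hpre₁, hpre₂, e₁, e₂]
      rcases le_or_gt w 0 with hw0 | hw0
      · have hempty : {ω | t < m₂ + R₁ ω * (σ₂ * w)} = (∅ : Set Ω) := by
          ext ω
          simp only [Set.mem_setOf_eq, Set.mem_empty_iff_false, iff_false, not_lt]
          have : R₁ ω * (σ₂ * w) ≤ 0 :=
            mul_nonpos_of_nonneg_of_nonpos (hR₁0 ω)
              (mul_nonpos_of_nonneg_of_nonpos hσ₂pos.le hw0)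
          linarith
        rw [hempty]
        simp
      · have hσw : 0 < σ₂ * w := mul_pos hσ₂pos hw0
        set u₀ : ℝ := (t - m₂) / (σ₂ * w) with hu₀def
        have hTu : T ≤ u₀ := by
          rw [hu₀def, le_div_iff₀ hσw]
          have h1 : T * (σ₂ * w) ≤ max T 0 * (σ₂ * w) :=
            mul_le_mul_of_nonneg_right (le_max_left T 0) hσw.le
          have h2 : max T 0 * (σ₂ * w) ≤ max T 0 * σ₂ := by
            nlinarith [le_max_right T 0, hσ₂pos.le]
          nlinarith
        have hs₁ : {ω | t < m₂ + R₁ ω * (σ₂ * w)} = {ω | u₀ < R₁ ω} := by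
          ext ω
          simp only [Set.mem_setOf_eq, hu₀def]
          rw [div_lt_iff₀ hσw]
          constructor <;> intro h <;> linarith
        have hs₂ : {ω | t ≤ m₂ + R₂ ω * (σ₂ * w)} = {ω | u₀ ≤ R₂ ω} := by
          ext ω
          simp only [Set.mem_setOf_eq, hu₀def]
          rw [div_le_iff₀ hσw]
          constructor <;> intro h <;> linarith
        rw [hs₁, hs₂]
        exact hT u₀ hTu
    calc μ {ω | t < m₁ + R₁ ω * (σ₁ * W₁ ω)}
        ≤ μ {ω | t < m₂ + R₁ ω * (σ₂ * W₁ ω)} := measure_mono stepA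
      _ = ∫⁻ w, (Measure.map R₁ μ) (Prod.mk w ⁻¹' s) ∂(Measure.map W₁ μ) := hB₁
      _ ≤ ∫⁻ w, ENNReal.ofReal c * (Measure.map R₂ μ) (Prod.mk w ⁻¹' s')
            ∂(Measure.map W₁ μ) :=
          lintegral_mono_ae (hae.mono fun w hw => hslice w hw)
      _ = ENNReal.ofReal c
            * ∫⁻ w, (Measure.map R₂ μ) (Prod.mk w ⁻¹' s') ∂(Measure.map W₁ μ) :=
          lintegral_const_mul' _ _ ENNReal.ofReal_ne_top
      _ = ENNReal.ofReal c * μ {ω | t ≤ m₂ + R₂ ω * (σ₂ * W₂ ω)} := by rw [hB₂]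
end

section
/- Let X and Y be ℝ^d-valued random vectors with P(‖X‖₁ > t) > 0 and P(‖Y‖₁ > t) > 0 for all t. Assume that for every ξ in the unit simplex Σ^d the limits γ_ξ(X) := lim_{t→∞} P(ξᵀX > t)/P(‖X‖₁ > t) ∈ [0,∞) and γ_ξ(Y) := lim_{t→∞} P(ξᵀY > t)/P(‖Y‖₁ > t) ∈ (0,∞) exist, with γ_ξ(Y) > 0 for all ξ. If lim_{t→∞} P(‖X‖₁ > t)/P(‖Y‖₁ > t) = 0, then X ≼apl Y. -/
open MeasureTheory ProbabilityTheory Filter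

theorem apl_of_negligible_norm_tail
    {Ω : Type*} [MeasurableSpace Ω] (μ : Measure Ω) [IsProbabilityMeasure μ]
    {d : ℕ} (X Y : Ω → Fin d → ℝ)
    (hX : ∀ t : ℝ, 0 < μ {ω | t < ∑ i, |X ω i|})
    (hY : ∀ t : ℝ, 0 < μ {ω | t < ∑ i, |Y ω i|})
    (γX γY : (Fin d → ℝ) → ℝ)
    (hγX : ∀ ξ ∈ stdSimplex ℝ (Fin d), 0 ≤ γX ξ ∧
      Tendsto (fun t : ℝ =>
          (μ {ω | t < ∑ i, ξ i * X ω i}).toReal / (μ {ω | t < ∑ i, |X ω i|}).toReal)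
        atTop (nhds (γX ξ)))
    (hγY : ∀ ξ ∈ stdSimplex ℝ (Fin d), 0 < γY ξ ∧
      Tendsto (fun t : ℝ =>
          (μ {ω | t < ∑ i, ξ i * Y ω i}).toReal / (μ {ω | t < ∑ i, |Y ω i|}).toReal)
        atTop (nhds (γY ξ)))
    (hratio : Tendsto (fun t : ℝ =>
        (μ {ω | t < ∑ i, |X ω i|}).toReal / (μ {ω | t < ∑ i, |Y ω i|}).toReal)
      atTop (nhds 0)) :
    AplVec μ X Y := by
  intro ξ hξ c hc
  set a : ℝ → ℝ := fun t => (μ {ω | t < ∑ i, ξ i * X ω i}).toReal with ha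
  set b : ℝ → ℝ := fun t => (μ {ω | t < ∑ i, |X ω i|}).toReal with hb
  set e : ℝ → ℝ := fun t => (μ {ω | t < ∑ i, |Y ω i|}).toReal with he
  set v : ℝ → ℝ := fun t => (μ {ω | t < ∑ i, ξ i * Y ω i}).toReal with hv
  have hbpos : ∀ t, 0 < b t := fun t =>
    ENNReal.toReal_pos (hX t).ne' (measure_ne_top μ _)
  have hepos : ∀ t, 0 < e t := fun t =>
    ENNReal.toReal_pos (hY t).ne' (measure_ne_top μ _)
  obtain ⟨hγX0, hγXt⟩ := hγX ξ hξ
  obtain ⟨hγY0, hγYt⟩ := hγY ξ hξ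
  have h1 : Tendsto (fun t => a t / e t) atTop (nhds 0) := by
    have h := hγXt.mul hratio
    rw [mul_zero] at h
    refine h.congr fun t => ?_
    show a t / b t * (b t / e t) = a t / e t
    rw [div_mul_div_comm, mul_comm (a t) (b t), mul_div_mul_left _ _ (hbpos t).ne']
  have h2 : Tendsto (fun t => a t / v t) atTop (nhds 0) := by
    have h := Tendsto.div h1 hγYt hγY0.ne'
    rw [zero_div] at h
    refine h.congr fun t => ?_
    show a t / e t / (v t / e t) = a t / v t
    exact div_div_div_cancel_right₀ (hepos t).ne' _ _
  have hev1 : ∀ᶠ t in atTop, a t / v t < 1 := h2.eventually (eventually_lt_nhds one_pos)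
  have hev2 : ∀ᶠ t in atTop, 0 < v t / e t := hγYt.eventually (eventually_gt_nhds hγY0)
  obtain ⟨T, hT⟩ := eventually_atTop.mp (hev1.and hev2)
  refine ⟨T, fun t ht => ?_⟩
  obtain ⟨h1', h2'⟩ := hT t ht
  have hvpos : 0 < v t := by
    rcases div_pos_iff.mp h2' with ⟨h, _⟩ | ⟨_, h⟩
    · exact h
    · exact absurd h (not_lt.mpr (hepos t).le)
  have hav : a t ≤ v t := ((div_lt_one hvpos).mp h1').le
  have hle : μ {ω | t < ∑ i, ξ i * X ω i} ≤ μ {ω | t < ∑ i, ξ i * Y ω i} :=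
    (ENNReal.toReal_le_toReal (measure_ne_top μ _) (measure_ne_top μ _)).mp hav
  calc μ {ω | t < ∑ i, ξ i * X ω i}
      ≤ μ {ω | t ≤ ∑ i, ξ i * Y ω i} :=
        hle.trans (measure_mono fun ω (h : t < _) => le_of_lt h)
    _ ≤ ENNReal.ofReal c * μ {ω | t ≤ ∑ i, ξ i * Y ω i} := by
        refine le_mul_of_one_le_left zero_le ?_
        rw [← ENNReal.ofReal_one]
        exact ENNReal.ofReal_le_ofReal hc.le
end

section
/- Let X and Y be ℝ^d-valued random vectors such that ‖X‖₁ is regularly varying with tail index α_X > 0 and ‖Y‖₁ is regularly varying with tail index α_Y > 0, where α_X > α_Y. Assume that for every ξ in the unit simplex Σ^d the limits γ_ξ(X) := lim_{t→∞} P(ξᵀX > t)/P(‖X‖₁ > t) ∈ [0,∞) and γ_ξ(Y) := lim_{t→∞} P(ξᵀY > t)/P(‖Y‖₁ > t) ∈ (0,∞) exist, with γ_ξ(Y) > 0 for all ξ. Then X ≼apl Y. -/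
open MeasureTheory ProbabilityTheory Filter

/-- A real random variable `R` is regularly varying with tail index `α > 0`:
`P(R > t) > 0` for all `t` and `P(R > tx)/P(R > t) → x^{-α}` as `t → ∞`, for all `x > 0`. -/
def RegVarying {Ω : Type*} [MeasurableSpace Ω] (μ : Measure Ω) (R : Ω → ℝ) (α : ℝ) : Prop :=
  (∀ t : ℝ, 0 < μ {ω | t < R ω}) ∧
  ∀ x : ℝ, 0 < x →
    Tendsto (fun t : ℝ => (μ {ω | t * x < R ω}).toReal / (μ {ω | t < R ω}).toReal)
      atTop (nhds (x ^ (-α)))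

/-- If `f, g` are positive nonincreasing functions and along scaling by `x > 1` the
ratios tend to limits `a < b` with `b > 0`, then `f t / g t → 0`. -/
lemma ratio_tendsto_zero {f g : ℝ → ℝ}
    (hf_pos : ∀ t, 0 < f t) (hg_pos : ∀ t, 0 < g t)
    (hf_anti : ∀ s t : ℝ, s ≤ t → f t ≤ f s) (hg_anti : ∀ s t : ℝ, s ≤ t → g t ≤ g s)
    {x a b : ℝ} (hx : 1 < x) (hb : 0 < b) (hab : a < b)
    (hfa : Tendsto (fun t => f (t * x) / f t) atTop (nhds a))
    (hgb : Tendsto (fun t => g (t * x) / g t) atTop (nhds b)) :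
    Tendsto (fun t => f t / g t) atTop (nhds 0) := by
  have ha0 : 0 ≤ a := ge_of_tendsto hfa (Eventually.of_forall fun t =>
    div_nonneg (hf_pos _).le (hf_pos _).le)
  set δ := (b - a) / 3 with hδ
  have hδ0 : 0 < δ := by rw [hδ]; linarith
  set σ := b - δ with hσ
  have hσ0 : 0 < σ := by rw [hσ, hδ]; linarith
  have haδ0 : 0 ≤ a + δ := by linarith
  have hρlt : a + δ < σ := by rw [hσ, hδ]; linarith
  set ρ := (a + δ) / σ with hρ
  have hρ0 : 0 ≤ ρ := div_nonneg haδ0 hσ0.le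
  have hρ1 : ρ < 1 := (div_lt_one hσ0).2 hρlt
  have hf_ev : ∀ᶠ t in atTop, f (t * x) < (a + δ) * f t :=
    (hfa.eventually (gt_mem_nhds (by linarith : a < a + δ))).mono fun t ht =>
      (div_lt_iff₀ (hf_pos t)).1 ht
  have hg_ev : ∀ᶠ t in atTop, σ * g t < g (t * x) :=
    (hgb.eventually (lt_mem_nhds (by linarith : σ < b))).mono fun t ht =>
      (lt_div_iff₀ (hg_pos t)).1 ht
  obtain ⟨T₀, hT₀⟩ := eventually_atTop.1 (hf_ev.and hg_ev)
  set T := max 1 T₀ with hTdef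
  have hT1 : (1:ℝ) ≤ T := le_max_left _ _
  have hT0 : (0:ℝ) < T := lt_of_lt_of_le one_pos hT1
  have hx0 : (0:ℝ) < x := lt_trans one_pos hx
  have hT : ∀ t : ℝ, T ≤ t → f (t * x) < (a + δ) * f t ∧ σ * g t < g (t * x) :=
    fun t ht => hT₀ t (le_trans (le_max_right _ _) ht)
  have hTxn : ∀ n : ℕ, T ≤ T * x ^ n := fun n =>
    le_mul_of_one_le_right hT0.le (one_le_pow₀ hx.le)
  have hfn : ∀ n : ℕ, f (T * x ^ n) ≤ (a + δ) ^ n * f T := by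
    intro n
    induction n with
    | zero => simp
    | succ n ih =>
      have h1 : T * x ^ (n + 1) = (T * x ^ n) * x := by ring
      have h2 := (hT _ (hTxn n)).1
      calc f (T * x ^ (n + 1)) = f ((T * x ^ n) * x) := by rw [h1]
        _ ≤ (a + δ) * f (T * x ^ n) := h2.le
        _ ≤ (a + δ) * ((a + δ) ^ n * f T) := mul_le_mul_of_nonneg_left ih haδ0
        _ = (a + δ) ^ (n + 1) * f T := by ring
  have hgn : ∀ n : ℕ, σ ^ n * g T ≤ g (T * x ^ n) := by
    intro n
    induction n with
    | zero => simp
    | succ n ih =>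
      have h1 : T * x ^ (n + 1) = (T * x ^ n) * x := by ring
      have h2 := (hT _ (hTxn n)).2
      calc σ ^ (n + 1) * g T = σ * (σ ^ n * g T) := by ring
        _ ≤ σ * g (T * x ^ n) := mul_le_mul_of_nonneg_left ih hσ0.le
        _ ≤ g ((T * x ^ n) * x) := h2.le
        _ = g (T * x ^ (n + 1)) := by rw [h1]
  rw [Metric.tendsto_atTop]
  intro ε hε
  set C := f T / (σ * g T) with hC
  have hC0 : 0 < C := div_pos (hf_pos T) (mul_pos hσ0 (hg_pos T))
  obtain ⟨N, hN⟩ := eventually_atTop.1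
    ((tendsto_pow_atTop_nhds_zero_of_lt_one hρ0 hρ1).eventually
      (gt_mem_nhds (div_pos hε hC0)))
  have hN' : ρ ^ N * C < ε := (lt_div_iff₀ hC0).1 (hN N le_rfl)
  refine ⟨T * x ^ N, fun t ht => ?_⟩
  have htT : T ≤ t := le_trans (hTxn N) ht
  have hex : ∃ n : ℕ, t < T * x ^ n := by
    obtain ⟨n, hn⟩ := pow_unbounded_of_one_lt (t / T) hx
    exact ⟨n, by rw [mul_comm]; rwa [div_lt_iff₀ hT0] at hn⟩
  have hm₀ := Nat.find_spec hex
  have hm₀0 : Nat.find hex ≠ 0 := by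
    intro h
    have := hm₀
    rw [h, pow_zero, mul_one] at this
    linarith
  obtain ⟨m, hm⟩ : ∃ m : ℕ, Nat.find hex = m + 1 :=
    ⟨Nat.find hex - 1, (Nat.succ_pred_eq_of_pos (Nat.pos_of_ne_zero hm₀0)).symm⟩
  have htup : t < T * x ^ (m + 1) := by rw [← hm]; exact hm₀
  have hml : T * x ^ m ≤ t := le_of_not_gt (Nat.find_min hex (by omega))
  have hNm : N ≤ m := by
    have h1 : T * x ^ N < T * x ^ (m + 1) := lt_of_le_of_lt ht htup
    have h2 : x ^ N < x ^ (m + 1) := (mul_lt_mul_iff_right₀ hT0).1 h1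
    have h3 : N < m + 1 := (pow_lt_pow_iff_right₀ hx).1 h2
    omega
  have hfgt : 0 ≤ f t / g t := div_nonneg (hf_pos t).le (hg_pos t).le
  rw [Real.dist_eq, sub_zero, abs_of_nonneg hfgt]
  have hden_pos : 0 < σ ^ (m + 1) * g T := mul_pos (pow_pos hσ0 _) (hg_pos T)
  calc f t / g t
      ≤ ((a + δ) ^ m * f T) / (σ ^ (m + 1) * g T) := by
        apply div_le_div₀ (mul_nonneg (pow_nonneg haδ0 m) (hf_pos T).le)
          (le_trans (hf_anti _ _ hml) (hfn m)) hden_pos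
          (le_trans (hgn (m + 1)) (hg_anti _ _ htup.le))
    _ = ρ ^ m * C := by
        rw [hρ, hC, div_pow, pow_succ]
        field_simp
    _ ≤ ρ ^ N * C := mul_le_mul_of_nonneg_right
        (pow_le_pow_of_le_one hρ0 hρ1.le hNm) hC0.le
    _ < ε := hN'

theorem apl_of_larger_tail_index
    {Ω : Type*} [MeasurableSpace Ω] (μ : Measure Ω) [IsProbabilityMeasure μ]
    {d : ℕ} (X Y : Ω → Fin d → ℝ) (αX αY : ℝ) (hαY : 0 < αY) (hαXY : αY < αX)
    (hX : RegVarying μ (fun ω => ∑ i, |X ω i|) αX)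
    (hY : RegVarying μ (fun ω => ∑ i, |Y ω i|) αY)
    (γX γY : (Fin d → ℝ) → ℝ)
    (hγX : ∀ ξ ∈ stdSimplex ℝ (Fin d), 0 ≤ γX ξ ∧
      Tendsto (fun t : ℝ =>
          (μ {ω | t < ∑ i, ξ i * X ω i}).toReal / (μ {ω | t < ∑ i, |X ω i|}).toReal)
        atTop (nhds (γX ξ)))
    (hγY : ∀ ξ ∈ stdSimplex ℝ (Fin d), 0 < γY ξ ∧
      Tendsto (fun t : ℝ =>
          (μ {ω | t < ∑ i, ξ i * Y ω i}).toReal / (μ {ω | t < ∑ i, |Y ω i|}).toReal)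
        atTop (nhds (γY ξ))) :
    AplVec μ X Y := by
  intro ξ hξ c hc
  have hc0 : (0:ℝ) < c := lt_trans one_pos hc
  set f : ℝ → ℝ := fun t => (μ {ω | t < ∑ i, |X ω i|}).toReal with hfdef
  set g : ℝ → ℝ := fun t => (μ {ω | t < ∑ i, |Y ω i|}).toReal with hgdef
  have hfpos : ∀ t, 0 < f t := fun t =>
    ENNReal.toReal_pos (hX.1 t).ne' (measure_ne_top μ _)
  have hgpos : ∀ t, 0 < g t := fun t =>
    ENNReal.toReal_pos (hY.1 t).ne' (measure_ne_top μ _)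
  have hfanti : ∀ s t : ℝ, s ≤ t → f t ≤ f s := fun s t hst =>
    (ENNReal.toReal_le_toReal (measure_ne_top μ _) (measure_ne_top μ _)).2
      (measure_mono fun ω hω => lt_of_le_of_lt hst hω)
  have hganti : ∀ s t : ℝ, s ≤ t → g t ≤ g s := fun s t hst =>
    (ENNReal.toReal_le_toReal (measure_ne_top μ _) (measure_ne_top μ _)).2
      (measure_mono fun ω hω => lt_of_le_of_lt hst hω)
  have hab : (2:ℝ) ^ (-αX) < (2:ℝ) ^ (-αY) :=
    (Real.rpow_lt_rpow_left_iff one_lt_two).2 (by linarith)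
  have hb : (0:ℝ) < (2:ℝ) ^ (-αY) := Real.rpow_pos_of_pos two_pos _
  have hfg0 : Tendsto (fun t => f t / g t) atTop (nhds 0) :=
    ratio_tendsto_zero hfpos hgpos hfanti hganti one_lt_two hb hab
      (hX.2 2 two_pos) (hY.2 2 two_pos)
  obtain ⟨hγX0, hγXt⟩ := hγX ξ hξ
  obtain ⟨hγY0, hγYt⟩ := hγY ξ hξ
  set pX : ℝ → ℝ := fun t => (μ {ω | t < ∑ i, ξ i * X ω i}).toReal with hpXdef
  set pY : ℝ → ℝ := fun t => (μ {ω | t < ∑ i, ξ i * Y ω i}).toReal with hpYdef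
  have hpXg : Tendsto (fun t => pX t / g t) atTop (nhds 0) := by
    have h := hγXt.mul hfg0
    rw [mul_zero] at h
    refine h.congr fun t => ?_
    rw [div_mul_div_comm, mul_comm (f t) (g t),
      mul_div_mul_right _ _ (hfpos t).ne']
  have hε1 : 0 < c * γY ξ / 2 := by positivity
  have E1 : ∀ᶠ t in atTop, pX t / g t < c * γY ξ / 2 :=
    hpXg.eventually (gt_mem_nhds hε1)
  have E2 : ∀ᶠ t in atTop, γY ξ / 2 < pY t / g t :=
    hγYt.eventually (lt_mem_nhds (by linarith))
  obtain ⟨T, hT⟩ := eventually_atTop.1 (E1.and E2)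
  refine ⟨T, fun t ht => ?_⟩
  obtain ⟨h1, h2⟩ := hT t ht
  have hgt := hgpos t
  have hX_le : pX t ≤ c * pY t := by
    have b1 : pX t < (c * γY ξ / 2) * g t := (div_lt_iff₀ hgt).1 h1
    have b2 : (γY ξ / 2) * g t < pY t := (lt_div_iff₀ hgt).1 h2
    nlinarith [mul_lt_mul_of_pos_left b2 hc0]
  have hmono : μ {ω | t < ∑ i, ξ i * Y ω i} ≤ μ {ω | t ≤ ∑ i, ξ i * Y ω i} :=
    measure_mono (Set.setOf_subset_setOf.2 fun ω h => le_of_lt h)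
  calc μ {ω | t < ∑ i, ξ i * X ω i}
      = ENNReal.ofReal (pX t) := (ENNReal.ofReal_toReal (measure_ne_top μ _)).symm
    _ ≤ ENNReal.ofReal (c * pY t) := ENNReal.ofReal_le_ofReal hX_le
    _ = ENNReal.ofReal c * ENNReal.ofReal (pY t) := ENNReal.ofReal_mul hc0.le
    _ = ENNReal.ofReal c * μ {ω | t < ∑ i, ξ i * Y ω i} := by
        rw [hpYdef, ENNReal.ofReal_toReal (measure_ne_top μ _)]
    _ ≤ ENNReal.ofReal c * μ {ω | t ≤ ∑ i, ξ i * Y ω i} := mul_le_mul_right hmono _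
end

section
/- Let X and Y be ℝ^d-valued random vectors with P(|X⁽¹⁾| > t) > 0 and P(|Y⁽¹⁾| > t) > 0 for all t, where X⁽¹⁾, Y⁽¹⁾ denote the first components. Assume that for every ξ in the unit simplex Σ^d the limits a_ξ := lim_{t→∞} P(ξᵀX > t)/P(|X⁽¹⁾| > t) ∈ [0,∞) and b_ξ := lim_{t→∞} P(ξᵀY > t)/P(|Y⁽¹⁾| > t) ∈ (0,∞) exist. If limsup_{t→∞} P(|X⁽¹⁾| > t)/P(|Y⁽¹⁾| > t) ≤ 1 and a_ξ ≤ b_ξ for all ξ ∈ Σ^d, then X ≼apl Y. -/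
open MeasureTheory ProbabilityTheory Filter
open scoped ENNReal

theorem apl_of_spectral_order
    {Ω : Type*} [MeasurableSpace Ω] (μ : Measure Ω) [IsProbabilityMeasure μ]
    {d : ℕ} [NeZero d] (X Y : Ω → Fin d → ℝ)
    (hX : ∀ t : ℝ, 0 < μ {ω | t < |X ω 0|})
    (hY : ∀ t : ℝ, 0 < μ {ω | t < |Y ω 0|})
    (a b : (Fin d → ℝ) → ℝ)
    (ha : ∀ ξ ∈ stdSimplex ℝ (Fin d), 0 ≤ a ξ ∧
      Tendsto (fun t : ℝ =>
          (μ {ω | t < ∑ i, ξ i * X ω i}).toReal / (μ {ω | t < |X ω 0|}).toReal)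
        atTop (nhds (a ξ)))
    (hb : ∀ ξ ∈ stdSimplex ℝ (Fin d), 0 < b ξ ∧
      Tendsto (fun t : ℝ =>
          (μ {ω | t < ∑ i, ξ i * Y ω i}).toReal / (μ {ω | t < |Y ω 0|}).toReal)
        atTop (nhds (b ξ)))
    (hmarg : Filter.limsup
        (fun t : ℝ => μ {ω | t < |X ω 0|} / μ {ω | t < |Y ω 0|}) atTop ≤ 1)
    (hab : ∀ ξ ∈ stdSimplex ℝ (Fin d), a ξ ≤ b ξ) :
    AplVec μ X Y := by
  intro ξ hξ c hc
  obtain ⟨ha0, haT⟩ := ha ξ hξ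
  obtain ⟨hb0, hbT⟩ := hb ξ hξ
  have hab' := hab ξ hξ
  set ε : ℝ := min (b ξ / 2) ((c - 1) * b ξ / (2 * (1 + c))) with hεdef
  have hc0 : (0:ℝ) < c := by linarith
  have hε : 0 < ε := by
    apply lt_min (by linarith)
    apply div_pos (by nlinarith) (by linarith)
  have hεb : ε ≤ b ξ / 2 := min_le_left _ _
  have hε2 : (1 + c) * ε ≤ (c - 1) * b ξ / 2 := by
    calc (1 + c) * ε ≤ (1 + c) * ((c - 1) * b ξ / (2 * (1 + c))) := by
          apply mul_le_mul_of_nonneg_left _ (by linarith)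
          exact min_le_right _ _
      _ = (c - 1) * b ξ / 2 := by field_simp
    
  have hkey : a ξ + ε < c * (b ξ - ε) := by nlinarith
  have haε : 0 < a ξ + ε := by linarith
  have hbε : 0 < b ξ - ε := by linarith
  set K : ℝ := c * (b ξ - ε) / (a ξ + ε) with hKdef
  have hK1 : 1 < K := by rw [lt_div_iff₀ haε]; linarith
  have hK0 : 0 < K := by linarith
  -- eventual bounds
  have e1 : ∀ᶠ t in (atTop : Filter ℝ),
      (μ {ω | t < ∑ i, ξ i * X ω i}).toReal / (μ {ω | t < |X ω 0|}).toReal < a ξ + ε :=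
    haT.eventually (gt_mem_nhds (by linarith))
  have e2 : ∀ᶠ t in (atTop : Filter ℝ),
      b ξ - ε < (μ {ω | t < ∑ i, ξ i * Y ω i}).toReal / (μ {ω | t < |Y ω 0|}).toReal :=
    hbT.eventually (lt_mem_nhds (by linarith))
  have h1K : (1 : ℝ≥0∞) < ENNReal.ofReal K := by
    rw [show (1:ℝ≥0∞) = ENNReal.ofReal 1 by simp]
    exact (ENNReal.ofReal_lt_ofReal_iff hK0).2 hK1
  have e3 : ∀ᶠ t in (atTop : Filter ℝ),
      μ {ω | t < |X ω 0|} / μ {ω | t < |Y ω 0|} < ENNReal.ofReal K :=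
    Filter.eventually_lt_of_limsup_lt (lt_of_le_of_lt hmarg h1K)
  obtain ⟨T, hT⟩ := Filter.eventually_atTop.1 ((e1.and e2).and e3)
  refine ⟨T, fun t ht => ?_⟩
  obtain ⟨⟨h1, h2⟩, h3⟩ := hT t ht
  set f := μ {ω | t < ∑ i, ξ i * X ω i}
  set g := μ {ω | t < |X ω 0|}
  set F := μ {ω | t < ∑ i, ξ i * Y ω i}
  set G := μ {ω | t < |Y ω 0|}
  have hgne : g ≠ ⊤ := measure_ne_top μ _
  have hGne : G ≠ ⊤ := measure_ne_top μ _
  have hfne : f ≠ ⊤ := measure_ne_top μ _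
  have hFne : F ≠ ⊤ := measure_ne_top μ _
  have hgpos : 0 < g.toReal := ENNReal.toReal_pos (hX t).ne' hgne
  have hGpos : 0 < G.toReal := ENNReal.toReal_pos (hY t).ne' hGne
  -- f.toReal < (a+ε) * g.toReal
  have hf : f.toReal < (a ξ + ε) * g.toReal := (div_lt_iff₀ hgpos).1 h1
  -- g.toReal ≤ K * G.toReal
  have hg : g.toReal ≤ K * G.toReal := by
    have : g < ENNReal.ofReal K * G := by
      rwa [ENNReal.div_lt_iff (Or.inl (hY t).ne') (Or.inl hGne)] at h3
    have := (ENNReal.toReal_le_toReal hgne (by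
      exact ENNReal.mul_ne_top ENNReal.ofReal_ne_top hGne)).2 this.le
    rwa [ENNReal.toReal_mul, ENNReal.toReal_ofReal hK0.le] at this
  -- (b-ε) * G.toReal < F.toReal
  have hF : (b ξ - ε) * G.toReal < F.toReal := by
    have := (lt_div_iff₀ hGpos).1 h2
    linarith
  have hchain : f.toReal ≤ c * F.toReal := by
    have h4 : (a ξ + ε) * (K * G.toReal) = c * ((b ξ - ε) * G.toReal) := by
      rw [hKdef]; field_simp
    have h5 : f.toReal < (a ξ + ε) * (K * G.toReal) := by
      calc f.toReal < (a ξ + ε) * g.toReal := hf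
        _ ≤ (a ξ + ε) * (K * G.toReal) := by
            exact mul_le_mul_of_nonneg_left hg haε.le
    have h6 : c * ((b ξ - ε) * G.toReal) ≤ c * F.toReal :=
      mul_le_mul_of_nonneg_left hF.le hc0.le
    linarith [h4 ▸ h5]
  have hfF : f ≤ ENNReal.ofReal c * F := by
    calc f = ENNReal.ofReal f.toReal := (ENNReal.ofReal_toReal hfne).symm
      _ ≤ ENNReal.ofReal (c * F.toReal) := ENNReal.ofReal_le_ofReal hchain
      _ = ENNReal.ofReal c * ENNReal.ofReal F.toReal := ENNReal.ofReal_mul hc0.le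
      _ = ENNReal.ofReal c * F := by rw [ENNReal.ofReal_toReal hFne]
  exact hfF.trans (mul_le_mul_right
    (measure_mono (Set.setOf_subset_setOf.2 fun ω h => h.le)) _)
end

section
/- Let Ψ be a measure on the unit simplex Σ^d ⊂ ℝ^d satisfying the canonical normalization ∫_{Σ^d} s⁽ⁱ⁾ dΨ(s) = 1 for every coordinate i = 1,…,d (so Ψ(Σ^d) = d). Then for every α ≥ 1 and every ξ ∈ Σ^d, Σᵢ₌₁^d (ξ⁽ⁱ⁾)^α ≤ ∫_{Σ^d} (Σᵢ₌₁^d ξ⁽ⁱ⁾·(s⁽ⁱ⁾)^{1/α})^α dΨ(s) ≤ 1. (The lower bound is attained by the canonical spectral measure Ψ*₀ = Σᵢ δ_{eᵢ} of asymptotic independence and the upper bound by Ψ*₁ = d·δ_{(1/d,…,1/d)} of asymptotic comonotonicity; thus Ψ*₀ ≼_{G,α} Ψ ≼_{G,α} Ψ*₁ for α ≥ 1.) -/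
open MeasureTheory Filter
open scoped ENNReal

lemma sum_rpow_le_rpow_sum' {ι : Type*} (s : Finset ι) (f : ι → ℝ)
    (hf : ∀ i ∈ s, 0 ≤ f i) {p : ℝ} (hp : 1 ≤ p) :
    ∑ i ∈ s, f i ^ p ≤ (∑ i ∈ s, f i) ^ p := by
  have hS : 0 ≤ ∑ i ∈ s, f i := Finset.sum_nonneg hf
  rcases eq_or_lt_of_le hS with h0 | h0
  · have : ∀ i ∈ s, f i = 0 := by
      intro i hi
      exact le_antisymm (by
        have := Finset.single_le_sum hf hi
        linarith) (hf i hi)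
    rw [← h0]
    calc ∑ i ∈ s, f i ^ p = ∑ i ∈ s, (0:ℝ) := by
          refine Finset.sum_congr rfl fun i hi => ?_
          rw [this i hi, Real.zero_rpow (by linarith : p ≠ 0)]
      _ = 0 := Finset.sum_const_zero
      _ ≤ (0:ℝ) ^ p := (Real.rpow_nonneg le_rfl p)
  · have key : ∀ i ∈ s, f i ^ p ≤ (∑ j ∈ s, f j) ^ (p - 1) * f i := by
      intro i hi
      have hfi := hf i hi
      have hle : f i ≤ ∑ j ∈ s, f j := Finset.single_le_sum hf hi
      calc f i ^ p = f i ^ (p - 1) * f i := by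
            rw [← Real.rpow_add_one' hfi (by linarith)]; ring_nf
        _ ≤ (∑ j ∈ s, f j) ^ (p - 1) * f i :=
            mul_le_mul_of_nonneg_right
              (Real.rpow_le_rpow hfi hle (by linarith)) hfi
    calc ∑ i ∈ s, f i ^ p ≤ ∑ i ∈ s, (∑ j ∈ s, f j) ^ (p - 1) * f i :=
          Finset.sum_le_sum key
      _ = (∑ j ∈ s, f j) ^ (p - 1) * ∑ i ∈ s, f i := by rw [← Finset.mul_sum]
      _ = (∑ j ∈ s, f j) ^ p := by
          rw [← Real.rpow_add_one' hS (by linarith)]; ring_nf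

theorem spectral_bounds_of_alpha_ge_one
    {d : ℕ} (Ψ : Measure {s : Fin d → ℝ // s ∈ stdSimplex ℝ (Fin d)})
    (hnorm : ∀ i : Fin d, ∫⁻ s, ENNReal.ofReal (s.val i) ∂Ψ = 1)
    (α : ℝ) (hα : 1 ≤ α) (ξ : Fin d → ℝ) (hξ : ξ ∈ stdSimplex ℝ (Fin d)) :
    ENNReal.ofReal (∑ i, ξ i ^ α) ≤
        ∫⁻ s, ENNReal.ofReal ((∑ i, ξ i * s.val i ^ (1 / α)) ^ α) ∂Ψ ∧
      ∫⁻ s, ENNReal.ofReal ((∑ i, ξ i * s.val i ^ (1 / α)) ^ α) ∂Ψ ≤ 1 := by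
  have hα0 : (0:ℝ) < α := lt_of_lt_of_le one_pos hα
  obtain ⟨hξ0, hξ1⟩ := hξ
  have hmeas : ∀ i : Fin d,
      Measurable (fun s : {s : Fin d → ℝ // s ∈ stdSimplex ℝ (Fin d)} =>
        ENNReal.ofReal (s.val i)) := fun i =>
    ENNReal.measurable_ofReal.comp ((measurable_pi_apply i).comp measurable_subtype_coe)
  constructor
  · -- lower bound
    have hpt : ∀ s : {s : Fin d → ℝ // s ∈ stdSimplex ℝ (Fin d)},
        ∑ i, ξ i ^ α * s.val i ≤ (∑ i, ξ i * s.val i ^ (1 / α)) ^ α := by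
      intro s
      obtain ⟨hs0, _⟩ := s.2
      have := sum_rpow_le_rpow_sum' Finset.univ (fun i => ξ i * s.val i ^ (1 / α))
        (fun i _ => mul_nonneg (hξ0 i) (Real.rpow_nonneg (hs0 i) _)) hα
      have hss : ∀ i : Fin d, (s.val i ^ (1 / α)) ^ α = s.val i := by
        intro i
        rw [← Real.rpow_mul (hs0 i), one_div, inv_mul_cancel₀ (ne_of_gt hα0),
          Real.rpow_one]
      simp only [Real.mul_rpow (hξ0 _) (Real.rpow_nonneg (hs0 _) _), hss] at this
      exact this
    calc ENNReal.ofReal (∑ i, ξ i ^ α)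
        = ∑ i : Fin d, ENNReal.ofReal (ξ i ^ α) * 1 := by
          simp only [mul_one]
          rw [ENNReal.ofReal_sum_of_nonneg (fun i _ => Real.rpow_nonneg (hξ0 i) α)]
      _ = ∑ i : Fin d, ENNReal.ofReal (ξ i ^ α) * ∫⁻ s, ENNReal.ofReal (s.val i) ∂Ψ := by
          simp_rw [hnorm]
      _ = ∫⁻ s, ∑ i : Fin d, ENNReal.ofReal (ξ i ^ α) * ENNReal.ofReal (s.val i) ∂Ψ := by
          rw [lintegral_finset_sum]
          · simp_rw [lintegral_const_mul _ (hmeas _)]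
          · exact fun i _ => (measurable_const.mul (hmeas i))
      _ ≤ ∫⁻ s, ENNReal.ofReal ((∑ i, ξ i * s.val i ^ (1 / α)) ^ α) ∂Ψ := by
          refine lintegral_mono fun s => ?_
          obtain ⟨hs0, _⟩ := s.2
          calc ∑ i : Fin d, ENNReal.ofReal (ξ i ^ α) * ENNReal.ofReal (s.val i)
              = ENNReal.ofReal (∑ i, ξ i ^ α * s.val i) := by
                rw [ENNReal.ofReal_sum_of_nonneg
                  (fun i _ => mul_nonneg (Real.rpow_nonneg (hξ0 i) α) (hs0 i))]
                refine Finset.sum_congr rfl fun i _ => ?_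
                rw [ENNReal.ofReal_mul (Real.rpow_nonneg (hξ0 i) α)]
            _ ≤ _ := ENNReal.ofReal_le_ofReal (hpt s)
  · -- upper bound
    have hpt : ∀ s : {s : Fin d → ℝ // s ∈ stdSimplex ℝ (Fin d)},
        (∑ i, ξ i * s.val i ^ (1 / α)) ^ α ≤ ∑ i, ξ i * s.val i := by
      intro s
      obtain ⟨hs0, _⟩ := s.2
      have := Real.rpow_arith_mean_le_arith_mean_rpow Finset.univ ξ
        (fun i => s.val i ^ (1 / α)) (fun i _ => hξ0 i) hξ1
        (fun i _ => Real.rpow_nonneg (hs0 i) _) hα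
      have hss : ∀ i : Fin d, (s.val i ^ (1 / α)) ^ α = s.val i := by
        intro i
        rw [← Real.rpow_mul (hs0 i), one_div, inv_mul_cancel₀ (ne_of_gt hα0),
          Real.rpow_one]
      simp only [hss] at this
      exact this
    calc ∫⁻ s, ENNReal.ofReal ((∑ i, ξ i * s.val i ^ (1 / α)) ^ α) ∂Ψ
        ≤ ∫⁻ s, ∑ i : Fin d, ENNReal.ofReal (ξ i) * ENNReal.ofReal (s.val i) ∂Ψ := by
          refine lintegral_mono fun s => ?_
          obtain ⟨hs0, _⟩ := s.2
          calc ENNReal.ofReal ((∑ i, ξ i * s.val i ^ (1 / α)) ^ α)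
              ≤ ENNReal.ofReal (∑ i, ξ i * s.val i) :=
                ENNReal.ofReal_le_ofReal (hpt s)
            _ = ∑ i : Fin d, ENNReal.ofReal (ξ i) * ENNReal.ofReal (s.val i) := by
                rw [ENNReal.ofReal_sum_of_nonneg
                  (fun i _ => mul_nonneg (hξ0 i) (hs0 i))]
                exact Finset.sum_congr rfl fun i _ => ENNReal.ofReal_mul (hξ0 i)
      _ = ∑ i : Fin d, ENNReal.ofReal (ξ i) * ∫⁻ s, ENNReal.ofReal (s.val i) ∂Ψ := by
          rw [lintegral_finset_sum]
          · simp_rw [lintegral_const_mul _ (hmeas _)]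
          · exact fun i _ => (measurable_const.mul (hmeas i))
      _ = ENNReal.ofReal (∑ i, ξ i) := by
          simp_rw [hnorm, mul_one]
          rw [ENNReal.ofReal_sum_of_nonneg (fun i _ => hξ0 i)]
      _ = 1 := by rw [hξ1, ENNReal.ofReal_one]
end

section
/- Let Ψ be a measure on the unit simplex Σ^d ⊂ ℝ^d satisfying the canonical normalization ∫_{Σ^d} s⁽ⁱ⁾ dΨ(s) = 1 for every coordinate i = 1,…,d. Then for every α ∈ (0,1] and every ξ ∈ Σ^d, 1 ≤ ∫_{Σ^d} (Σᵢ₌₁^d ξ⁽ⁱ⁾·(s⁽ⁱ⁾)^{1/α})^α dΨ(s) ≤ Σᵢ₌₁^d (ξ⁽ⁱ⁾)^α. (Thus for α ≤ 1 the ordering of Theorem 3.8(a) is reversed: Ψ*₁ ≼_{G,α} Ψ ≼_{G,α} Ψ*₀, where Ψ*₀ = Σᵢ δ_{eᵢ} and Ψ*₁ = d·δ_{(1/d,…,1/d)}.) -/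
open MeasureTheory Filter
open scoped ENNReal

private lemma real_rpow_add_le_add_rpow {p a b : ℝ} (ha : 0 ≤ a) (hb : 0 ≤ b)
    (hp0 : 0 ≤ p) (hp1 : p ≤ 1) : (a + b) ^ p ≤ a ^ p + b ^ p := by
  have := NNReal.rpow_add_le_add_rpow ⟨a, ha⟩ ⟨b, hb⟩ hp0 hp1
  have h := NNReal.coe_le_coe.2 this
  push_cast at h
  exact h

private lemma sum_rpow_le {ι : Type*} (s : Finset ι) (f : ι → ℝ) {p : ℝ}
    (hp0 : 0 < p) (hp1 : p ≤ 1) (hf : ∀ i ∈ s, 0 ≤ f i) :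
    (∑ i ∈ s, f i) ^ p ≤ ∑ i ∈ s, f i ^ p := by
  induction s using Finset.cons_induction with
  | empty => simp [Real.zero_rpow hp0.ne']
  | cons a s ha ih =>
      rw [Finset.sum_cons, Finset.sum_cons]
      have h1 : 0 ≤ f a := hf a (Finset.mem_cons_self a s)
      have h2 : 0 ≤ ∑ i ∈ s, f i :=
        Finset.sum_nonneg fun i hi => hf i (Finset.mem_cons_of_mem hi)
      calc (f a + ∑ i ∈ s, f i) ^ p ≤ f a ^ p + (∑ i ∈ s, f i) ^ p :=
            real_rpow_add_le_add_rpow h1 h2 hp0.le hp1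
        _ ≤ f a ^ p + ∑ i ∈ s, f i ^ p := by
            have := ih fun i hi => hf i (Finset.mem_cons_of_mem hi)
            linarith

theorem spectral_bounds_of_alpha_le_one
    {d : ℕ} (Ψ : Measure {s : Fin d → ℝ // s ∈ stdSimplex ℝ (Fin d)})
    (hnorm : ∀ i : Fin d, ∫⁻ s, ENNReal.ofReal (s.val i) ∂Ψ = 1)
    (α : ℝ) (hα0 : 0 < α) (hα1 : α ≤ 1) (ξ : Fin d → ℝ) (hξ : ξ ∈ stdSimplex ℝ (Fin d)) :
    1 ≤ ∫⁻ s, ENNReal.ofReal ((∑ i, ξ i * s.val i ^ (1 / α)) ^ α) ∂Ψ ∧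
      ∫⁻ s, ENNReal.ofReal ((∑ i, ξ i * s.val i ^ (1 / α)) ^ α) ∂Ψ ≤
        ENNReal.ofReal (∑ i, ξ i ^ α) := by
  have hξ0 : ∀ i, 0 ≤ ξ i := fun i => hξ.1 i
  have hξ1 : ∑ i, ξ i = 1 := hξ.2
  have hp : (1 : ℝ) ≤ 1 / α := (le_div_iff₀ hα0).2 (by linarith)
  have hmeas : ∀ i : Fin d,
      Measurable fun s : {s : Fin d → ℝ // s ∈ stdSimplex ℝ (Fin d)} =>
        ENNReal.ofReal (s.val i) := fun i =>
    ENNReal.measurable_ofReal.comp ((measurable_pi_apply i).comp measurable_subtype_coe)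
  -- integral of a nonneg linear functional against Ψ
  have key : ∀ c : Fin d → ℝ, (∀ i, 0 ≤ c i) →
      ∫⁻ s, ENNReal.ofReal (∑ i, c i * s.val i) ∂Ψ = ENNReal.ofReal (∑ i, c i) := by
    intro c hc
    have : ∀ s : {s : Fin d → ℝ // s ∈ stdSimplex ℝ (Fin d)},
        ENNReal.ofReal (∑ i, c i * s.val i) =
          ∑ i, ENNReal.ofReal (c i) * ENNReal.ofReal (s.val i) := by
      intro s
      rw [ENNReal.ofReal_sum_of_nonneg fun i _ =>
        mul_nonneg (hc i) (s.2.1 i)]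
      exact Finset.sum_congr rfl fun i _ => ENNReal.ofReal_mul (hc i)
    simp_rw [this]
    rw [lintegral_finset_sum _ fun i _ => (hmeas i).const_mul _]
    simp_rw [lintegral_const_mul _ (hmeas _), hnorm, mul_one]
    rw [ENNReal.ofReal_sum_of_nonneg fun i _ => hc i]
  constructor
  · -- lower bound
    have hpt : ∀ s : {s : Fin d → ℝ // s ∈ stdSimplex ℝ (Fin d)},
        ENNReal.ofReal (∑ i, ξ i * s.val i) ≤
          ENNReal.ofReal ((∑ i, ξ i * s.val i ^ (1 / α)) ^ α) := by
      intro s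
      apply ENNReal.ofReal_le_ofReal
      have := Real.arith_mean_le_rpow_mean Finset.univ ξ s.val
        (fun i _ => hξ0 i) hξ1 (fun i _ => s.2.1 i) hp
      rwa [one_div_one_div] at this
    calc (1 : ℝ≥0∞) = ENNReal.ofReal (∑ i, ξ i) := by rw [hξ1]; simp
      _ = ∫⁻ s, ENNReal.ofReal (∑ i, ξ i * s.val i) ∂Ψ := (key ξ hξ0).symm
      _ ≤ _ := lintegral_mono hpt
  · -- upper bound
    have hpt : ∀ s : {s : Fin d → ℝ // s ∈ stdSimplex ℝ (Fin d)},
        ENNReal.ofReal ((∑ i, ξ i * s.val i ^ (1 / α)) ^ α) ≤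
          ENNReal.ofReal (∑ i, ξ i ^ α * s.val i) := by
      intro s
      apply ENNReal.ofReal_le_ofReal
      have hsi : ∀ i, 0 ≤ s.val i := fun i => s.2.1 i
      have h1 : (∑ i, ξ i * s.val i ^ (1 / α)) ^ α ≤
          ∑ i, (ξ i * s.val i ^ (1 / α)) ^ α :=
        sum_rpow_le Finset.univ _ hα0 hα1 fun i _ =>
          mul_nonneg (hξ0 i) (Real.rpow_nonneg (hsi i) _)
      refine h1.trans (le_of_eq (Finset.sum_congr rfl fun i _ => ?_))
      rw [Real.mul_rpow (hξ0 i) (Real.rpow_nonneg (hsi i) _),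
        ← Real.rpow_mul (hsi i), one_div_mul_cancel hα0.ne', Real.rpow_one]
    calc ∫⁻ s, ENNReal.ofReal ((∑ i, ξ i * s.val i ^ (1 / α)) ^ α) ∂Ψ
        ≤ ∫⁻ s, ENNReal.ofReal (∑ i, ξ i ^ α * s.val i) ∂Ψ := lintegral_mono hpt
      _ = ENNReal.ofReal (∑ i, ξ i ^ α) :=
          key _ fun i => Real.rpow_nonneg (hξ0 i) _
end

section
/- Let α > 1 and let X, Y be ℝ^d-valued random vectors whose first absolute components |X⁽¹⁾| and |Y⁽¹⁾| are regularly varying with tail index α. Assume that for every ξ in the unit simplex Σ^d the limits a_ξ := lim_{t→∞} P(ξᵀX > t)/P(|X⁽¹⁾| > t) ∈ [0,∞) and b_ξ := lim_{t→∞} P(ξᵀY > t)/P(|Y⁽¹⁾| > t) ∈ (0,∞) exist; that limsup_{t→∞} P(|X⁽¹⁾| > t)/P(|Y⁽¹⁾| > t) = 1; and that there exists u₀ > 0 such that for all u ≥ u₀ and all ξ ∈ Σ^d, E[(ξᵀX − u)₊] ≤ E[(ξᵀY − u)₊] < ∞. Then a_ξ ≤ b_ξ for all ξ ∈ Σ^d.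 -/
open MeasureTheory ProbabilityTheory Filter
open scoped ENNReal

section AuxLemmas

variable {Ω : Type*} [MeasurableSpace Ω] {μ : Measure Ω}

lemma aux_indicator [IsFiniteMeasure μ] {A : Set Ω} (hA : NullMeasurableSet A μ) :
    Integrable (A.indicator (fun _ => (1:ℝ))) μ ∧
      ∫ ω, A.indicator (fun _ => (1:ℝ)) ω ∂μ = (μ A).toReal := by
  obtain ⟨B, hBA, hB, hae⟩ := hA.exists_measurable_subset_ae_eq
  have hind : B.indicator (fun _ => (1:ℝ)) =ᵐ[μ] A.indicator (fun _ => (1:ℝ)) :=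
    indicator_ae_eq_of_ae_eq_set hae
  have hintB : Integrable (B.indicator (fun _ => (1:ℝ))) μ := by
    rw [integrable_indicator_iff hB]
    exact integrableOn_const (measure_lt_top μ B).ne
  refine ⟨hintB.congr hind, ?_⟩
  rw [integral_congr_ae hind.symm]
  have h1 := integral_indicator_one (μ := μ) hB
  have h2 : μ B = μ A := measure_congr hae
  rw [← h2]
  exact h1

lemma set_max_eq (S : Ω → ℝ) (u v : ℝ) (hv : u ≤ v) :
    {ω | v - u < max (S ω - u) 0} = {ω | v < S ω} := by
  ext ω
  simp only [Set.mem_setOf_eq, lt_max_iff]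
  constructor
  · rintro (h | h)
    · linarith
    · linarith
  · intro h
    left; linarith

lemma layer_lower [IsFiniteMeasure μ] {f : Ω → ℝ} (hf : Integrable f μ) (hf0 : ∀ ω, 0 ≤ f ω)
    (T : ℕ → ℝ) (hT0 : T 0 = 0) (K : ℕ) :
    ∑ k ∈ Finset.range K, (T (k+1) - T k) * (μ {ω | T (k+1) < f ω}).toReal
      ≤ ∫ ω, f ω ∂μ := by
  set g : Ω → ℝ := fun ω =>
    ∑ k ∈ Finset.range K, (T (k+1) - T k) * ({ω | T (k+1) < f ω}).indicator (fun _ => (1:ℝ)) ω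
    with hg
  have hnm : ∀ k : ℕ, NullMeasurableSet {ω | T (k+1) < f ω} μ := fun k =>
    nullMeasurableSet_lt aemeasurable_const hf.aemeasurable
  have hterm : ∀ k : ℕ, Integrable
      (fun ω => (T (k+1) - T k) * ({ω | T (k+1) < f ω}).indicator (fun _ => (1:ℝ)) ω) μ :=
    fun k => ((aux_indicator (hnm k)).1).const_mul _
  have hgint : Integrable g μ := integrable_finset_sum _ (fun k _ => hterm k)
  have hgle : ∀ ω, g ω ≤ f ω := by
    intro ω
    have key : ∀ N : ℕ,
        (∑ k ∈ Finset.range N, (T (k+1) - T k) *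
          ({ω | T (k+1) < f ω}).indicator (fun _ => (1:ℝ)) ω) ≤ min (f ω) (T N) := by
      intro N
      induction N with
      | zero => simpa [hT0] using hf0 ω
      | succ N ih =>
        rw [Finset.sum_range_succ]
        by_cases h : T (N+1) < f ω
        · have hind1 : ({ω | T (N+1) < f ω}).indicator (fun _ => (1:ℝ)) ω = 1 := by
            simp [Set.indicator_of_mem, h]
          rw [hind1, mul_one]
          have h3 : min (f ω) (T N) ≤ T N := min_le_right _ _
          have h2 : min (f ω) (T (N+1)) = T (N+1) := min_eq_right h.le
          rw [h2]; linarith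
        · have hind0 : ({ω | T (N+1) < f ω}).indicator (fun _ => (1:ℝ)) ω = 0 := by
            simp [Set.indicator_of_notMem, h]
          rw [hind0, mul_zero, add_zero]
          refine le_trans ih (le_min (min_le_left _ _) ?_)
          exact le_trans (min_le_left _ _) (not_lt.1 h)
    exact le_trans (key K) (min_le_left _ _)
  calc ∑ k ∈ Finset.range K, (T (k+1) - T k) * (μ {ω | T (k+1) < f ω}).toReal
      = ∫ ω, g ω ∂μ := by
        rw [hg, integral_finset_sum _ (fun k _ => hterm k)]
        refine Finset.sum_congr rfl (fun k _ => ?_)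
        rw [MeasureTheory.integral_const_mul, (aux_indicator (hnm k)).2]
    _ ≤ ∫ ω, f ω ∂μ := integral_mono hgint hf hgle

lemma lower_est [IsProbabilityMeasure μ] (S : Ω → ℝ) (u c : ℝ) (hu : 0 < u) (hc : 1 < c)
    (hint : Integrable (fun ω => max (S ω - u) 0) μ) (K : ℕ) :
    ∑ k ∈ Finset.range K, ((c - 1) * c ^ k * u) * (μ {ω | c ^ (k+1) * u < S ω}).toReal
      ≤ ∫ ω, max (S ω - u) 0 ∂μ := by
  have hc0 : (0:ℝ) < c := lt_trans one_pos hc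
  set T : ℕ → ℝ := fun k => c ^ k * u - u with hTdef
  have hT0 : T 0 = 0 := by simp [hTdef]
  have hll := layer_lower hint (fun ω => le_max_right _ _) T hT0 K
  refine le_trans (le_of_eq ?_) hll
  refine Finset.sum_congr rfl (fun k _ => ?_)
  have hset : {ω | T (k+1) < max (S ω - u) 0} = {ω | c ^ (k+1) * u < S ω} := by
    have h1 : T (k+1) = c ^ (k+1) * u - u := rfl
    rw [h1]
    exact set_max_eq S u _ (le_mul_of_one_le_left hu.le (one_le_pow₀ hc.le))
  rw [hset]
  congr 1
  show (c - 1) * c ^ k * u = T (k+1) - T k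
  simp only [hTdef]
  rw [pow_succ]
  ring

lemma ptwise_upper (T : ℕ → ℝ) (hT : Monotone T) (s : ℝ) (K : ℕ) :
    max (s - T 0) 0 ≤ (∑ k ∈ Finset.range K, (T (k+1) - T k) * (if T k < s then (1:ℝ) else 0))
      + max (s - T K) 0 := by
  induction K with
  | zero => simp
  | succ K ih =>
    rw [Finset.sum_range_succ]
    refine le_trans ih ?_
    have h1 : T K ≤ T (K+1) := hT (Nat.le_succ K)
    by_cases h : T K < s
    · rw [if_pos h, mul_one]
      have h2 : max (s - T K) 0 = s - T K := max_eq_left (by linarith)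
      rw [h2]
      have h3 : s - T (K+1) ≤ max (s - T (K+1)) 0 := le_max_left _ _
      linarith
    · rw [if_neg h, mul_zero]
      have h2 : max (s - T K) 0 = 0 := max_eq_right (by push_neg at h; linarith)
      rw [h2]
      have h3 : (0:ℝ) ≤ max (s - T (K+1)) 0 := le_max_right _ _
      linarith

lemma upper_est [IsProbabilityMeasure μ] (S : Ω → ℝ) (u c M ρ : ℝ) (hu : 0 < u) (hc : 1 < c)
    (hint : ∀ v : ℝ, u ≤ v → Integrable (fun ω => max (S ω - v) 0) μ)
    (hρ0 : 0 ≤ ρ) (hρ1 : c * ρ < 1) (hM0 : 0 ≤ M)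
    (hM : ∀ k : ℕ, (μ {ω | c ^ k * u < S ω}).toReal ≤ M * ρ ^ k) :
    ∫ ω, max (S ω - u) 0 ∂μ ≤ (c - 1) * u * M * (1 - c * ρ)⁻¹ := by
  have hc0 : (0:ℝ) < c := lt_trans one_pos hc
  have hv : ∀ k : ℕ, u ≤ c ^ k * u := fun k =>
    le_mul_of_one_le_left hu.le (one_le_pow₀ hc.le)
  set T : ℕ → ℝ := fun k => c ^ k * u with hTdef
  have hTmono : Monotone T := by
    apply monotone_nat_of_le_succ
    intro k
    have h1 : c ^ k ≤ c ^ (k+1) := by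
      rw [pow_succ]
      exact le_mul_of_one_le_right (pow_pos hc0 k).le hc.le
    exact mul_le_mul_of_nonneg_right h1 hu.le
  set A : ℕ → Set Ω := fun k => {ω | T k < S ω} with hAdef
  have hAnm : ∀ k, NullMeasurableSet (A k) μ := by
    intro k
    have h1 : A k = {ω | T k - u < max (S ω - u) 0} := (set_max_eq S u (T k) (hv k)).symm
    rw [h1]
    exact nullMeasurableSet_lt aemeasurable_const (hint u le_rfl).aemeasurable
  have step1 : ∀ K : ℕ, ∫ ω, max (S ω - u) 0 ∂μ ≤
      (∑ k ∈ Finset.range K, (T (k+1) - T k) * (μ (A k)).toReal)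
        + ∫ ω, max (S ω - T K) 0 ∂μ := by
    intro K
    have hterm : ∀ k : ℕ, Integrable
        (fun ω => (T (k+1) - T k) * (A k).indicator (fun _ => (1:ℝ)) ω) μ :=
      fun k => ((aux_indicator (hAnm k)).1).const_mul _
    have hGint : Integrable (fun ω =>
        (∑ k ∈ Finset.range K, (T (k+1) - T k) * (A k).indicator (fun _ => (1:ℝ)) ω)
          + max (S ω - T K) 0) μ :=
      (integrable_finset_sum _ (fun k _ => hterm k)).add (hint _ (hv K))
    have hptwise : ∀ ω, max (S ω - u) 0 ≤
        (∑ k ∈ Finset.range K, (T (k+1) - T k) * (A k).indicator (fun _ => (1:ℝ)) ω)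
          + max (S ω - T K) 0 := by
      intro ω
      have h0 : T 0 = u := by simp [hTdef]
      have h4 := ptwise_upper T hTmono (S ω) K
      rw [h0] at h4
      refine le_trans h4 ?_
      apply add_le_add_left
      apply le_of_eq
      refine Finset.sum_congr rfl (fun k _ => ?_)
      by_cases h : T k < S ω
      · simp [hAdef, Set.indicator_apply, Set.mem_setOf_eq, h]
      · simp [hAdef, Set.indicator_apply, Set.mem_setOf_eq, h]
    calc ∫ ω, max (S ω - u) 0 ∂μ
        ≤ ∫ ω, ((∑ k ∈ Finset.range K, (T (k+1) - T k) * (A k).indicator (fun _ => (1:ℝ)) ω)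
            + max (S ω - T K) 0) ∂μ := integral_mono (hint u le_rfl) hGint hptwise
      _ = (∑ k ∈ Finset.range K, (T (k+1) - T k) * (μ (A k)).toReal)
            + ∫ ω, max (S ω - T K) 0 ∂μ := by
          rw [integral_add (integrable_finset_sum _ (fun k _ => hterm k)) (hint _ (hv K)),
            integral_finset_sum _ (fun k _ => hterm k)]
          congr 1
          refine Finset.sum_congr rfl (fun k _ => ?_)
          rw [MeasureTheory.integral_const_mul, (aux_indicator (hAnm k)).2]
  have hcρ : 0 ≤ c * ρ := mul_nonneg hc0.le hρ0
  have hgeom := hasSum_geometric_of_lt_one hcρ hρ1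
  have step2 : ∀ K : ℕ, (∑ k ∈ Finset.range K, (T (k+1) - T k) * (μ (A k)).toReal)
      ≤ (c - 1) * u * M * (1 - c * ρ)⁻¹ := by
    intro K
    have h1 : ∀ k : ℕ, (T (k+1) - T k) * (μ (A k)).toReal ≤ ((c-1) * u * M) * (c * ρ) ^ k := by
      intro k
      have hd : T (k+1) - T k = (c - 1) * c ^ k * u := by
        show c ^ (k+1) * u - c ^ k * u = (c - 1) * c ^ k * u
        rw [pow_succ]
        ring
      have hd0 : (0:ℝ) ≤ (c - 1) * c ^ k * u :=
        mul_nonneg (mul_nonneg (by linarith) (pow_pos hc0 k).le) hu.le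
      rw [hd]
      calc (c - 1) * c ^ k * u * (μ (A k)).toReal
          ≤ (c - 1) * c ^ k * u * (M * ρ ^ k) := mul_le_mul_of_nonneg_left (hM k) hd0
        _ = ((c-1) * u * M) * (c * ρ) ^ k := by rw [mul_pow]; ring
    calc (∑ k ∈ Finset.range K, (T (k+1) - T k) * (μ (A k)).toReal)
        ≤ ∑ k ∈ Finset.range K, ((c-1) * u * M) * (c * ρ) ^ k :=
          Finset.sum_le_sum (fun k _ => h1 k)
      _ = ((c-1) * u * M) * ∑ k ∈ Finset.range K, (c * ρ) ^ k := by
          rw [Finset.mul_sum]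
      _ ≤ ((c-1) * u * M) * (1 - c * ρ)⁻¹ := by
          apply mul_le_mul_of_nonneg_left _
            (mul_nonneg (mul_nonneg (by linarith : (0:ℝ) ≤ c - 1) hu.le) hM0)
          exact sum_le_hasSum _ (fun k _ => pow_nonneg hcρ k) hgeom
  have step3 : Tendsto (fun K : ℕ => ∫ ω, max (S ω - T K) 0 ∂μ) atTop (nhds 0) := by
    have h5 := MeasureTheory.tendsto_integral_of_dominated_convergence
      (F := fun K ω => max (S ω - T K) 0) (f := fun _ => (0:ℝ))
      (μ := μ) (bound := fun ω => max (S ω - u) 0)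
      (fun K => (hint _ (hv K)).aestronglyMeasurable)
      (hint u le_rfl)
      (fun K => Filter.Eventually.of_forall (fun ω => by
        have h1 : S ω - T K ≤ S ω - u := by
          have h6 := hv K
          simp only [hTdef] at h6 ⊢
          linarith
        have h2 : max (S ω - T K) 0 ≤ max (S ω - u) 0 := max_le_max h1 le_rfl
        have h3 : (0:ℝ) ≤ max (S ω - T K) 0 := le_max_right _ _
        rw [Real.norm_eq_abs, abs_of_nonneg h3]
        exact h2))
      (Filter.Eventually.of_forall (fun ω => by
        have hTtop : Tendsto T atTop atTop := by
          simpa [hTdef] using (tendsto_pow_atTop_atTop_of_one_lt hc).atTop_mul_const hu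
        have h7 : ∀ᶠ K in atTop, max (S ω - T K) 0 = 0 := by
          filter_upwards [hTtop.eventually_ge_atTop (S ω)] with K hK
          exact max_eq_right (by linarith)
        exact Tendsto.congr' (h7.mono fun K hK => hK.symm) tendsto_const_nhds))
    simpa using h5
  have key : Tendsto (fun K : ℕ => (c - 1) * u * M * (1 - c * ρ)⁻¹
      + ∫ ω, max (S ω - T K) 0 ∂μ) atTop (nhds ((c - 1) * u * M * (1 - c * ρ)⁻¹)) := by
    have h8 := (tendsto_const_nhds (x := (c - 1) * u * M * (1 - c * ρ)⁻¹)
      (f := atTop (α := ℕ))).add step3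
    simpa using h8
  refine ge_of_tendsto key (Filter.Eventually.of_forall (fun K => ?_))
  exact le_trans (step1 K) (add_le_add_left (step2 K) _)

end AuxLemmas

theorem spectral_order_of_stop_loss_order
    {Ω : Type*} [MeasurableSpace Ω] (μ : Measure Ω) [IsProbabilityMeasure μ]
    {d : ℕ} [NeZero d] (X Y : Ω → Fin d → ℝ) (α : ℝ) (hα : 1 < α)
    (hX : RegVarying μ (fun ω => |X ω 0|) α)
    (hY : RegVarying μ (fun ω => |Y ω 0|) α)
    (a b : (Fin d → ℝ) → ℝ)
    (ha : ∀ ξ ∈ stdSimplex ℝ (Fin d), 0 ≤ a ξ ∧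
      Tendsto (fun t : ℝ =>
          (μ {ω | t < ∑ i, ξ i * X ω i}).toReal / (μ {ω | t < |X ω 0|}).toReal)
        atTop (nhds (a ξ)))
    (hb : ∀ ξ ∈ stdSimplex ℝ (Fin d), 0 < b ξ ∧
      Tendsto (fun t : ℝ =>
          (μ {ω | t < ∑ i, ξ i * Y ω i}).toReal / (μ {ω | t < |Y ω 0|}).toReal)
        atTop (nhds (b ξ)))
    (hmarg : Filter.limsup
        (fun t : ℝ => μ {ω | t < |X ω 0|} / μ {ω | t < |Y ω 0|}) atTop = 1)
    (u₀ : ℝ) (hu₀ : 0 < u₀)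
    (hsl : ∀ u : ℝ, u₀ ≤ u → ∀ ξ ∈ stdSimplex ℝ (Fin d),
      Integrable (fun ω => max (∑ i, ξ i * X ω i - u) 0) μ ∧
      Integrable (fun ω => max (∑ i, ξ i * Y ω i - u) 0) μ ∧
      ∫ ω, max (∑ i, ξ i * X ω i - u) 0 ∂μ ≤ ∫ ω, max (∑ i, ξ i * Y ω i - u) 0 ∂μ) :
    ∀ ξ ∈ stdSimplex ℝ (Fin d), a ξ ≤ b ξ := by
  intro ξ hξ
  obtain ⟨ha0, haT⟩ := ha ξ hξ
  obtain ⟨hb0, hbT⟩ := hb ξ hξ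
  have hPXpos : ∀ t : ℝ, 0 < (μ {ω | t < |X ω 0|}).toReal := fun t =>
    ENNReal.toReal_pos (hX.1 t).ne' (measure_ne_top μ _)
  have hPYpos : ∀ t : ℝ, 0 < (μ {ω | t < |Y ω 0|}).toReal := fun t =>
    ENNReal.toReal_pos (hY.1 t).ne' (measure_ne_top μ _)
  -- Main step: for every c > 1, a ξ * c^(-α) ≤ b ξ
  have stepA : ∀ c : ℝ, 1 < c → a ξ * c ^ (-α) ≤ b ξ := by
    intro c hc
    have hc0 : (0:ℝ) < c := lt_trans one_pos hc
    have hβpos : (0:ℝ) < c ^ (-α) := Real.rpow_pos_of_pos hc0 _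
    have hβlt1 : c ^ (-α) < 1 := Real.rpow_lt_one_of_one_lt_of_neg hc (by linarith)
    have hr1 : c * c ^ (-α) < 1 := by
      have h1 : c * c ^ (-α) = c ^ (1 - α) := by
        rw [show (1:ℝ) - α = 1 + (-α) by ring, Real.rpow_add hc0, Real.rpow_one]
      rw [h1]
      exact Real.rpow_lt_one_of_one_lt_of_neg hc (by linarith)
    have hr0 : 0 < c * c ^ (-α) := mul_pos hc0 hβpos
    have stepB : ∀ K : ℕ, a ξ * (∑ k ∈ Finset.range K, c ^ k * (c ^ (-α)) ^ (k+1))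
        ≤ b ξ * (1 - c * c ^ (-α))⁻¹ := by
      intro K
      have hδ₀pos : 0 < min (c ^ (-α)) ((1 - c * c ^ (-α)) / c) :=
        lt_min hβpos (div_pos (by linarith) hc0)
      -- limit of the left side as ε → 0⁺
      have hLHS : Tendsto (fun ε : ℝ => max (a ξ - ε) 0 * (1 - ε) *
          ∑ k ∈ Finset.range K, c ^ k * (c ^ (-α) - ε) ^ (k+1))
          (nhdsWithin 0 (Set.Ioi 0))
          (nhds (a ξ * ∑ k ∈ Finset.range K, c ^ k * (c ^ (-α)) ^ (k+1))) := by
        have hcont : Continuous (fun ε : ℝ => max (a ξ - ε) 0 * (1 - ε) *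
            ∑ k ∈ Finset.range K, c ^ k * (c ^ (-α) - ε) ^ (k+1)) := by
          refine Continuous.mul (Continuous.mul ?_ ?_) ?_
          · exact (continuous_const.sub continuous_id).max continuous_const
          · exact continuous_const.sub continuous_id
          · exact continuous_finset_sum _ (fun k _ => continuous_const.mul
              ((continuous_const.sub continuous_id).pow _))
        have h2 := hcont.tendsto 0
        have h3 : max (a ξ - 0) 0 * (1 - 0) *
            ∑ k ∈ Finset.range K, c ^ k * (c ^ (-α) - 0) ^ (k+1)
            = a ξ * ∑ k ∈ Finset.range K, c ^ k * (c ^ (-α)) ^ (k+1) := by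
          simp [max_eq_left ha0]
        rw [h3] at h2
        exact h2.mono_left nhdsWithin_le_nhds
      have hRHS : Tendsto (fun ε : ℝ => (b ξ + ε) * (1 - c * (c ^ (-α) + ε))⁻¹)
          (nhdsWithin 0 (Set.Ioi 0)) (nhds (b ξ * (1 - c * c ^ (-α))⁻¹)) := by
        have h1 : Tendsto (fun ε : ℝ => 1 - c * (c ^ (-α) + ε)) (nhds 0)
            (nhds (1 - c * c ^ (-α))) := by
          have hco : Continuous (fun ε : ℝ => 1 - c * (c ^ (-α) + ε)) :=
            continuous_const.sub (continuous_const.mul (continuous_const.add continuous_id))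
          have h2 := hco.tendsto 0
          simpa using h2
        have h2 := h1.inv₀ (by linarith : (1:ℝ) - c * c ^ (-α) ≠ 0)
        have h3 : Tendsto (fun ε : ℝ => b ξ + ε) (nhds 0) (nhds (b ξ)) := by
          have hco : Continuous (fun ε : ℝ => b ξ + ε) :=
            continuous_const.add continuous_id
          have h4 := hco.tendsto 0
          rw [add_zero] at h4
          exact h4
        exact (h3.mul h2).mono_left nhdsWithin_le_nhds
      refine le_of_tendsto_of_tendsto hLHS hRHS ?_
      filter_upwards [Ioo_mem_nhdsGT_of_mem
        (Set.mem_Ico.2 ⟨le_refl (0:ℝ), hδ₀pos⟩)] with ε hε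
      obtain ⟨hε0, hεδ⟩ := hε
      have hεβ : ε < c ^ (-α) := lt_of_lt_of_le hεδ (min_le_left _ _)
      have hε1 : ε < 1 := lt_trans hεβ hβlt1
      have hcρ1 : c * (c ^ (-α) + ε) < 1 := by
        have h1 : ε < (1 - c * c ^ (-α)) / c := lt_of_lt_of_le hεδ (min_le_right _ _)
        have h2 : c * ε < 1 - c * c ^ (-α) := by
          rw [div_eq_mul_inv] at h1
          calc c * ε = ε * c := by ring
            _ < (1 - c * c ^ (-α)) * c⁻¹ * c := by
              exact mul_lt_mul_of_pos_right h1 hc0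
            _ = 1 - c * c ^ (-α) := by field_simp
        linarith [mul_add c (c ^ (-α)) ε]
      have hβ0 : (0:ℝ) ≤ c ^ (-α) - ε := by linarith
      have hρ0 : (0:ℝ) ≤ c ^ (-α) + ε := by linarith
      -- the four eventual statements
      have E1 : ∀ᶠ t : ℝ in atTop, max (a ξ - ε) 0 * (μ {ω | t < |X ω 0|}).toReal
          ≤ (μ {ω | t < ∑ i, ξ i * X ω i}).toReal := by
        filter_upwards [haT.eventually (eventually_gt_nhds
          (by linarith : a ξ - ε < a ξ))] with t ht
        have h1 : max (a ξ - ε) 0 ≤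
            (μ {ω | t < ∑ i, ξ i * X ω i}).toReal / (μ {ω | t < |X ω 0|}).toReal :=
          max_le ht.le (div_nonneg ENNReal.toReal_nonneg ENNReal.toReal_nonneg)
        calc max (a ξ - ε) 0 * (μ {ω | t < |X ω 0|}).toReal
            ≤ (μ {ω | t < ∑ i, ξ i * X ω i}).toReal / (μ {ω | t < |X ω 0|}).toReal
              * (μ {ω | t < |X ω 0|}).toReal :=
              mul_le_mul_of_nonneg_right h1 ENNReal.toReal_nonneg
          _ = (μ {ω | t < ∑ i, ξ i * X ω i}).toReal := div_mul_cancel₀ _ (hPXpos t).ne'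
      have E2 : ∀ᶠ t : ℝ in atTop, (μ {ω | t < ∑ i, ξ i * Y ω i}).toReal
          ≤ (b ξ + ε) * (μ {ω | t < |Y ω 0|}).toReal := by
        filter_upwards [hbT.eventually (eventually_lt_nhds
          (by linarith : b ξ < b ξ + ε))] with t ht
        exact ((div_lt_iff₀ (hPYpos t)).1 ht).le
      have E3 : ∀ᶠ t : ℝ in atTop, (c ^ (-α) - ε) * (μ {ω | t < |X ω 0|}).toReal
          ≤ (μ {ω | t * c < |X ω 0|}).toReal := by
        filter_upwards [(hX.2 c hc0).eventually (eventually_gt_nhds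
          (by linarith : c ^ (-α) - ε < c ^ (-α)))] with t ht
        exact ((lt_div_iff₀ (hPXpos t)).1 ht).le
      have E4 : ∀ᶠ t : ℝ in atTop, (μ {ω | t * c < |Y ω 0|}).toReal
          ≤ (c ^ (-α) + ε) * (μ {ω | t < |Y ω 0|}).toReal := by
        filter_upwards [(hY.2 c hc0).eventually (eventually_lt_nhds
          (by linarith : c ^ (-α) < c ^ (-α) + ε))] with t ht
        exact ((div_lt_iff₀ (hPYpos t)).1 ht).le
      obtain ⟨T₁, hT₁⟩ := eventually_atTop.1 (E1.and (E2.and (E3.and E4)))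
      -- a good point u
      have hfreq : ∃ᶠ t : ℝ in atTop,
          (1 - ε) * (μ {ω | t < |Y ω 0|}).toReal ≤ (μ {ω | t < |X ω 0|}).toReal := by
        have h1 : (ENNReal.ofReal (1 - ε)) <
            Filter.limsup (fun t : ℝ => μ {ω | t < |X ω 0|} / μ {ω | t < |Y ω 0|}) atTop := by
          rw [hmarg, ← ENNReal.ofReal_one]
          exact (ENNReal.ofReal_lt_ofReal_iff one_pos).2 (by linarith)
        have h2 := frequently_lt_of_lt_limsup (u := fun t : ℝ =>
          μ {ω | t < |X ω 0|} / μ {ω | t < |Y ω 0|}) (f := atTop) ?_ h1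
        · refine h2.mono (fun t ht => ?_)
          have h3 : ENNReal.ofReal (1 - ε) * μ {ω | t < |Y ω 0|} < μ {ω | t < |X ω 0|} :=
            (ENNReal.lt_div_iff_mul_lt (Or.inl (hY.1 t).ne')
              (Or.inl (measure_ne_top μ _))).1 ht
          have h4 := ENNReal.toReal_mono (measure_ne_top μ _) h3.le
          rwa [ENNReal.toReal_mul, ENNReal.toReal_ofReal (by linarith)] at h4
        · exact ⟨0, fun x _ => zero_le (a := x)⟩
      obtain ⟨u, ⟨hufreq, huge⟩⟩ :=
        (hfreq.and_eventually (eventually_ge_atTop (max T₁ (max u₀ 1)))).exists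
      have huT₁ : T₁ ≤ u := le_trans (le_max_left _ _) huge
      have huu₀ : u₀ ≤ u := le_trans (le_trans (le_max_left _ _) (le_max_right _ _)) huge
      have hu1 : (1:ℝ) ≤ u := le_trans (le_trans (le_max_right _ _) (le_max_right _ _)) huge
      have hupos : (0:ℝ) < u := lt_of_lt_of_le one_pos hu1
      have hpowT : ∀ k : ℕ, T₁ ≤ c ^ k * u := fun k =>
        le_trans huT₁ (le_mul_of_one_le_left hupos.le (one_le_pow₀ hc.le))
      -- iterated bounds
      have I1 : ∀ k : ℕ, (μ {ω | c ^ k * u < |Y ω 0|}).toReal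
          ≤ (c ^ (-α) + ε) ^ k * (μ {ω | u < |Y ω 0|}).toReal := by
        intro k
        induction k with
        | zero => simp
        | succ k ih =>
          have heq : c ^ (k+1) * u = c ^ k * u * c := by rw [pow_succ]; ring
          rw [heq]
          calc (μ {ω | c ^ k * u * c < |Y ω 0|}).toReal
              ≤ (c ^ (-α) + ε) * (μ {ω | c ^ k * u < |Y ω 0|}).toReal :=
                (hT₁ _ (hpowT k)).2.2.2
            _ ≤ (c ^ (-α) + ε) * ((c ^ (-α) + ε) ^ k * (μ {ω | u < |Y ω 0|}).toReal) :=
                mul_le_mul_of_nonneg_left ih hρ0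
            _ = (c ^ (-α) + ε) ^ (k+1) * (μ {ω | u < |Y ω 0|}).toReal := by
                rw [pow_succ]; ring
      have I2 : ∀ k : ℕ, (c ^ (-α) - ε) ^ (k+1) * (μ {ω | u < |X ω 0|}).toReal
          ≤ (μ {ω | c ^ (k+1) * u < |X ω 0|}).toReal := by
        intro k
        induction k with
        | zero =>
          have heq : c ^ (0+1) * u = u * c := by rw [pow_one]; ring
          rw [heq, pow_one]
          exact (hT₁ u huT₁).2.2.1
        | succ k ih =>
          have heq : c ^ (k+2) * u = c ^ (k+1) * u * c := by rw [pow_succ]; ring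
          rw [heq]
          calc (c ^ (-α) - ε) ^ (k+2) * (μ {ω | u < |X ω 0|}).toReal
              = (c ^ (-α) - ε) * ((c ^ (-α) - ε) ^ (k+1) * (μ {ω | u < |X ω 0|}).toReal) := by
                rw [pow_succ]; ring
            _ ≤ (c ^ (-α) - ε) * (μ {ω | c ^ (k+1) * u < |X ω 0|}).toReal :=
                mul_le_mul_of_nonneg_left ih hβ0
            _ ≤ (μ {ω | c ^ (k+1) * u * c < |X ω 0|}).toReal :=
                (hT₁ _ (hpowT (k+1))).2.2.1
      -- integrability
      have hintX : Integrable (fun ω => max (∑ i, ξ i * X ω i - u) 0) μ := (hsl u huu₀ ξ hξ).1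
      have hintY : ∀ v : ℝ, u ≤ v → Integrable (fun ω => max (∑ i, ξ i * Y ω i - v) 0) μ :=
        fun v hv => (hsl v (le_trans huu₀ hv) ξ hξ).2.1
      -- lower bound for the X stop-loss
      have hlow := lower_est (μ := μ) (fun ω => ∑ i, ξ i * X ω i) u c hupos hc hintX K
      -- upper bound for the Y stop-loss
      have hMbound : ∀ k : ℕ, (μ {ω | c ^ k * u < ∑ i, ξ i * Y ω i}).toReal
          ≤ ((b ξ + ε) * (μ {ω | u < |Y ω 0|}).toReal) * (c ^ (-α) + ε) ^ k := by
        intro k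
        calc (μ {ω | c ^ k * u < ∑ i, ξ i * Y ω i}).toReal
            ≤ (b ξ + ε) * (μ {ω | c ^ k * u < |Y ω 0|}).toReal :=
              (hT₁ _ (hpowT k)).2.1
          _ ≤ (b ξ + ε) * ((c ^ (-α) + ε) ^ k * (μ {ω | u < |Y ω 0|}).toReal) :=
              mul_le_mul_of_nonneg_left (I1 k) (by linarith [hb0])
          _ = ((b ξ + ε) * (μ {ω | u < |Y ω 0|}).toReal) * (c ^ (-α) + ε) ^ k := by ring
      have hup := upper_est (μ := μ) (fun ω => ∑ i, ξ i * Y ω i) u c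
        ((b ξ + ε) * (μ {ω | u < |Y ω 0|}).toReal) (c ^ (-α) + ε) hupos hc hintY
        hρ0 hcρ1
        (mul_nonneg (by linarith [hb0]) ENNReal.toReal_nonneg) hMbound
      have hslu := (hsl u huu₀ ξ hξ).2.2
      -- termwise lower bound
      have hterm : ∀ k ∈ Finset.range K,
          (max (a ξ - ε) 0 * (1 - ε) * (c ^ k * (c ^ (-α) - ε) ^ (k+1)))
            * ((c - 1) * u * (μ {ω | u < |Y ω 0|}).toReal)
          ≤ ((c - 1) * c ^ k * u) * (μ {ω | c ^ (k+1) * u < ∑ i, ξ i * X ω i}).toReal := by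
        intro k _
        have hm0 : (0:ℝ) ≤ max (a ξ - ε) 0 := le_max_right _ _
        have hcku : (0:ℝ) ≤ (c - 1) * c ^ k * u :=
          mul_nonneg (mul_nonneg (by linarith) (pow_pos hc0 k).le) hupos.le
        have hfac : (0:ℝ) ≤ max (a ξ - ε) 0 * (c ^ k * (c ^ (-α) - ε) ^ (k+1)) * ((c-1) * u) :=
          mul_nonneg (mul_nonneg hm0 (mul_nonneg (pow_pos hc0 k).le
            (pow_nonneg hβ0 _))) (mul_nonneg (by linarith) hupos.le)
        calc (max (a ξ - ε) 0 * (1 - ε) * (c ^ k * (c ^ (-α) - ε) ^ (k+1)))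
              * ((c - 1) * u * (μ {ω | u < |Y ω 0|}).toReal)
            = (max (a ξ - ε) 0 * (c ^ k * (c ^ (-α) - ε) ^ (k+1)) * ((c-1) * u))
                * ((1 - ε) * (μ {ω | u < |Y ω 0|}).toReal) := by ring
          _ ≤ (max (a ξ - ε) 0 * (c ^ k * (c ^ (-α) - ε) ^ (k+1)) * ((c-1) * u))
                * (μ {ω | u < |X ω 0|}).toReal :=
              mul_le_mul_of_nonneg_left hufreq hfac
          _ = ((c - 1) * c ^ k * u) * (max (a ξ - ε) 0 *
                ((c ^ (-α) - ε) ^ (k+1) * (μ {ω | u < |X ω 0|}).toReal)) := by ring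
          _ ≤ ((c - 1) * c ^ k * u) * (max (a ξ - ε) 0 *
                (μ {ω | c ^ (k+1) * u < |X ω 0|}).toReal) := by
              refine mul_le_mul_of_nonneg_left ?_ hcku
              exact mul_le_mul_of_nonneg_left (I2 k) hm0
          _ ≤ ((c - 1) * c ^ k * u)
                * (μ {ω | c ^ (k+1) * u < ∑ i, ξ i * X ω i}).toReal := by
              refine mul_le_mul_of_nonneg_left ?_ hcku
              exact (hT₁ _ (hpowT (k+1))).1
      -- assemble
      have hchain : (max (a ξ - ε) 0 * (1 - ε) *
          ∑ k ∈ Finset.range K, c ^ k * (c ^ (-α) - ε) ^ (k+1))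
            * ((c - 1) * u * (μ {ω | u < |Y ω 0|}).toReal)
          ≤ ((b ξ + ε) * (1 - c * (c ^ (-α) + ε))⁻¹)
            * ((c - 1) * u * (μ {ω | u < |Y ω 0|}).toReal) := by
        calc (max (a ξ - ε) 0 * (1 - ε) *
            ∑ k ∈ Finset.range K, c ^ k * (c ^ (-α) - ε) ^ (k+1))
              * ((c - 1) * u * (μ {ω | u < |Y ω 0|}).toReal)
            = ∑ k ∈ Finset.range K,
                (max (a ξ - ε) 0 * (1 - ε) * (c ^ k * (c ^ (-α) - ε) ^ (k+1)))
                  * ((c - 1) * u * (μ {ω | u < |Y ω 0|}).toReal) := by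
              rw [← Finset.sum_mul]
              congr 1
              rw [Finset.mul_sum]
          _ ≤ ∑ k ∈ Finset.range K,
                ((c - 1) * c ^ k * u) * (μ {ω | c ^ (k+1) * u < ∑ i, ξ i * X ω i}).toReal :=
              Finset.sum_le_sum hterm
          _ ≤ ∫ ω, max (∑ i, ξ i * X ω i - u) 0 ∂μ := hlow
          _ ≤ ∫ ω, max (∑ i, ξ i * Y ω i - u) 0 ∂μ := hslu
          _ ≤ (c - 1) * u * ((b ξ + ε) * (μ {ω | u < |Y ω 0|}).toReal)
                * (1 - c * (c ^ (-α) + ε))⁻¹ := hup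
          _ = ((b ξ + ε) * (1 - c * (c ^ (-α) + ε))⁻¹)
                * ((c - 1) * u * (μ {ω | u < |Y ω 0|}).toReal) := by ring
      have hden : (0:ℝ) < (c - 1) * u * (μ {ω | u < |Y ω 0|}).toReal :=
        mul_pos (mul_pos (by linarith) hupos) (hPYpos u)
      exact le_of_mul_le_mul_right hchain hden
    -- K → ∞
    have hsum_eq : ∀ K : ℕ, (∑ k ∈ Finset.range K, c ^ k * (c ^ (-α)) ^ (k+1))
        = c ^ (-α) * ∑ k ∈ Finset.range K, (c * c ^ (-α)) ^ k := by
      intro K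
      rw [Finset.mul_sum]
      refine Finset.sum_congr rfl (fun k _ => ?_)
      rw [mul_pow, pow_succ]
      ring
    have hgeom := hasSum_geometric_of_lt_one hr0.le hr1
    have hlim : Tendsto (fun K : ℕ => a ξ *
        (∑ k ∈ Finset.range K, c ^ k * (c ^ (-α)) ^ (k+1))) atTop
        (nhds (a ξ * (c ^ (-α) * (1 - c * c ^ (-α))⁻¹))) := by
      have h1 : Tendsto (fun K : ℕ => ∑ k ∈ Finset.range K, (c * c ^ (-α)) ^ k) atTop
          (nhds ((1 - c * c ^ (-α))⁻¹)) := hgeom.tendsto_sum_nat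
      have h2 := (tendsto_const_nhds (x := a ξ * c ^ (-α))
        (f := atTop (α := ℕ))).mul h1
      have h3 : (fun K : ℕ => a ξ * c ^ (-α) * ∑ k ∈ Finset.range K, (c * c ^ (-α)) ^ k)
          = (fun K : ℕ => a ξ * (∑ k ∈ Finset.range K, c ^ k * (c ^ (-α)) ^ (k+1))) := by
        funext K
        rw [hsum_eq K]
        ring
      rw [h3, show a ξ * c ^ (-α) * (1 - c * c ^ (-α))⁻¹
          = a ξ * (c ^ (-α) * (1 - c * c ^ (-α))⁻¹) by ring] at h2
      exact h2
    have hfin : a ξ * (c ^ (-α) * (1 - c * c ^ (-α))⁻¹) ≤ b ξ * (1 - c * c ^ (-α))⁻¹ :=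
      le_of_tendsto hlim (Filter.Eventually.of_forall stepB)
    have hinv : (0:ℝ) < (1 - c * c ^ (-α))⁻¹ := inv_pos.2 (by linarith)
    have hfin2 : (a ξ * c ^ (-α)) * (1 - c * c ^ (-α))⁻¹ ≤ b ξ * (1 - c * c ^ (-α))⁻¹ := by
      rw [mul_assoc]; exact hfin
    exact le_of_mul_le_mul_right hfin2 hinv
  -- conclude by letting c → 1⁺
  have hcont : Tendsto (fun c : ℝ => a ξ * c ^ (-α)) (nhdsWithin 1 (Set.Ioi 1))
      (nhds (a ξ)) := by
    have h1 : ContinuousAt (fun c : ℝ => c ^ (-α)) 1 :=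
      Real.continuousAt_rpow_const 1 (-α) (Or.inl one_ne_zero)
    have h2 : Tendsto (fun c : ℝ => a ξ * c ^ (-α)) (nhds 1) (nhds (a ξ * 1 ^ (-α))) :=
      (tendsto_const_nhds.mul h1.tendsto)
    rw [Real.one_rpow, mul_one] at h2
    exact h2.mono_left nhdsWithin_le_nhds
  exact le_of_tendsto hcont (eventually_mem_nhdsWithin.mono (fun c hc => stepA c hc))
end

section
/- Let α > 0 and let W be a nonnegative real random variable that is regularly varying with tail index α. Let Y = (Y⁽¹⁾,…,Y⁽ᵈ⁾) be a random vector with independent components, each with the same distribution as W, and let Z = (Z⁽¹⁾,…,Z⁽ᵈ⁾) be a random vector with totally dependent components, Z⁽ⁱ⁾ = Z⁽¹⁾ almost surely for all i, where Z⁽¹⁾ has the same distribution as W. Then: (a) if α ≥ 1, Y ≼apl Z; (b) if α ∈ (0,1], Z ≼apl Y. -/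
open MeasureTheory ProbabilityTheory Filter

set_option maxHeartbeats 2000000

lemma prod_one_sub_le {ι : Type*} (s : Finset ι) (p : ι → ℝ)
    (h0 : ∀ i ∈ s, 0 ≤ p i) (h1 : ∀ i ∈ s, p i ≤ 1) :
    ∏ i ∈ s, (1 - p i) ≤ 1 - (∑ i ∈ s, p i) + (∑ i ∈ s, p i) ^ 2 := by
  classical
  induction s using Finset.induction with
  | empty => simp
  | insert a s hnm hind =>
    rw [Finset.prod_insert hnm, Finset.sum_insert hnm]
    have hpa0 : 0 ≤ p a := h0 a (Finset.mem_insert_self a s)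
    have hpa1 : p a ≤ 1 := h1 a (Finset.mem_insert_self a s)
    have hS0 : 0 ≤ ∑ i ∈ s, p i :=
      Finset.sum_nonneg fun i hi => h0 i (Finset.mem_insert_of_mem hi)
    have hIH : ∏ i ∈ s, (1 - p i) ≤ 1 - (∑ i ∈ s, p i) + (∑ i ∈ s, p i) ^ 2 :=
      hind (fun i hi => h0 i (Finset.mem_insert_of_mem hi))
        (fun i hi => h1 i (Finset.mem_insert_of_mem hi))
    set S := ∑ i ∈ s, p i
    calc (1 - p a) * ∏ i ∈ s, (1 - p i) ≤ (1 - p a) * (1 - S + S ^ 2) :=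
          mul_le_mul_of_nonneg_left hIH (by linarith)
      _ ≤ 1 - (p a + S) + (p a + S) ^ 2 := by nlinarith

lemma transfer_meas {Ω : Type*} [MeasurableSpace Ω] (μ : Measure Ω) (W f : Ω → ℝ)
    (hWm : Measurable W) (hf : Measurable f) (hdist : Measure.map f μ = Measure.map W μ)
    {E : Set ℝ} (hE : MeasurableSet E) : μ (f ⁻¹' E) = μ (W ⁻¹' E) := by
  rw [← Measure.map_apply hf hE, hdist, Measure.map_apply hWm hE]

lemma tail_tendsto_zero {Ω : Type*} [MeasurableSpace Ω] (μ : Measure Ω)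
    [IsProbabilityMeasure μ] (W : Ω → ℝ) {α : ℝ} (hα : 0 < α)
    (hrv : RegVarying μ W α) :
    Tendsto (fun t => (μ {ω | t < W ω}).toReal) atTop (nhds 0) := by
  set G : ℝ → ℝ := fun t => (μ {ω | t < W ω}).toReal with hGdef
  have hanti : Antitone G := by
    intro s t hst
    exact ENNReal.toReal_mono (measure_ne_top μ _)
      (measure_mono fun ω (hω : t < W ω) => lt_of_le_of_lt hst hω)
  have hbdd : BddBelow (Set.range G) := by
    refine ⟨0, fun x hx => ?_⟩
    obtain ⟨t, rfl⟩ := hx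
    exact ENNReal.toReal_nonneg
  have hlim : Tendsto G atTop (nhds (⨅ t, G t)) := tendsto_atTop_ciInf hanti hbdd
  have hl0 : 0 ≤ ⨅ t, G t := le_ciInf fun t => ENNReal.toReal_nonneg
  rcases eq_or_lt_of_le hl0 with h | h
  · rwa [← h] at hlim
  · exfalso
    have h2 : Tendsto (fun t : ℝ => G (t * 2)) atTop (nhds (⨅ t, G t)) :=
      hlim.comp (tendsto_id.atTop_mul_const two_pos)
    have hdiv : Tendsto (fun t : ℝ => G (t * 2) / G t) atTop
        (nhds ((⨅ t, G t) / (⨅ t, G t))) := h2.div hlim (ne_of_gt h)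
    have huniq : (⨅ t, G t) / (⨅ t, G t) = (2 : ℝ) ^ (-α) :=
      tendsto_nhds_unique hdiv (hrv.2 2 two_pos)
    rw [div_self (ne_of_gt h)] at huniq
    have : (2 : ℝ) ^ (-α) < 1 :=
      Real.rpow_lt_one_of_one_lt_of_neg one_lt_two (neg_neg_iff_pos.mpr hα)
    rw [← huniq] at this
    exact lt_irrefl _ this

theorem independent_vs_comonotone_extremes
    {Ω : Type*} [MeasurableSpace Ω] (μ : Measure Ω) [IsProbabilityMeasure μ]
    {d : ℕ} [NeZero d] (W : Ω → ℝ) (hWm : Measurable W) (hW0 : ∀ ω, 0 ≤ W ω)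
    (α : ℝ) (hα : 0 < α) (hrv : RegVarying μ W α)
    (Y Z : Ω → Fin d → ℝ)
    (hYm : ∀ i, Measurable fun ω => Y ω i) (hZm : ∀ i, Measurable fun ω => Z ω i)
    (hYind : iIndepFun (fun i ω => Y ω i) μ)
    (hYdist : ∀ i, Measure.map (fun ω => Y ω i) μ = Measure.map W μ)
    (hZdep : ∀ i, ∀ᵐ ω ∂μ, Z ω i = Z ω 0)
    (hZdist : Measure.map (fun ω => Z ω 0) μ = Measure.map W μ) :
    (1 ≤ α → AplVec μ Y Z) ∧ (α ≤ 1 → AplVec μ Z Y) := by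
  classical
  obtain ⟨hpos, hratio⟩ := hrv
  set G : ℝ → ℝ := fun t => (μ {ω | t < W ω}).toReal with hGdef
  have hGpos : ∀ t, 0 < G t := fun t => ENNReal.toReal_pos (hpos t).ne' (measure_ne_top μ _)
  have hG0 : Tendsto G atTop (nhds 0) := tail_tendsto_zero μ W hα ⟨hpos, hratio⟩
  have hdpos : 0 < d := Nat.pos_of_ne_zero (NeZero.ne d)
  have hdR : (0 : ℝ) < d := by exact_mod_cast hdpos
  -- measurable scaled tail sets
  have hEmeas : ∀ a s : ℝ, MeasurableSet {x : ℝ | s < a * x} :=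
    fun a s => measurable_const_mul a measurableSet_Ioi
  -- tail transfers
  have hYtail : ∀ (i : Fin d) (a s : ℝ), μ {ω | s < a * Y ω i} = μ {ω | s < a * W ω} :=
    fun i a s => transfer_meas μ W _ hWm (hYm i) (hYdist i) (hEmeas a s)
  have hYtail1 : ∀ (i : Fin d) (s : ℝ), μ {ω | s < Y ω i} = μ {ω | s < W ω} :=
    fun i s => transfer_meas μ W _ hWm (hYm i) (hYdist i) measurableSet_Ioi
  have hZtail_le : ∀ s : ℝ, μ {ω | s ≤ Z ω 0} = μ {ω | s ≤ W ω} :=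
    fun s => transfer_meas μ W _ hWm (hZm 0) hZdist measurableSet_Ici
  have hZtail_lt : ∀ s : ℝ, μ {ω | s < Z ω 0} = μ {ω | s < W ω} :=
    fun s => transfer_meas μ W _ hWm (hZm 0) hZdist measurableSet_Ioi
  -- negativity event is null
  have hAnull : μ {ω | ∃ i, Y ω i < 0} = 0 := by
    have : {ω | ∃ i, Y ω i < 0} = ⋃ i, {ω | Y ω i < 0} := Set.setOf_exists _
    rw [this]
    refine measure_iUnion_null fun i => ?_
    have h1 : μ {ω | Y ω i < 0} = μ {ω | W ω < 0} :=
      transfer_meas μ W _ hWm (hYm i) (hYdist i) measurableSet_Iio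
    have h2 : {ω | W ω < 0} = (∅ : Set Ω) := by
      ext ω; simp only [Set.mem_setOf_eq, Set.mem_empty_iff_false, iff_false, not_lt]
      exact hW0 ω
    rw [h1, h2, measure_empty]
  -- eventual RV bounds
  have hup : ∀ x : ℝ, 0 < x → ∀ ε : ℝ, 0 < ε →
      ∀ᶠ t in atTop, G (t * x) ≤ (x ^ (-α) + ε) * G t := by
    intro x hx ε hε
    have h := (hratio x hx).eventually (eventually_lt_nhds (lt_add_of_pos_right _ hε))
    filter_upwards [h] with t ht
    have ht' : G (t * x) / G t < x ^ (-α) + ε := ht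
    have := (div_lt_iff₀ (hGpos t)).mp ht'
    linarith
  have hlo : ∀ x : ℝ, 0 < x → ∀ ε : ℝ, 0 < ε →
      ∀ᶠ t in atTop, (x ^ (-α) - ε) * G t ≤ G (t * x) := by
    intro x hx ε hε
    have h := (hratio x hx).eventually (eventually_gt_nhds (sub_lt_self _ hε))
    filter_upwards [h] with t ht
    have ht' : x ^ (-α) - ε < G (t * x) / G t := ht
    have := (lt_div_iff₀ (hGpos t)).mp ht'
    linarith
  have hsmall : ∀ x : ℝ, 0 < x → ∀ ε : ℝ, 0 < ε → ∀ᶠ t in atTop, G (t * x) ≤ ε := by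
    intro x hx ε hε
    have h : Tendsto (fun t : ℝ => G (t * x)) atTop (nhds 0) :=
      hG0.comp (tendsto_id.atTop_mul_const hx)
    filter_upwards [h.eventually (eventually_lt_nhds hε)] with t ht
    exact le_of_lt ht
  constructor
  · -- α ≥ 1 : independent ≼ comonotone
    intro hα1 ξ hξ c hc
    have hξ0 : ∀ i, 0 ≤ ξ i := hξ.1
    have hξsum : ∑ i, ξ i = 1 := hξ.2
    have hξle1 : ∀ i, ξ i ≤ 1 := by
      intro i
      calc ξ i ≤ ∑ j, ξ j := Finset.single_le_sum (fun j _ => hξ0 j) (Finset.mem_univ i)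
        _ = 1 := hξsum
    set c₁ : ℝ := (1 + c) / 2 with hc₁def
    have hc₁1 : 1 < c₁ := by rw [hc₁def]; linarith
    have hc₁c : c₁ < c := by rw [hc₁def]; linarith
    have hc₁0 : (0 : ℝ) < c₁ := by linarith
    set β : ℝ := c₁ ^ (-1 / α) with hβdef
    have hβpos : 0 < β := Real.rpow_pos_of_pos hc₁0 _
    have hβlt1 : β < 1 :=
      Real.rpow_lt_one_of_one_lt_of_neg hc₁1 (by rw [neg_div]; exact neg_neg_iff_pos.mpr (by positivity))
    have hβα : β ^ (-α) = c₁ := by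
      rw [hβdef, ← Real.rpow_mul hc₁0.le,
        show (-1 / α) * (-α) = 1 by field_simp, Real.rpow_one]
    set η : ℝ := (1 - β) / d with hηdef
    have hηpos : 0 < η := div_pos (by linarith) hdR
    set K : ℝ := η ^ (-α) + 1 with hKdef
    have hKpos : 0 < K := by
      have := Real.rpow_pos_of_pos hηpos (-α); positivity
    set ε : ℝ := (c - c₁) / (2 * d) with hεdef
    have hεpos : 0 < ε := div_pos (by linarith) (by positivity)
    set ε₂ : ℝ := (c - c₁) / (2 * d ^ 2 * K) with hε₂def
    have hε₂pos : 0 < ε₂ := div_pos (by linarith) (by positivity)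
    -- eventual facts
    have h1 : ∀ᶠ t in atTop, ∀ i, ξ i ≠ 0 → G (t * (β / ξ i)) ≤ (ξ i ^ α * c₁ + ε) * G t := by
      rw [eventually_all]
      intro i
      by_cases h : ξ i = 0
      · exact Eventually.of_forall fun t h' => absurd h h'
      · have hξipos : 0 < ξ i := lt_of_le_of_ne (hξ0 i) (Ne.symm h)
        have hxi : 0 < β / ξ i := div_pos hβpos hξipos
        have hpow : (β / ξ i) ^ (-α) = ξ i ^ α * c₁ := by
          rw [Real.div_rpow hβpos.le (hξ0 i), hβα, Real.rpow_neg (hξ0 i)]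
          field_simp
        filter_upwards [hup _ hxi ε hεpos] with t ht _
        rwa [hpow] at ht
    have h2 : ∀ᶠ t in atTop, G (t * η) ≤ ε₂ := hsmall η hηpos ε₂ hε₂pos
    have h3 : ∀ᶠ t in atTop, G (t * η) ≤ K * G t := by
      filter_upwards [hup η hηpos 1 one_pos] with t ht
      exact ht
    have h4 : ∀ᶠ t : ℝ in atTop, 0 < t := eventually_gt_atTop 0
    obtain ⟨T, hT⟩ := eventually_atTop.mp (((h1.and h2).and (h3.and h4)))
    refine ⟨T, fun t hTt => ?_⟩
    obtain ⟨⟨e1, e2⟩, e3, e4⟩ := hT t hTt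
    -- sets
    set B : Fin d → Set Ω := fun i => {ω | β * t < ξ i * Y ω i} with hBdef
    set C : Fin d → Set Ω := fun i => {ω | t * η < Y ω i} with hCdef
    set D : Fin d → Fin d → Set Ω := fun i j => if i = j then ∅ else C i ∩ C j with hDdef
    -- inclusion
    have hincl : {ω | t < ∑ i, ξ i * Y ω i} ⊆
        ((⋃ i, B i) ∪ ⋃ i, ⋃ j, D i j) ∪ {ω | ∃ i, Y ω i < 0} := by
      intro ω hω
      by_cases hAω : ∃ i, Y ω i < 0
      · exact Or.inr hAω
      push_neg at hAω
      left
      by_cases hBω : ∃ i, β * t < ξ i * Y ω i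
      · obtain ⟨i, hi⟩ := hBω
        exact Or.inl (Set.mem_iUnion.2 ⟨i, hi⟩)
      push_neg at hBω
      right
      have hωs : t < ∑ i, ξ i * Y ω i := hω
      have hYle : ∀ k, ξ k * Y ω k ≤ Y ω k := fun k =>
        mul_le_of_le_one_left (hAω k) (hξle1 k)
      have hex : ∃ i ∈ Finset.univ, t / d < ξ i * Y ω i := by
        apply Finset.exists_lt_of_sum_lt
        calc ∑ _i : Fin d, t / d = d * (t / d) := by
              rw [Finset.sum_const, Finset.card_univ, Fintype.card_fin, nsmul_eq_mul]
          _ = t := by field_simp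
          _ < _ := hωs
      obtain ⟨i, _, hi⟩ := hex
      have herase : (1 - β) * t < ∑ j ∈ Finset.univ.erase i, ξ j * Y ω j := by
        have heq : ∑ j ∈ Finset.univ.erase i, ξ j * Y ω j
            = (∑ j, ξ j * Y ω j) - ξ i * Y ω i :=
          Finset.sum_erase_eq_sub (Finset.mem_univ i)
        have := hBω i
        rw [heq]; linarith
      have hex2 : ∃ j ∈ Finset.univ.erase i, t * η < ξ j * Y ω j := by
        apply Finset.exists_lt_of_sum_lt
        have hcard : ((Finset.univ.erase i).card : ℝ) ≤ d := by
          have : (Finset.univ.erase i).card ≤ d := by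
            calc (Finset.univ.erase i).card ≤ Finset.univ.card := Finset.card_erase_le
              _ = d := by rw [Finset.card_univ, Fintype.card_fin]
          exact_mod_cast this
        calc ∑ _j ∈ Finset.univ.erase i, t * η
            = ((Finset.univ.erase i).card : ℝ) * (t * η) := by
              rw [Finset.sum_const, nsmul_eq_mul]
          _ ≤ d * (t * η) := by
              apply mul_le_mul_of_nonneg_right hcard; positivity
          _ = (1 - β) * t := by rw [hηdef]; field_simp
          _ < _ := herase
      obtain ⟨j, hjmem, hj⟩ := hex2
      have hji : j ≠ i := Finset.ne_of_mem_erase hjmem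
      refine Set.mem_iUnion.2 ⟨i, Set.mem_iUnion.2 ⟨j, ?_⟩⟩
      rw [hDdef]
      simp only [if_neg (Ne.symm hji)]
      constructor
      · show t * η < Y ω i
        have h1' : t * η ≤ t / d := by
          rw [hηdef, show t * ((1 - β) / ↑d) = t * (1 - β) / ↑d from by ring,
            div_le_div_iff₀ hdR hdR]
          nlinarith [hβpos.le, e4.le, mul_nonneg e4.le hβpos.le]
        calc t * η ≤ t / d := h1'
          _ < ξ i * Y ω i := hi
          _ ≤ Y ω i := hYle i
      · show t * η < Y ω j
        exact lt_of_lt_of_le hj (hYle j)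
    -- measure bounds
    have hBbound : ∀ i, μ (B i) ≤ ENNReal.ofReal ((ξ i ^ α * c₁ + ε) * G t) := by
      intro i
      by_cases h : ξ i = 0
      · have hBempty : B i = (∅ : Set Ω) := by
          ext ω
          simp only [hBdef, h, zero_mul, Set.mem_setOf_eq, Set.mem_empty_iff_false,
            iff_false, not_lt]
          positivity
        rw [hBempty, measure_empty]
        exact zero_le
      · have hξipos : 0 < ξ i := lt_of_le_of_ne (hξ0 i) (Ne.symm h)
        have hBW : μ (B i) = μ {ω | β * t < ξ i * W ω} := hYtail i (ξ i) (β * t)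
        have hset : {ω | β * t < ξ i * W ω} = {ω | t * (β / ξ i) < W ω} := by
          ext ω
          simp only [Set.mem_setOf_eq]
          rw [show t * (β / ξ i) = β * t / ξ i from by ring, div_lt_iff₀ hξipos,
            mul_comm (W ω) (ξ i)]
        rw [hBW, hset, ← ENNReal.ofReal_toReal (measure_ne_top μ {ω | t * (β / ξ i) < W ω})]
        exact ENNReal.ofReal_le_ofReal (e1 i h)
    have hCval : ∀ i, μ (C i) = ENNReal.ofReal (G (t * η)) := by
      intro i
      rw [hCdef, hYtail1 i (t * η)]
      exact (ENNReal.ofReal_toReal (measure_ne_top μ _)).symm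
    set q : ℝ := K * G t * ε₂ with hqdef
    have hq0 : 0 ≤ q := by
      have := hGpos t
      positivity
    have hDbound : ∀ i j, μ (D i j) ≤ ENNReal.ofReal q := by
      intro i j
      rw [hDdef]
      by_cases hij : i = j
      · simp [hij]
      · simp only [if_neg hij]
        have hind := hYind.indepFun hij
        have hmul := hind.measure_inter_preimage_eq_mul (Set.Ioi (t * η)) (Set.Ioi (t * η))
          measurableSet_Ioi measurableSet_Ioi
        calc μ (C i ∩ C j) = μ (C i) * μ (C j) := hmul
          _ = ENNReal.ofReal (G (t * η)) * ENNReal.ofReal (G (t * η)) := by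
              rw [hCval i, hCval j]
          _ ≤ ENNReal.ofReal (K * G t) * ENNReal.ofReal ε₂ :=
              mul_le_mul' (ENNReal.ofReal_le_ofReal e3) (ENNReal.ofReal_le_ofReal e2)
          _ = ENNReal.ofReal q := by
              rw [← ENNReal.ofReal_mul (by have := hGpos t; positivity)]
    have hchain : μ {ω | t < ∑ i, ξ i * Y ω i}
        ≤ ∑ i, μ (B i) + ∑ i, ∑ j, μ (D i j) := by
      calc μ {ω | t < ∑ i, ξ i * Y ω i}
          ≤ μ (((⋃ i, B i) ∪ ⋃ i, ⋃ j, D i j) ∪ {ω | ∃ i, Y ω i < 0}) := measure_mono hincl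
        _ ≤ μ ((⋃ i, B i) ∪ ⋃ i, ⋃ j, D i j) + μ {ω | ∃ i, Y ω i < 0} := measure_union_le _ _
        _ = μ ((⋃ i, B i) ∪ ⋃ i, ⋃ j, D i j) := by rw [hAnull, add_zero]
        _ ≤ μ (⋃ i, B i) + μ (⋃ i, ⋃ j, D i j) := measure_union_le _ _
        _ ≤ ∑ i, μ (B i) + ∑ i, ∑ j, μ (D i j) := by
            refine add_le_add (measure_iUnion_fintype_le μ B) ?_
            calc μ (⋃ i, ⋃ j, D i j) ≤ ∑ i, μ (⋃ j, D i j) := measure_iUnion_fintype_le μ _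
              _ ≤ ∑ i, ∑ j, μ (D i j) :=
                  Finset.sum_le_sum fun i _ => measure_iUnion_fintype_le μ _
    have hsumξα : ∑ i, ξ i ^ α ≤ 1 := by
      calc ∑ i, ξ i ^ α ≤ ∑ i, ξ i := by
            refine Finset.sum_le_sum fun i _ => ?_
            by_cases h : ξ i = 0
            · rw [h, Real.zero_rpow hα.ne']
            · have hξipos : 0 < ξ i := lt_of_le_of_ne (hξ0 i) (Ne.symm h)
              have := Real.rpow_le_rpow_of_exponent_ge hξipos (hξle1 i) hα1
              rwa [Real.rpow_one] at this
        _ = 1 := hξsum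
    have hsum1 : ∑ i, μ (B i) ≤ ENNReal.ofReal ((c₁ + d * ε) * G t) := by
      calc ∑ i, μ (B i) ≤ ∑ i, ENNReal.ofReal ((ξ i ^ α * c₁ + ε) * G t) :=
            Finset.sum_le_sum fun i _ => hBbound i
        _ = ENNReal.ofReal (∑ i, (ξ i ^ α * c₁ + ε) * G t) := by
            rw [ENNReal.ofReal_sum_of_nonneg]
            intro i _
            exact mul_nonneg (add_nonneg (mul_nonneg (Real.rpow_nonneg (hξ0 i) α) hc₁0.le)
              hεpos.le) (hGpos t).le
        _ ≤ ENNReal.ofReal ((c₁ + d * ε) * G t) := by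
            apply ENNReal.ofReal_le_ofReal
            have heq : ∑ i, (ξ i ^ α * c₁ + ε) * G t
                = ((∑ i, ξ i ^ α) * c₁ + d * ε) * G t := by
              rw [← Finset.sum_mul, Finset.sum_add_distrib, ← Finset.sum_mul,
                Finset.sum_const, Finset.card_univ, Fintype.card_fin, nsmul_eq_mul]
            rw [heq]
            have hmm := mul_le_mul_of_nonneg_right
              (mul_le_mul_of_nonneg_right hsumξα hc₁0.le) (hGpos t).le
            nlinarith [hmm]
    have hsum2 : ∑ i, ∑ j, μ (D i j) ≤ ENNReal.ofReal ((d : ℝ) * ((d : ℝ) * q)) := by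
      calc ∑ i, ∑ j, μ (D i j) ≤ ∑ _i : Fin d, ∑ _j : Fin d, ENNReal.ofReal q :=
            Finset.sum_le_sum fun i _ => Finset.sum_le_sum fun j _ => hDbound i j
        _ = (d : ENNReal) * ((d : ENNReal) * ENNReal.ofReal q) := by
            simp [Finset.sum_const, Finset.card_univ, nsmul_eq_mul, mul_assoc]
        _ = ENNReal.ofReal ((d : ℝ) * ((d : ℝ) * q)) := by
            rw [ENNReal.ofReal_mul (by positivity : (0:ℝ) ≤ (d:ℝ)),
              ENNReal.ofReal_mul (by positivity : (0:ℝ) ≤ (d:ℝ))]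
            norm_num
    have hfinal : μ {ω | t < ∑ i, ξ i * Y ω i} ≤ ENNReal.ofReal (c * G t) := by
      refine hchain.trans ((add_le_add hsum1 hsum2).trans ?_)
      rw [← ENNReal.ofReal_add (by have := hGpos t; positivity) (by positivity)]
      apply ENNReal.ofReal_le_ofReal
      have h1' : (d : ℝ) * ε = (c - c₁) / 2 := by
        rw [hεdef]; field_simp
      have h2' : (d : ℝ) * ((d : ℝ) * q) = (c - c₁) / 2 * G t := by
        rw [hqdef, hε₂def]; field_simp
      nlinarith [hGpos t]
    calc μ {ω | t < ∑ i, ξ i * Y ω i} ≤ ENNReal.ofReal (c * G t) := hfinal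
      _ = ENNReal.ofReal c * ENNReal.ofReal (G t) := ENNReal.ofReal_mul (by linarith)
      _ = ENNReal.ofReal c * μ {ω | t < W ω} := by
          rw [ENNReal.ofReal_toReal (measure_ne_top μ _)]
      _ ≤ ENNReal.ofReal c * μ {ω | t ≤ W ω} :=
          mul_le_mul_right (measure_mono fun ω (h : t < W ω) => le_of_lt h) _
      _ = ENNReal.ofReal c * μ {ω | t ≤ ∑ i, ξ i * Z ω i} := by
          congr 1
          rw [← hZtail_le t]
          apply measure_congr
          rw [Filter.eventuallyEq_set]
          have hZae : ∀ᵐ ω ∂μ, ∑ i, ξ i * Z ω i = Z ω 0 := by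
            filter_upwards [(ae_all_iff).2 hZdep] with ω hω
            calc ∑ i, ξ i * Z ω i = ∑ i, ξ i * Z ω 0 :=
                  Finset.sum_congr rfl fun i _ => by rw [hω i]
              _ = (∑ i, ξ i) * Z ω 0 := by rw [Finset.sum_mul]
              _ = Z ω 0 := by rw [hξsum, one_mul]
          filter_upwards [hZae] with ω hω
          simp only [Set.mem_setOf_eq, hω]
  · -- α ≤ 1 : comonotone ≼ independent
    intro hα1 ξ hξ c hc
    have hξ0 : ∀ i, 0 ≤ ξ i := hξ.1
    have hξsum : ∑ i, ξ i = 1 := hξ.2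
    have hξle1 : ∀ i, ξ i ≤ 1 := by
      intro i
      calc ξ i ≤ ∑ j, ξ j := Finset.single_le_sum (fun j _ => hξ0 j) (Finset.mem_univ i)
        _ = 1 := hξsum
    have hc0 : (0 : ℝ) < c := by linarith
    set κ : ℝ := (c - 1) / (4 * c) with hκdef
    have hκ : 0 < κ := div_pos (by linarith) (by positivity)
    have h4ck : 4 * c * κ = c - 1 := by rw [hκdef]; field_simp
    set ε : ℝ := κ / d with hεdef
    have hεpos : 0 < ε := div_pos hκ (by positivity)
    have hdε : (d : ℝ) * ε = κ := by rw [hεdef]; field_simp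
    have h1 : ∀ᶠ t in atTop, ∀ i, ξ i ≠ 0 → (ξ i ^ α - ε) * G t ≤ G (t * (ξ i)⁻¹) := by
      rw [eventually_all]
      intro i
      by_cases h : ξ i = 0
      · exact Eventually.of_forall fun t h' => absurd h h'
      · have hξipos : 0 < ξ i := lt_of_le_of_ne (hξ0 i) (Ne.symm h)
        have hpow : ((ξ i)⁻¹) ^ (-α) = ξ i ^ α := by
          rw [Real.inv_rpow (hξ0 i), Real.rpow_neg (hξ0 i), inv_inv]
        filter_upwards [hlo _ (inv_pos.mpr hξipos) ε hεpos] with t ht _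
        rwa [hpow] at ht
    have h2 : ∀ᶠ t in atTop, (d : ℝ) ^ 2 * G t ≤ κ := by
      have hq : (0 : ℝ) < κ / (d : ℝ) ^ 2 := by positivity
      filter_upwards [hG0.eventually (eventually_lt_nhds hq)] with t ht
      have ht' : G t < κ / (d : ℝ) ^ 2 := ht
      have := (lt_div_iff₀ (by positivity : (0:ℝ) < (d : ℝ) ^ 2)).mp ht'
      nlinarith
    obtain ⟨T, hT⟩ := eventually_atTop.mp (h1.and h2)
    refine ⟨T, fun t hTt => ?_⟩
    obtain ⟨e1, e2⟩ := hT t hTt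
    set Dset : Fin d → Set Ω := fun i => (fun ω => Y ω i) ⁻¹' {x | t < ξ i * x} with hDdef
    have hDmeas : ∀ i, MeasurableSet (Dset i) := fun i => hYm i (hEmeas (ξ i) t)
    set p : Fin d → ℝ := fun i => (μ (Dset i)).toReal with hpdef
    have hp0 : ∀ i, 0 ≤ p i := fun i => ENNReal.toReal_nonneg
    have hp1 : ∀ i, p i ≤ 1 := fun i =>
      ENNReal.toReal_le_of_le_ofReal one_pos.le (by simpa using prob_le_one (μ := μ))
    have hple : ∀ i, p i ≤ G t := by
      intro i
      apply ENNReal.toReal_mono (measure_ne_top μ _)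
      have hDW : μ (Dset i) = μ {ω | t < ξ i * W ω} := hYtail i (ξ i) t
      rw [hDW]
      refine measure_mono fun ω (hω : t < ξ i * W ω) => ?_
      show t < W ω
      nlinarith [hW0 ω, hξle1 i, hξ0 i]
    have hplo : ∀ i, (ξ i ^ α - ε) * G t ≤ p i := by
      intro i
      by_cases h : ξ i = 0
      · have hz : ξ i ^ α = 0 := by rw [h]; exact Real.zero_rpow hα.ne'
        rw [hz]
        nlinarith [hGpos t, hεpos, hp0 i]
      · have hξipos : 0 < ξ i := lt_of_le_of_ne (hξ0 i) (Ne.symm h)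
        have hset : {ω | t < ξ i * W ω} = {ω | t * (ξ i)⁻¹ < W ω} := by
          ext ω
          simp only [Set.mem_setOf_eq]
          rw [show t * (ξ i)⁻¹ = t / ξ i from by ring, div_lt_iff₀ hξipos,
            mul_comm (W ω) (ξ i)]
        have hDW2 : μ (Dset i) = μ {ω | t * (ξ i)⁻¹ < W ω} := by
          rw [show μ (Dset i) = μ {ω | t < ξ i * W ω} from hYtail i (ξ i) t, hset]
        have hpi : p i = G (t * (ξ i)⁻¹) := by
          simp only [hpdef]
          rw [hDW2]
        rw [hpi]
        exact e1 i h
    have hprod : μ (⋂ i, (Dset i)ᶜ) = ∏ i, μ ((Dset i)ᶜ) := by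
      have hmul := hYind.measure_inter_preimage_eq_mul (S := Finset.univ)
        (sets := fun i => {x | t < ξ i * x}ᶜ) (fun i _ => (hEmeas (ξ i) t).compl)
      simpa [Set.preimage_compl, hDdef] using hmul
    have hcompl_toReal : ∀ i, (μ ((Dset i)ᶜ)).toReal = 1 - p i := by
      intro i
      rw [measure_compl (hDmeas i) (measure_ne_top μ _), measure_univ,
        ENNReal.toReal_sub_of_le (prob_le_one (μ := μ)) (by simp), ENNReal.toReal_one]
    have hUnion : (μ (⋃ i, Dset i)).toReal = 1 - ∏ i, (1 - p i) := by
      have h6 : μ (⋃ i, Dset i) + μ ((⋃ i, Dset i)ᶜ) = 1 := by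
        rw [measure_add_measure_compl (MeasurableSet.iUnion hDmeas)]
        exact measure_univ
      have h7 : (μ (⋃ i, Dset i)).toReal + (μ ((⋃ i, Dset i)ᶜ)).toReal = 1 := by
        rw [← ENNReal.toReal_add (measure_ne_top μ _) (measure_ne_top μ _), h6,
          ENNReal.toReal_one]
      have h8 : (μ ((⋃ i, Dset i)ᶜ)).toReal = ∏ i, (1 - p i) := by
        rw [Set.compl_iUnion, hprod, ENNReal.toReal_prod]
        exact Finset.prod_congr rfl fun i _ => hcompl_toReal i
      linarith
    have hUb : μ (⋃ i, Dset i) ≤ μ {ω | t ≤ ∑ k, ξ k * Y ω k} := by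
      have hincl2 : (⋃ i, Dset i) ⊆ {ω | t ≤ ∑ k, ξ k * Y ω k} ∪ {ω | ∃ k, Y ω k < 0} := by
        refine Set.iUnion_subset fun i ω hω => ?_
        by_cases hA : ∃ k, Y ω k < 0
        · exact Or.inr hA
        · push_neg at hA
          left
          have hω' : t < ξ i * Y ω i := hω
          have hle : ξ i * Y ω i ≤ ∑ k, ξ k * Y ω k :=
            Finset.single_le_sum (fun k _ => mul_nonneg (hξ0 k) (hA k)) (Finset.mem_univ i)
          show t ≤ ∑ k, ξ k * Y ω k
          linarith
      calc μ (⋃ i, Dset i)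
          ≤ μ ({ω | t ≤ ∑ k, ξ k * Y ω k} ∪ {ω | ∃ k, Y ω k < 0}) := measure_mono hincl2
        _ ≤ μ {ω | t ≤ ∑ k, ξ k * Y ω k} + μ {ω | ∃ k, Y ω k < 0} := measure_union_le _ _
        _ = μ {ω | t ≤ ∑ k, ξ k * Y ω k} := by rw [hAnull, add_zero]
    set sp : ℝ := ∑ i, p i with hspdef
    have hsp0 : 0 ≤ sp := Finset.sum_nonneg fun i _ => hp0 i
    have hs_hi : sp ≤ d * G t := by
      calc sp ≤ ∑ _i : Fin d, G t := Finset.sum_le_sum fun i _ => hple i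
        _ = d * G t := by
            rw [Finset.sum_const, Finset.card_univ, Fintype.card_fin, nsmul_eq_mul]
    have hξα : (1 : ℝ) ≤ ∑ i, ξ i ^ α := by
      rw [← hξsum]
      refine Finset.sum_le_sum fun i _ => ?_
      by_cases h : ξ i = 0
      · rw [h, Real.zero_rpow hα.ne']
      · have hξipos : 0 < ξ i := lt_of_le_of_ne (hξ0 i) (Ne.symm h)
        have := Real.rpow_le_rpow_of_exponent_ge hξipos (hξle1 i) hα1
        rwa [Real.rpow_one] at this
    have hs_lo : (1 - d * ε) * G t ≤ sp := by
      have hsum_lo : ∑ i, (ξ i ^ α - ε) * G t ≤ sp := Finset.sum_le_sum fun i _ => hplo i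
      have heq : ∑ i, (ξ i ^ α - ε) * G t = ((∑ i, ξ i ^ α) - d * ε) * G t := by
        rw [← Finset.sum_mul, Finset.sum_sub_distrib, Finset.sum_const, Finset.card_univ,
          Fintype.card_fin, nsmul_eq_mul]
      rw [heq] at hsum_lo
      nlinarith [hGpos t, hξα]
    have hkey : sp - sp ^ 2 ≤ (μ (⋃ i, Dset i)).toReal := by
      rw [hUnion]
      have := prod_one_sub_le Finset.univ p (fun i _ => hp0 i) (fun i _ => hp1 i)
      rw [hspdef]
      linarith
    have hGbound : G t ≤ c * (sp - sp ^ 2) := by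
      have hGt := hGpos t
      have hmid : sp - sp ^ 2 ≥ (1 - d * ε) * G t - (d * G t) ^ 2 := by
        nlinarith [hs_lo, hs_hi, hsp0]
      have hstep : G t ≤ c * ((1 - d * ε) * G t - (d * G t) ^ 2) := by
        rw [hdε]
        have hb := mul_le_mul_of_nonneg_right e2 hGt.le
        have h5 : 4 * c * κ * G t = (c - 1) * G t := by linear_combination G t * h4ck
        nlinarith [hGt, hc0, hb, h5]
      calc G t ≤ c * ((1 - d * ε) * G t - (d * G t) ^ 2) := hstep
        _ ≤ c * (sp - sp ^ 2) := by nlinarith [hmid, hc0]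
    have hZsum_lt : μ {ω | t < ∑ i, ξ i * Z ω i} = μ {ω | t < W ω} := by
      rw [← hZtail_lt t]
      apply measure_congr
      rw [Filter.eventuallyEq_set]
      have hZae : ∀ᵐ ω ∂μ, ∑ i, ξ i * Z ω i = Z ω 0 := by
        filter_upwards [(ae_all_iff).2 hZdep] with ω hω
        calc ∑ i, ξ i * Z ω i = ∑ i, ξ i * Z ω 0 :=
              Finset.sum_congr rfl fun i _ => by rw [hω i]
          _ = (∑ i, ξ i) * Z ω 0 := by rw [Finset.sum_mul]
          _ = Z ω 0 := by rw [hξsum, one_mul]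
      filter_upwards [hZae] with ω hω
      simp only [Set.mem_setOf_eq, hω]
    calc μ {ω | t < ∑ i, ξ i * Z ω i} = ENNReal.ofReal (G t) := by
          rw [hZsum_lt]
          exact (ENNReal.ofReal_toReal (measure_ne_top μ _)).symm
      _ ≤ ENNReal.ofReal (c * (sp - sp ^ 2)) := ENNReal.ofReal_le_ofReal hGbound
      _ = ENNReal.ofReal c * ENNReal.ofReal (sp - sp ^ 2) := ENNReal.ofReal_mul hc0.le
      _ ≤ ENNReal.ofReal c * μ (⋃ i, Dset i) := by
          refine mul_le_mul_right ?_ _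
          rw [← ENNReal.ofReal_toReal (measure_ne_top μ (⋃ i, Dset i))]
          exact ENNReal.ofReal_le_ofReal hkey
      _ ≤ ENNReal.ofReal c * μ {ω | t ≤ ∑ k, ξ k * Y ω k} := mul_le_mul_right hUb _
end

section
/- The asymptotic portfolio loss order is invariant under componentwise rescaling: if X and Y are ℝ^d-valued random vectors with X ≼apl Y, then for every v ∈ ℝ₊^d (all components nonnegative) the componentwise-rescaled vectors vX := (v⁽¹⁾X⁽¹⁾,…,v⁽ᵈ⁾X⁽ᵈ⁾) and vY := (v⁽¹⁾Y⁽¹⁾,…,v⁽ᵈ⁾Y⁽ᵈ⁾) satisfy vX ≼apl vY. -/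
open MeasureTheory ProbabilityTheory Filter

theorem apl_rescaling_invariant
    {Ω : Type*} [MeasurableSpace Ω] (μ : Measure Ω) [IsProbabilityMeasure μ]
    {d : ℕ} (X Y : Ω → Fin d → ℝ) (hXY : AplVec μ X Y)
    (v : Fin d → ℝ) (hv : ∀ i, 0 ≤ v i) :
    AplVec μ (fun ω i => v i * X ω i) (fun ω i => v i * Y ω i) := by
  intro ξ hξ c hc
  obtain ⟨hξ0, hξ1⟩ := hξ
  set s : ℝ := ∑ i, ξ i * v i with hs
  have hs0 : 0 ≤ s := Finset.sum_nonneg fun i _ => mul_nonneg (hξ0 i) (hv i)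
  rcases eq_or_lt_of_le hs0 with hsz | hsp
  · -- s = 0 : each ξ i * v i = 0, so both portfolio sums are 0
    have hzero : ∀ i ∈ Finset.univ, ξ i * v i = 0 := by
      intro i hi
      exact (Finset.sum_eq_zero_iff_of_nonneg
        (fun i _ => mul_nonneg (hξ0 i) (hv i))).mp hsz.symm i hi
    refine ⟨1, fun t ht => ?_⟩
    have hX0 : ∀ ω, (∑ i, ξ i * (v i * X ω i)) = 0 := by
      intro ω
      refine Finset.sum_eq_zero fun i hi => ?_
      rw [← mul_assoc, hzero i hi, zero_mul]
    have : {ω | t < ∑ i, ξ i * (v i * X ω i)} = ∅ := by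
      ext ω
      simp only [Set.mem_setOf_eq, Set.mem_empty_iff_false, iff_false, not_lt, hX0 ω]
      linarith
    simp only [this, measure_empty]
    exact zero_le
  · -- s > 0 : use rescaled portfolio ξ' i = ξ i * v i / s
    set ξ' : Fin d → ℝ := fun i => ξ i * v i / s with hξ'
    have hξ'mem : ξ' ∈ stdSimplex ℝ (Fin d) := by
      constructor
      · intro i
        exact div_nonneg (mul_nonneg (hξ0 i) (hv i)) hs0
      · rw [← Finset.sum_div]
        exact div_self (ne_of_gt hsp)
    obtain ⟨T, hT⟩ := hXY ξ' hξ'mem c hc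
    refine ⟨s * T, fun t ht => ?_⟩
    have htT : T ≤ t / s := (le_div_iff₀ hsp).mpr (by linarith [mul_comm s T])
    have key := hT (t / s) htT
    have hsetX : {ω | t < ∑ i, ξ i * (v i * X ω i)} = {ω | t / s < ∑ i, ξ' i * X ω i} := by
      ext ω
      simp only [Set.mem_setOf_eq, hξ']
      have : (∑ i, ξ i * v i / s * X ω i) = (∑ i, ξ i * (v i * X ω i)) / s := by
        rw [Finset.sum_div]
        exact Finset.sum_congr rfl fun i _ => by ring
      rw [this, div_lt_div_iff_of_pos_right hsp]
    have hsetY : {ω | t ≤ ∑ i, ξ i * (v i * Y ω i)} = {ω | t / s ≤ ∑ i, ξ' i * Y ω i} := by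
      ext ω
      simp only [Set.mem_setOf_eq, hξ']
      have : (∑ i, ξ i * v i / s * Y ω i) = (∑ i, ξ i * (v i * Y ω i)) / s := by
        rw [Finset.sum_div]
        exact Finset.sum_congr rfl fun i _ => by ring
      rw [this, div_le_div_iff_of_pos_right hsp]
    rw [hsetX, hsetY]
    exact key
end
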